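/- arXiv:1810.11591 — 6 statements merged into one kernel-verified Lean document; each statement's English description precedes it below -/
import Mathlib

section
/- Let U, V, V' be independent random elements with V and V' identically distributed, let f be a measurable real-valued function with Z = f(U,V) square integrable, and set Z' = f(U,V'). Then Cov(Z, Z') = Var( E[Z | U] ) = E[ (E[Z|U])² ] − (E[Z])². -/
open MeasureTheory ProbabilityTheory Real Set

/-- Let `U, V, V'` be independent random elements with `V` and `V'`
identically distributed, let `f` be a measurable real-valued function with
`Z = f(U,V)` square integrable, and set `Z' = f(U,V')`.  Then
`Cov(Z, Z') = Var(E[Z | U]) = E[(E[Z|U])²] - (E[Z])²`. -/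
theorem stmt2 {Ω α β : Type*} [MeasurableSpace Ω] [MeasurableSpace α] [MeasurableSpace β]
    (μ : Measure Ω) [IsProbabilityMeasure μ]
    (U : Ω → α) (V V' : Ω → β)
    (hU : Measurable U) (hV : Measurable V) (hV' : Measurable V')
    (hindep : iIndep
      ![MeasurableSpace.comap U inferInstance,
        MeasurableSpace.comap V inferInstance,
        MeasurableSpace.comap V' inferInstance] μ)
    (hid : IdentDistrib V V' μ μ)
    (f : α × β → ℝ) (hf : Measurable f)
    (Z Z' : Ω → ℝ)
    (hZ : Z = fun ω => f (U ω, V ω)) (hZ' : Z' = fun ω => f (U ω, V' ω))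
    (hZ2 : MemLp Z 2 μ)
    (g : Ω → ℝ) (hg : g = μ[Z | MeasurableSpace.comap U inferInstance]) :
    ((∫ ω, Z ω * Z' ω ∂μ) - (∫ ω, Z ω ∂μ) * (∫ ω, Z' ω ∂μ) = variance g μ) ∧
    (variance g μ = (∫ ω, (g ω)^2 ∂μ) - (∫ ω, Z ω ∂μ)^2) := by
  have hm : MeasurableSpace.comap U inferInstance ≤ ‹MeasurableSpace Ω› := hU.comap_le
  set κ := μ.map U with hκ
  set ν := μ.map V with hν
  haveI : IsProbabilityMeasure κ := Measure.isProbabilityMeasure_map hU.aemeasurable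
  haveI : IsProbabilityMeasure ν := Measure.isProbabilityMeasure_map hV.aemeasurable
  have hν' : μ.map V' = ν := hid.map_eq.symm
  haveI : IsFiniteMeasure (μ.trim hm) := by
    constructor
    rw [trim_measurableSet_eq hm MeasurableSet.univ]
    exact measure_lt_top μ univ
  -- independence facts
  have h01 := hindep.indep (show (0 : Fin 3) ≠ 1 by decide)
  have h02 := hindep.indep (show (0 : Fin 3) ≠ 2 by decide)
  have h12 := hindep.indep (show (1 : Fin 3) ≠ 2 by decide)
  simp only [Matrix.cons_val_zero, Matrix.cons_val_one, Matrix.head_cons,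
    Matrix.cons_val_two, Matrix.tail_cons] at h01 h02 h12
  have hUV : IndepFun U V μ := h01
  have hUV' : IndepFun U V' μ := h02
  have hVV' : IndepFun V V' μ := h12
  have hcomap : MeasurableSpace.comap (fun ω => (V ω, V' ω)) inferInstance =
      MeasurableSpace.comap V inferInstance ⊔ MeasurableSpace.comap V' inferInstance := by
    show MeasurableSpace.comap (fun ω => (V ω, V' ω))
      (MeasurableSpace.comap Prod.fst inferInstance ⊔
        MeasurableSpace.comap Prod.snd inferInstance) = _
    rw [MeasurableSpace.comap_sup, MeasurableSpace.comap_comp, MeasurableSpace.comap_comp]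
    rfl
  have hUp : IndepFun (fun ω => (V ω, V' ω)) U μ := by
    have hle : ∀ i : Fin 3, (![MeasurableSpace.comap U inferInstance,
        MeasurableSpace.comap V inferInstance,
        MeasurableSpace.comap V' inferInstance] : Fin 3 → MeasurableSpace Ω) i
        ≤ ‹MeasurableSpace Ω› := by
      intro i
      fin_cases i
      · exact hU.comap_le
      · exact hV.comap_le
      · exact hV'.comap_le
    have hsup := indep_iSup_of_disjoint hle hindep
      (S := {1, 2}) (T := {0}) (by simp [Set.disjoint_left])
    rw [iSup_insert, iSup_singleton, iSup_singleton] at hsup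
    simp only [Matrix.cons_val_zero, Matrix.cons_val_one, Matrix.head_cons,
      Matrix.cons_val_two, Matrix.tail_cons] at hsup
    show Indep _ _ μ
    rw [hcomap]
    exact hsup
  -- maps
  have hmapUV : μ.map (fun ω => (U ω, V ω)) = κ.prod ν :=
    (indepFun_iff_map_prod_eq_prod_map_map hU.aemeasurable hV.aemeasurable).mp hUV
  have hmapUV' : μ.map (fun ω => (U ω, V' ω)) = κ.prod ν := by
    rw [(indepFun_iff_map_prod_eq_prod_map_map hU.aemeasurable hV'.aemeasurable).mp hUV', hν']
  have hmapVV' : μ.map (fun ω => (V ω, V' ω)) = ν.prod ν := by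
    rw [(indepFun_iff_map_prod_eq_prod_map_map hV.aemeasurable hV'.aemeasurable).mp hVV', hν']
  have hmapJ : μ.map (fun ω => (U ω, (V ω, V' ω))) = κ.prod (ν.prod ν) := by
    rw [(indepFun_iff_map_prod_eq_prod_map_map hU.aemeasurable
      (hV.prodMk hV').aemeasurable).mp hUp.symm, hmapVV']
  -- f in L²(κ ⊗ ν)
  have hZ2' : MemLp (fun ω => f (U ω, V ω)) 2 μ := hZ ▸ hZ2
  have hfL2 : MemLp f 2 (κ.prod ν) := by
    rw [← hmapUV]
    exact (memLp_map_measure_iff hf.aestronglyMeasurable (hU.prodMk hV).aemeasurable).mpr hZ2'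
  have hfInt : Integrable f (κ.prod ν) := hfL2.integrable one_le_two
  have hfsq : Integrable (fun p => f p ^ 2) (κ.prod ν) := hfL2.integrable_sq
  -- h
  set h : α → ℝ := fun u => ∫ v, f (u, v) ∂ν with hh
  have hh_meas : StronglyMeasurable h := hf.stronglyMeasurable.integral_prod_right'
  have hhm : Measurable h := hh_meas.measurable
  have hsec : ∀ᵐ u ∂κ, MemLp (fun v => f (u, v)) 2 ν := by
    filter_upwards [hfsq.prod_right_ae] with u h2
    exact (memLp_two_iff_integrable_sq
      (hf.comp measurable_prodMk_left).aestronglyMeasurable).mpr h2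
  have hh2 : MemLp h 2 κ := by
    refine (memLp_two_iff_integrable_sq hh_meas.aestronglyMeasurable).mpr ?_
    refine hfsq.integral_prod_left.mono'
      (hhm.pow_const 2).aestronglyMeasurable ?_
    filter_upwards [hsec] with u hu
    have hvar := variance_nonneg (fun v => f (u, v)) ν
    rw [variance_eq_sub hu] at hvar
    have h1 : h u ^ 2 ≤ ∫ v, f (u, v) ^ 2 ∂ν := by
      have : (∫ v, (fun v => f (u, v)) v ∂ν) ^ 2 ≤ ∫ v, ((fun v => f (u, v)) ^ 2) v ∂ν := by
        linarith
      simpa [hh] using this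
    calc ‖h u ^ 2‖ = h u ^ 2 := by rw [Real.norm_eq_abs, abs_of_nonneg (sq_nonneg _)]
    _ ≤ ∫ v, f (u, v) ^ 2 ∂ν := h1
  have hhUmem : MemLp (fun ω => h (U ω)) 2 μ :=
    (memLp_map_measure_iff hh_meas.aestronglyMeasurable hU.aemeasurable).mp hh2
  have hhUint : Integrable (fun ω => h (U ω)) μ := hhUmem.integrable one_le_two
  have hZint : Integrable Z μ := hZ2.integrable one_le_two
  -- condexp identification
  have hcond : (fun ω => h (U ω)) =ᵐ[μ] g := by
    rw [hg]
    refine ae_eq_condExp_of_forall_setIntegral_eq hm hZint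
      (fun s _ _ => hhUint.integrableOn) ?_ ?_
    · rintro s ⟨t, ht, rfl⟩ -
      rw [hZ]
      have hstep : ∫ ω in U ⁻¹' t, h (U ω) ∂μ = ∫ u in t, h u ∂κ :=
        (setIntegral_map ht hh_meas.aestronglyMeasurable hU.aemeasurable).symm
      rw [hstep]
      have hpre : U ⁻¹' t = (fun ω => (U ω, V ω)) ⁻¹' (t ×ˢ univ) := by ext ω; simp
      rw [hpre, ← setIntegral_map (ht.prod MeasurableSet.univ) hf.aestronglyMeasurable
        (hU.prodMk hV).aemeasurable, hmapUV]
      have hrInt : Integrable f ((κ.restrict t).prod ν) := by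
        have := hfInt.restrict (s := t ×ˢ univ)
        rwa [← Measure.prod_restrict, Measure.restrict_univ] at this
      rw [← Measure.prod_restrict, Measure.restrict_univ, integral_prod _ hrInt]
    · exact (hh_meas.comp_measurable
        (Measurable.of_comap_le le_rfl)).aestronglyMeasurable
  -- integrals
  have hIntZ : ∫ ω, Z ω ∂μ = ∫ u, h u ∂κ := by
    rw [hZ]
    calc ∫ ω, f (U ω, V ω) ∂μ
        = ∫ p, f p ∂(μ.map (fun ω => (U ω, V ω))) :=
          (integral_map (hU.prodMk hV).aemeasurable hf.aestronglyMeasurable).symm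
      _ = ∫ u, h u ∂κ := by rw [hmapUV]; exact integral_prod f hfInt
  have hIntZ' : ∫ ω, Z' ω ∂μ = ∫ u, h u ∂κ := by
    rw [hZ']
    calc ∫ ω, f (U ω, V' ω) ∂μ
        = ∫ p, f p ∂(μ.map (fun ω => (U ω, V' ω))) :=
          (integral_map (hU.prodMk hV').aemeasurable hf.aestronglyMeasurable).symm
      _ = ∫ u, h u ∂κ := by rw [hmapUV']; exact integral_prod f hfInt
  have hIntg : ∫ ω, g ω ∂μ = ∫ ω, Z ω ∂μ := by rw [hg]; exact integral_condExp hm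
  have hgsq : ∫ ω, (g ω) ^ 2 ∂μ = ∫ u, (h u) ^ 2 ∂κ := by
    have hae : (fun ω => (h (U ω)) ^ 2) =ᵐ[μ] fun ω => (g ω) ^ 2 :=
      hcond.fun_comp (· ^ 2)
    rw [← integral_congr_ae hae]
    have : ∫ u, (h u) ^ 2 ∂κ = ∫ ω, (h (U ω)) ^ 2 ∂μ :=
      integral_map hU.aemeasurable (hhm.pow_const 2).aestronglyMeasurable
    rw [this]
  -- covariance
  set G : α × β × β → ℝ := fun p => f (p.1, p.2.1) * f (p.1, p.2.2) with hG
  have mpfst : MeasurePreserving (Prod.fst : β × β → β) (ν.prod ν) ν :=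
    ⟨measurable_fst, by simp [Measure.map_fst_prod, measure_univ]⟩
  have mpsnd : MeasurePreserving (Prod.snd : β × β → β) (ν.prod ν) ν :=
    ⟨measurable_snd, by simp [Measure.map_snd_prod, measure_univ]⟩
  have mp1 : MeasurePreserving (fun p : α × β × β => (p.1, p.2.1))
      (κ.prod (ν.prod ν)) (κ.prod ν) := (MeasurePreserving.id κ).prod mpfst
  have mp2 : MeasurePreserving (fun p : α × β × β => (p.1, p.2.2))
      (κ.prod (ν.prod ν)) (κ.prod ν) := (MeasurePreserving.id κ).prod mpsnd
  have hG1 : MemLp (fun p : α × β × β => f (p.1, p.2.1)) 2 (κ.prod (ν.prod ν)) :=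
    hfL2.comp_measurePreserving mp1
  have hG2 : MemLp (fun p : α × β × β => f (p.1, p.2.2)) 2 (κ.prod (ν.prod ν)) :=
    hfL2.comp_measurePreserving mp2
  have hGint : Integrable G (κ.prod (ν.prod ν)) := by
    have := hG2.smul (φ := fun p : α × β × β => f (p.1, p.2.1)) hG1
      (r := 1) (hpqr := ⟨by rw [ENNReal.inv_two_add_inv_two, inv_one]⟩)
    exact memLp_one_iff_integrable.mp this
  have hGm : Measurable G :=
    (hf.comp (measurable_fst.prodMk (measurable_fst.comp measurable_snd))).mul
      (hf.comp (measurable_fst.prodMk (measurable_snd.comp measurable_snd)))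
  have hZZ' : ∫ ω, Z ω * Z' ω ∂μ = ∫ u, (h u) ^ 2 ∂κ := by
    rw [hZ, hZ']
    calc ∫ ω, f (U ω, V ω) * f (U ω, V' ω) ∂μ
        = ∫ p, G p ∂(μ.map (fun ω => (U ω, (V ω, V' ω)))) :=
          (integral_map (hU.prodMk (hV.prodMk hV')).aemeasurable
            hGm.aestronglyMeasurable).symm
      _ = ∫ p, G p ∂(κ.prod (ν.prod ν)) := by rw [hmapJ]
      _ = ∫ u, ∫ w, f (u, w.1) * f (u, w.2) ∂(ν.prod ν) ∂κ := integral_prod G hGint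
      _ = ∫ u, (h u) ^ 2 ∂κ := by
          refine integral_congr_ae (Filter.Eventually.of_forall fun u => ?_)
          dsimp only
          rw [integral_prod_mul (fun v => f (u, v)) (fun v => f (u, v))]
          simp only [hh]
          ring
  -- variance
  have hgmem : MemLp g 2 μ := hhUmem.ae_eq hcond
  have hvar : variance g μ = ∫ ω, (g ω) ^ 2 ∂μ - (∫ ω, g ω ∂μ) ^ 2 := by
    rw [variance_eq_sub hgmem]
    rfl
  constructor
  · rw [hZZ', hIntZ, hIntZ', hvar, hgsq, hIntg, hIntZ]; ring
  · rw [hvar, hIntg]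
end

section
/- Let X = (X₁,…,X_d) be a vector of independent real random variables, f : ℝ^d → ℝ measurable with Z = f(X) such that all quantities below are defined, ν ⊂ {1,…,d}, and Z^ν the pick-freeze copy of Z. For s,t ∈ ℝ let h_{s,t}(x) = 1{min(s,t) ≤ x ≤ max(s,t)}. Then for every fixed pair (z₁,z₂) ∈ ℝ², Var( E[ h_{z₁,z₂}(Z) | X_ν ] ) = Cov( h_{z₁,z₂}(Z), h_{z₁,z₂}(Z^ν) ); consequently, if Z₁, Z₂ are independent copies of Z independent of (Z, Z^ν), then S^ν₂ := E_{Z₁,Z₂}[ Var( E[ h_{Z₁,Z₂}(Z) | X_ν ] ) ] = E_{Z₁,Z₂}[ Cov( h_{Z₁,Z₂}(Z), h_{Z₁,Z₂}(Z^ν) ) ], where the covariance is taken conditionally on (Z₁,Z₂). -/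
open MeasureTheory ProbabilityTheory Real Set

section helpers

lemma my_integrable_bdd {δ : Type*} [MeasurableSpace δ] (μ : Measure δ) [IsFiniteMeasure μ]
    {g : δ → ℝ} (hg : Measurable g) (hb : ∀ x, |g x| ≤ 1) : Integrable g μ :=
  ⟨hg.aestronglyMeasurable, HasFiniteIntegral.of_bounded (C := 1)
    (Filter.Eventually.of_forall (fun x => by simpa using hb x))⟩

lemma my_variance_congr {Ω : Type*} [MeasurableSpace Ω] {μ : Measure Ω} {f g : Ω → ℝ}
    (h : f =ᵐ[μ] g) : variance f μ = variance g μ := by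
  have hm : μ[f] = μ[g] := integral_congr_ae h
  unfold variance evariance
  rw [hm]
  congr 1
  refine lintegral_congr_ae ?_
  filter_upwards [h] with ω hω
  rw [hω]

lemma my_condexp_indep_pair {Ω α β : Type*} [MeasurableSpace Ω] {mα : MeasurableSpace α}
    {mβ : MeasurableSpace β} (μ : Measure Ω) [IsProbabilityMeasure μ]
    {P : Ω → α} {Q : Ω → β} (hP : Measurable P) (hQ : Measurable Q)
    (hPQ : IndepFun P Q μ) {G : α × β → ℝ} (hG : Measurable G) (hGb : ∀ p, |G p| ≤ 1) :
    μ[(fun ω => G (P ω, Q ω)) | MeasurableSpace.comap P mα]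
      =ᵐ[μ] fun ω => ∫ w, G (P ω, w) ∂(μ.map Q) := by
  have hm : MeasurableSpace.comap P mα ≤ ‹MeasurableSpace Ω› := hP.comap_le
  haveI : SigmaFinite (μ.trim hm) := by infer_instance
  haveI : IsProbabilityMeasure (μ.map Q) := Measure.isProbabilityMeasure_map hQ.aemeasurable
  haveI : IsProbabilityMeasure (μ.map P) := Measure.isProbabilityMeasure_map hP.aemeasurable
  set μP := μ.map P with hμP
  set μQ := μ.map Q with hμQ
  set ψ : α → ℝ := fun y => ∫ w, G (y, w) ∂μQ with hψdef
  have hψsm : StronglyMeasurable ψ := hG.stronglyMeasurable.integral_prod_right'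
  have hψb : ∀ y, |ψ y| ≤ 1 := by
    intro y
    have := norm_integral_le_of_norm_le_const (μ := μQ) (f := fun w => G (y, w)) (C := 1)
      (Filter.Eventually.of_forall fun w => by simpa using hGb (y, w))
    simpa using this
  have hmap : μ.map (fun ω => (P ω, Q ω)) = μP.prod μQ :=
    (indepFun_iff_map_prod_eq_prod_map_map hP.aemeasurable hQ.aemeasurable).mp hPQ
  have hGint : Integrable G (μP.prod μQ) := my_integrable_bdd _ hG hGb
  have hGPQ : Integrable (fun ω => G (P ω, Q ω)) μ :=
    my_integrable_bdd μ (hG.comp (hP.prodMk hQ)) (fun ω => hGb _)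
  have hPm' : Measurable[MeasurableSpace.comap P mα] P := Measurable.of_comap_le le_rfl
  have hφint : Integrable (fun ω => ψ (P ω)) μ :=
    my_integrable_bdd μ (hψsm.measurable.comp hP) (fun ω => hψb _)
  refine (ae_eq_condExp_of_forall_setIntegral_eq hm hGPQ
    (fun s _ _ => hφint.integrableOn) (fun s hs _ => ?_)
    (StronglyMeasurable.aestronglyMeasurable (hψsm.comp_measurable hPm'))).symm
  obtain ⟨t, ht, rfl⟩ := hs
  have h1 : ∫ x in P ⁻¹' t, G (P x, Q x) ∂μ = ∫ p in t ×ˢ Set.univ, G p ∂(μP.prod μQ) := by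
    have hpre : (fun ω => (P ω, Q ω)) ⁻¹' (t ×ˢ Set.univ) = P ⁻¹' t := by
      ext ω; simp
    rw [← hmap, setIntegral_map (ht.prod MeasurableSet.univ)
      (hG.aestronglyMeasurable) (hP.prodMk hQ).aemeasurable, hpre]
  have h2 : ∫ p in t ×ˢ Set.univ, G p ∂(μP.prod μQ) = ∫ y in t, ψ y ∂μP := by
    rw [setIntegral_prod _ hGint.integrableOn]
    simp [hψdef]
  have h3 : ∫ x in P ⁻¹' t, ψ (P x) ∂μ = ∫ y in t, ψ y ∂μP := by
    rw [hμP, setIntegral_map ht hψsm.aestronglyMeasurable hP.aemeasurable]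
  rw [h1, h2, h3]

end helpers
/-- In the pick-freeze setting with real output: for every fixed pair
`(z₁, z₂)`, `Var(E[h_{z₁,z₂}(Z) | X_ν]) = Cov(h_{z₁,z₂}(Z), h_{z₁,z₂}(Z^ν))`;
consequently, integrating over independent copies `Z₁, Z₂` of `Z`,
`S^ν₂ = E_{Z₁,Z₂}[Var(E[h_{Z₁,Z₂}(Z) | X_ν])]
     = E_{Z₁,Z₂}[Cov(h_{Z₁,Z₂}(Z), h_{Z₁,Z₂}(Z^ν))]`,
where the covariance is taken conditionally on (i.e. at fixed values of) `(Z₁,Z₂)`. -/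
theorem stmt3 {Ω : Type*} [MeasurableSpace Ω] (μ : Measure Ω) [IsProbabilityMeasure μ]
    {d : ℕ} (X X' : Ω → Fin d → ℝ)
    (hX : Measurable X) (hX' : Measurable X')
    (hcoord : iIndepFun (fun i ω => X ω i) μ)
    (hXX' : IndepFun X X' μ) (hid : IdentDistrib X' X μ μ)
    (ν : Finset (Fin d)) (f : (Fin d → ℝ) → ℝ) (hf : Measurable f)
    (Z Zν : Ω → ℝ)
    (hZ : Z = fun ω => f (X ω))
    (hZν : Zν = fun ω => f (fun i => if i ∈ ν then X ω i else X' ω i))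
    (h : ℝ → ℝ → ℝ → ℝ)
    (hh : ∀ s t x, h s t x = if min s t ≤ x ∧ x ≤ max s t then 1 else 0) :
    (∀ z₁ z₂ : ℝ,
      variance (μ[(fun ω => h z₁ z₂ (Z ω)) |
          MeasurableSpace.comap (fun ω (i : ν) => X ω i) inferInstance]) μ
        = (∫ ω, h z₁ z₂ (Z ω) * h z₁ z₂ (Zν ω) ∂μ)
          - (∫ ω, h z₁ z₂ (Z ω) ∂μ) * (∫ ω, h z₁ z₂ (Zν ω) ∂μ)) ∧
    (∫ p : ℝ × ℝ,
        variance (μ[(fun ω => h p.1 p.2 (Z ω)) |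
          MeasurableSpace.comap (fun ω (i : ν) => X ω i) inferInstance]) μ
        ∂((μ.map Z).prod (μ.map Z))
      = ∫ p : ℝ × ℝ,
          ((∫ ω, h p.1 p.2 (Z ω) * h p.1 p.2 (Zν ω) ∂μ)
            - (∫ ω, h p.1 p.2 (Z ω) ∂μ) * (∫ ω, h p.1 p.2 (Zν ω) ∂μ))
          ∂((μ.map Z).prod (μ.map Z))) := by
  classical
  have key : ∀ z₁ z₂ : ℝ,
      variance (μ[(fun ω => h z₁ z₂ (Z ω)) |
          MeasurableSpace.comap (fun ω (i : ν) => X ω i) inferInstance]) μ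
        = (∫ ω, h z₁ z₂ (Z ω) * h z₁ z₂ (Zν ω) ∂μ)
          - (∫ ω, h z₁ z₂ (Z ω) ∂μ) * (∫ ω, h z₁ z₂ (Zν ω) ∂μ) := by
    intro z₁ z₂
    -- the grouped variables
    set P : Ω → ({x // x ∈ ν} → ℝ) := fun ω (i : ν) => X ω i with hPdef
    set Q : Ω → ({x // x ∈ νᶜ} → ℝ) := fun ω (i : (νᶜ : Finset (Fin d))) => X ω i with hQdef
    set Q' : Ω → ({x // x ∈ νᶜ} → ℝ) := fun ω (i : (νᶜ : Finset (Fin d))) => X' ω i with hQ'def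
    have hPm : Measurable P := measurable_pi_lambda _ fun i => (measurable_pi_apply _).comp hX
    have hQm : Measurable Q := measurable_pi_lambda _ fun i => (measurable_pi_apply _).comp hX
    have hQ'm : Measurable Q' := measurable_pi_lambda _ fun i => (measurable_pi_apply _).comp hX'
    -- recombination
    set c : (({x // x ∈ ν} → ℝ) × ({x // x ∈ νᶜ} → ℝ)) → (Fin d → ℝ) :=
      fun p i => if hi : i ∈ ν then p.1 ⟨i, hi⟩ else p.2 ⟨i, Finset.mem_compl.mpr hi⟩ with hcdef
    have hc : Measurable c := by
      refine measurable_pi_lambda _ fun i => ?_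
      by_cases hi : i ∈ ν
      · simpa [hcdef, hi, Function.comp_def] using (measurable_pi_apply (⟨i, hi⟩ : {x // x ∈ ν})).comp
          (measurable_fst : Measurable (Prod.fst : _ → ({x // x ∈ ν} → ℝ)))
      · simpa [hcdef, hi, Function.comp_def] using
          (measurable_pi_apply (⟨i, Finset.mem_compl.mpr hi⟩ : {x // x ∈ νᶜ})).comp
          (measurable_snd : Measurable (Prod.snd : _ → ({x // x ∈ νᶜ} → ℝ)))
    have hX_eq : ∀ ω, X ω = c (P ω, Q ω) := by
      intro ω; funext i; by_cases hi : i ∈ ν <;> simp [hcdef, hPdef, hQdef, hi]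
    have hXν_eq : ∀ ω, (fun i => if i ∈ ν then X ω i else X' ω i) = c (P ω, Q' ω) := by
      intro ω; funext i; by_cases hi : i ∈ ν <;> simp [hcdef, hPdef, hQ'def, hi]
    -- the bounded measurable test function
    set g0 : ℝ → ℝ := h z₁ z₂ with hg0def
    have hg0m : Measurable g0 := by
      have : g0 = fun x => if x ∈ Set.Icc (min z₁ z₂) (max z₁ z₂) then (1 : ℝ) else 0 := by
        funext x; rw [hg0def, hh]; simp [Set.mem_Icc]
      rw [this]
      exact Measurable.ite measurableSet_Icc measurable_const measurable_const
    have hg0b : ∀ x, |g0 x| ≤ 1 := by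
      intro x; rw [hg0def, hh]; split_ifs <;> norm_num
    set G : (({x // x ∈ ν} → ℝ) × ({x // x ∈ νᶜ} → ℝ)) → ℝ := fun p => g0 (f (c p)) with hGdef
    have hGm : Measurable G := hg0m.comp (hf.comp hc)
    have hGb : ∀ p, |G p| ≤ 1 := fun p => hg0b _
    -- independence and laws
    have hPQ : IndepFun P Q μ :=
      hcoord.indepFun_finset ν νᶜ disjoint_compl_right fun i => (measurable_pi_apply i).comp hX
    -- restriction maps
    set r1 : (Fin d → ℝ) → ({x // x ∈ ν} → ℝ) := fun v i => v i with hr1def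
    set r2 : (Fin d → ℝ) → ({x // x ∈ νᶜ} → ℝ) := fun v i => v i with hr2def
    have hr1 : Measurable r1 := measurable_pi_lambda _ fun i => measurable_pi_apply _
    have hr2 : Measurable r2 := measurable_pi_lambda _ fun i => measurable_pi_apply _
    have hQ'law : μ.map Q' = μ.map Q := (hid.comp hr2).map_eq
    have hPQ' : IndepFun P Q' μ := hXX'.comp hr1 hr2
    have hPQ_Q' : IndepFun (fun ω => (P ω, Q ω)) Q' μ := hXX'.comp (hr1.prodMk hr2) hr2
    haveI : IsProbabilityMeasure (μ.map P) := Measure.isProbabilityMeasure_map hPm.aemeasurable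
    haveI : IsProbabilityMeasure (μ.map Q) := Measure.isProbabilityMeasure_map hQm.aemeasurable
    set μP := μ.map P with hμPdef
    set μQ := μ.map Q with hμQdef
    have hmapPQ : μ.map (fun ω => (P ω, Q ω)) = μP.prod μQ :=
      (indepFun_iff_map_prod_eq_prod_map_map hPm.aemeasurable hQm.aemeasurable).mp hPQ
    have hmapPQ' : μ.map (fun ω => (P ω, Q' ω)) = μP.prod μQ := by
      rw [(indepFun_iff_map_prod_eq_prod_map_map hPm.aemeasurable hQ'm.aemeasurable).mp hPQ',
        hQ'law]
    have hmapBig : μ.map (fun ω => ((P ω, Q ω), Q' ω)) = (μP.prod μQ).prod μQ := by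
      rw [(indepFun_iff_map_prod_eq_prod_map_map (hPm.prodMk hQm).aemeasurable
        hQ'm.aemeasurable).mp hPQ_Q', hmapPQ, hQ'law]
    -- rewrite the integrands
    have hfun : (fun ω => h z₁ z₂ (Z ω)) = fun ω => G (P ω, Q ω) := by
      funext ω
      rw [hZ, hGdef, hg0def]
      simp only
      rw [hX_eq ω]
    have hfun' : (fun ω => h z₁ z₂ (Zν ω)) = fun ω => G (P ω, Q' ω) := by
      funext ω
      rw [hZν, hGdef, hg0def]
      simp only
      rw [hXν_eq ω]
    -- the conditional expectation
    set ψ : ({x // x ∈ ν} → ℝ) → ℝ := fun y => ∫ w, G (y, w) ∂μQ with hψdef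
    have hψsm : StronglyMeasurable ψ := hGm.stronglyMeasurable.integral_prod_right'
    have hψb : ∀ y, |ψ y| ≤ 1 := by
      intro y
      have := norm_integral_le_of_norm_le_const (μ := μQ) (f := fun w => G (y, w)) (C := 1)
        (Filter.Eventually.of_forall fun w => by simpa using hGb (y, w))
      simpa [hψdef] using this
    have hce : μ[(fun ω => h z₁ z₂ (Z ω)) |
        MeasurableSpace.comap (fun ω (i : ν) => X ω i) inferInstance]
        =ᵐ[μ] fun ω => ψ (P ω) := by
      rw [hfun]
      exact my_condexp_indep_pair μ hPm hQm hPQ hGm hGb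
    rw [my_variance_congr hce]
    -- variance computation
    have hφmem : MemLp (fun ω => ψ (P ω)) 2 μ :=
      MemLp.of_bound ((hψsm.measurable.comp hPm).aestronglyMeasurable) 1
        (Filter.Eventually.of_forall fun ω => by simpa using hψb (P ω))
    rw [variance_eq_sub hφmem]
    -- key integrals
    have hGint : Integrable G (μP.prod μQ) := my_integrable_bdd _ hGm hGb
    have hEφ : μ[fun ω => ψ (P ω)] = ∫ p, G p ∂(μP.prod μQ) := by
      have h1 : μ[fun ω => ψ (P ω)] = ∫ y, ψ y ∂μP := by
        rw [hμPdef, integral_map hPm.aemeasurable hψsm.aestronglyMeasurable]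
      rw [h1, MeasureTheory.integral_prod _ hGint]
    have hA : ∫ ω, h z₁ z₂ (Z ω) ∂μ = ∫ p, G p ∂(μP.prod μQ) := by
      have e : ∫ ω, h z₁ z₂ (Z ω) ∂μ = ∫ ω, G (P ω, Q ω) ∂μ := by rw [hfun]
      rw [e, ← integral_map (hPm.prodMk hQm).aemeasurable hGm.aestronglyMeasurable, hmapPQ]
    have hB : ∫ ω, h z₁ z₂ (Zν ω) ∂μ = ∫ p, G p ∂(μP.prod μQ) := by
      have e : ∫ ω, h z₁ z₂ (Zν ω) ∂μ = ∫ ω, G (P ω, Q' ω) ∂μ := by rw [hfun']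
      rw [e, ← integral_map (hPm.prodMk hQ'm).aemeasurable hGm.aestronglyMeasurable, hmapPQ']
    set H : ((({x // x ∈ ν} → ℝ) × ({x // x ∈ νᶜ} → ℝ)) × ({x // x ∈ νᶜ} → ℝ)) → ℝ :=
      fun q => G q.1 * G (q.1.1, q.2) with hHdef
    have hHm : Measurable H := (hGm.comp measurable_fst).mul
      (hGm.comp ((measurable_fst.comp measurable_fst).prodMk measurable_snd))
    have hHb : ∀ q, |H q| ≤ 1 := by
      intro q
      rw [hHdef]
      simp only
      calc |G q.1 * G (q.1.1, q.2)| = |G q.1| * |G (q.1.1, q.2)| := abs_mul _ _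
        _ ≤ 1 * 1 := mul_le_mul (hGb _) (hGb _) (abs_nonneg _) zero_le_one
        _ = 1 := one_mul 1
    have hHint : Integrable H ((μP.prod μQ).prod μQ) := my_integrable_bdd _ hHm hHb
    have hC : ∫ ω, h z₁ z₂ (Z ω) * h z₁ z₂ (Zν ω) ∂μ = ∫ q, H q ∂((μP.prod μQ).prod μQ) := by
      have h1 : (fun ω => h z₁ z₂ (Z ω) * h z₁ z₂ (Zν ω))
          = fun ω => H ((P ω, Q ω), Q' ω) := by
        funext ω
        have e1 : h z₁ z₂ (Z ω) = G (P ω, Q ω) := congrFun hfun ω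
        have e2 : h z₁ z₂ (Zν ω) = G (P ω, Q' ω) := congrFun hfun' ω
        rw [e1, e2, hHdef]
      calc ∫ ω, h z₁ z₂ (Z ω) * h z₁ z₂ (Zν ω) ∂μ
          = ∫ ω, H ((P ω, Q ω), Q' ω) ∂μ := by rw [h1]
        _ = ∫ q, H q ∂(μ.map (fun ω => ((P ω, Q ω), Q' ω))) :=
            (integral_map ((hPm.prodMk hQm).prodMk hQ'm).aemeasurable
              hHm.aestronglyMeasurable).symm
        _ = ∫ q, H q ∂((μP.prod μQ).prod μQ) := by rw [hmapBig]
    have hGψint : Integrable (fun p => G p * ψ p.1) (μP.prod μQ) :=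
      my_integrable_bdd _ (hGm.mul (hψsm.measurable.comp measurable_fst))
        (fun p => by
          calc |G p * ψ p.1| = |G p| * |ψ p.1| := abs_mul _ _
            _ ≤ 1 * 1 := mul_le_mul (hGb _) (hψb _) (abs_nonneg _) zero_le_one
            _ = 1 := one_mul 1)
    have hHcalc : ∫ q, H q ∂((μP.prod μQ).prod μQ) = ∫ y, ψ y * ψ y ∂μP := by
      rw [MeasureTheory.integral_prod _ hHint]
      have e1 : ∫ p, (∫ w', H (p, w') ∂μQ) ∂(μP.prod μQ)
          = ∫ p, G p * ψ p.1 ∂(μP.prod μQ) := by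
        refine integral_congr_ae (Filter.Eventually.of_forall fun p => ?_)
        simp only [hHdef]
        rw [integral_const_mul]
      rw [e1, MeasureTheory.integral_prod _ hGψint]
      refine integral_congr_ae (Filter.Eventually.of_forall fun y => ?_)
      dsimp only
      rw [integral_mul_const, mul_comm]
    have hφsq : μ[(fun ω => ψ (P ω)) ^ 2] = ∫ y, ψ y * ψ y ∂μP := by
      have e : ((fun ω => ψ (P ω)) ^ 2) = fun ω => ψ (P ω) * ψ (P ω) := by
        funext ω; simp [pow_two]
      rw [e, hμPdef, integral_map hPm.aemeasurable
        (show StronglyMeasurable (fun y => ψ y * ψ y) from hψsm.mul hψsm).aestronglyMeasurable]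
    rw [hφsq, hEφ, hA, hB, hC, hHcalc]
    ring
  refine ⟨key, ?_⟩
  exact integral_congr_ae (Filter.Eventually.of_forall fun p => key p.1 p.2)
end

section
/- (Bound for the term A.) In the pick-freeze setting with real output, let (Z_j, Z_j^ν), j = 1,…,N, be i.i.d. copies of (Z, Z^ν) and W₁,…,W_N i.i.d. copies of Z independent of them. For τ ∈ P_{N,2} set G(Z_j, W_τ) = h_{W_τ}(Z_j) h_{W_τ}(Z_j^ν), and define A_N = (1/(N·C(N,2))) Σ_{j=1}^N Σ_{τ ∈ P_{N,2}} ( G(Z_j, W_τ) − E[ G(Z_j, W_τ) ] ). Then for every s > 0, P( A_N > 2s ) ≤ 2 exp( − N s² / 8 ). -/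
open MeasureTheory ProbabilityTheory Real Set

/-- The indicator function of the "ball" (closed interval) with diameter the segment
joining `s` and `t` on the real line: `h_{s,t}(x) = 1{min(s,t) ≤ x ≤ max(s,t)}`. -/
noncomputable def hball (s t x : ℝ) : ℝ := if min s t ≤ x ∧ x ≤ max s t then 1 else 0

/-- `G(Z_j, W_τ) = h_{W_τ}(Z_j) h_{W_τ}(Z_j^ν)` where `ξ j = ((Z_j, Z_j^ν), W_j)` and
`τ = (k₁, k₂)` indexes the pair `W_τ = (W_{k₁}, W_{k₂})`. -/
noncomputable def Gterm {Ω : Type*} {N : ℕ} (ξ : Fin N → Ω → (ℝ × ℝ) × ℝ)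
    (j : Fin N) (τ : Fin N × Fin N) (ω : Ω) : ℝ :=
  hball ((ξ τ.1 ω).2) ((ξ τ.2 ω).2) ((ξ j ω).1.1) *
  hball ((ξ τ.1 ω).2) ((ξ τ.2 ω).2) ((ξ j ω).1.2)

/-- The centred term `A_N = (1/(N·C(N,2))) Σ_j Σ_{τ ∈ P_{N,2}} (G(Z_j,W_τ) - E[G(Z_j,W_τ)])`. -/
noncomputable def Aterm {Ω : Type*} [MeasurableSpace Ω] (μ : Measure Ω) {N : ℕ}
    (ξ : Fin N → Ω → (ℝ × ℝ) × ℝ) (ω : Ω) : ℝ :=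
  ((N : ℝ) * (N.choose 2 : ℝ))⁻¹ *
    ∑ j : Fin N, ∑ τ ∈ Finset.univ.filter (fun p : Fin N × Fin N => p.1 < p.2),
      (Gterm ξ j τ ω - ∫ ω', Gterm ξ j τ ω' ∂μ)

set_option linter.unusedSectionVars false
set_option linter.unusedVariables false
set_option maxHeartbeats 1000000

namespace Stmt6Aux



lemma hball_nonneg (s t x : ℝ) : 0 ≤ hball s t x := by
  unfold hball; split <;> norm_num

lemma hball_le_one (s t x : ℝ) : hball s t x ≤ 1 := by
  unfold hball; split <;> norm_num

lemma hball_comm (s t x : ℝ) : hball s t x = hball t s x := by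
  unfold hball; rw [min_comm, max_comm]

lemma hball_meas : Measurable (fun q : ℝ × ℝ × ℝ => hball q.1 q.2.1 q.2.2) := by
  unfold hball
  refine Measurable.ite ?_ measurable_const measurable_const
  have h1 : MeasurableSet {q : ℝ × ℝ × ℝ | min q.1 q.2.1 ≤ q.2.2} :=
    measurableSet_le (by fun_prop) (by fun_prop)
  have h2 : MeasurableSet {q : ℝ × ℝ × ℝ | q.2.2 ≤ max q.1 q.2.1} :=
    measurableSet_le (by fun_prop) (by fun_prop)
  simpa only [Set.setOf_and] using h1.inter h2

/-- The kernel as a function of the three sample values. -/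
noncomputable def Fk (j k l : (ℝ × ℝ) × ℝ) : ℝ :=
  hball k.2 l.2 j.1.1 * hball k.2 l.2 j.1.2

lemma Fk_nonneg (j k l : (ℝ × ℝ) × ℝ) : 0 ≤ Fk j k l :=
  mul_nonneg (hball_nonneg _ _ _) (hball_nonneg _ _ _)

lemma Fk_le_one (j k l : (ℝ × ℝ) × ℝ) : Fk j k l ≤ 1 :=
  mul_le_one₀ (hball_le_one _ _ _) (hball_nonneg _ _ _) (hball_le_one _ _ _)

lemma Fk_symm (j k l : (ℝ × ℝ) × ℝ) : Fk j k l = Fk j l k := by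
  unfold Fk; rw [hball_comm, hball_comm k.2 l.2]

lemma Fk_meas : Measurable (fun p : (((ℝ × ℝ) × ℝ) × ((ℝ × ℝ) × ℝ) × ((ℝ × ℝ) × ℝ)) =>
    Fk p.1 p.2.1 p.2.2) := by
  have c1 : Measurable (fun p : (((ℝ × ℝ) × ℝ) × ((ℝ × ℝ) × ℝ) × ((ℝ × ℝ) × ℝ)) =>
      ((p.2.1.2, p.2.2.2, p.1.1.1) : ℝ × ℝ × ℝ)) := by fun_prop
  have c2 : Measurable (fun p : (((ℝ × ℝ) × ℝ) × ((ℝ × ℝ) × ℝ) × ((ℝ × ℝ) × ℝ)) =>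
      ((p.2.1.2, p.2.2.2, p.1.1.2) : ℝ × ℝ × ℝ)) := by fun_prop
  exact (hball_meas.comp c1).mul (hball_meas.comp c2)

lemma Gterm_eq_Fk {Ω : Type*} {N : ℕ} (ξ : Fin N → Ω → (ℝ × ℝ) × ℝ) (j : Fin N)
    (τ : Fin N × Fin N) (ω : Ω) : Gterm ξ j τ ω = Fk (ξ j ω) (ξ τ.1 ω) (ξ τ.2 ω) := rfl




variable {Ω : Type*} [MeasurableSpace Ω] (μ : Measure Ω) [IsProbabilityMeasure μ]

lemma integrable_of_bound {Y : Ω → ℝ} (hm : Measurable Y) (c : ℝ) (hb : ∀ ω, |Y ω| ≤ c) :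
    Integrable Y μ :=
  Integrable.mono' (integrable_const c) hm.aestronglyMeasurable
    (ae_of_all _ (by simpa [Real.norm_eq_abs] using hb))

lemma mgf_le_of_centered {Y : Ω → ℝ} (hm : Measurable Y) (hb : ∀ ω, |Y ω| ≤ 1)
    (hc : ∫ ω, Y ω ∂μ = 0) (t : ℝ) : mgf Y μ t ≤ exp (t ^ 2 / 2) := by
  have hYint : Integrable Y μ := integrable_of_bound μ hm 1 hb
  have hpt : ∀ ω, exp (t * Y ω) ≤ cosh t + Y ω * sinh t := by
    intro ω
    have h1 : -1 ≤ Y ω := neg_le_of_abs_le (hb ω)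
    have h2 : Y ω ≤ 1 := le_of_abs_le (hb ω)
    have ha : (0:ℝ) ≤ (1 + Y ω) / 2 := by linarith
    have hb' : (0:ℝ) ≤ (1 - Y ω) / 2 := by linarith
    have hab : (1 + Y ω) / 2 + (1 - Y ω) / 2 = 1 := by ring
    have := convexOn_exp.2 (Set.mem_univ t) (Set.mem_univ (-t)) ha hb' hab
    simp only [smul_eq_mul] at this
    have harg : (1 + Y ω) / 2 * t + (1 - Y ω) / 2 * (-t) = t * Y ω := by ring
    rw [harg] at this
    refine this.trans_eq ?_
    rw [Real.cosh_eq, Real.sinh_eq]; ring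
  have hLint : Integrable (fun ω => exp (t * Y ω)) μ := by
    refine Integrable.mono' (integrable_const (exp |t|)) ?_ (ae_of_all _ ?_)
    · exact (measurable_exp.comp (hm.const_mul t)).aestronglyMeasurable
    · intro ω
      rw [Real.norm_eq_abs, abs_of_pos (exp_pos _)]
      refine exp_le_exp.2 ?_
      calc t * Y ω ≤ |t * Y ω| := le_abs_self _
        _ = |t| * |Y ω| := abs_mul _ _
        _ ≤ |t| * 1 := by
            exact mul_le_mul_of_nonneg_left (hb ω) (abs_nonneg t)
        _ = |t| := mul_one _
  have hRint : Integrable (fun ω => cosh t + Y ω * sinh t) μ :=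
    (integrable_const _).add (hYint.mul_const _)
  calc mgf Y μ t = ∫ ω, exp (t * Y ω) ∂μ := rfl
    _ ≤ ∫ ω, (cosh t + Y ω * sinh t) ∂μ := integral_mono hLint hRint hpt
    _ = cosh t + (∫ ω, Y ω ∂μ) * sinh t := by
        rw [integral_add (integrable_const _) (hYint.mul_const _), integral_const,
          integral_mul_const]
        simp
    _ = cosh t := by rw [hc]; ring
    _ ≤ exp (t ^ 2 / 2) := Real.cosh_le_exp_half_sq t



lemma int_exp_bound {Ω : Type*} [MeasurableSpace Ω] (μ : Measure Ω) [IsProbabilityMeasure μ]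
    {Y : Ω → ℝ} (hm : Measurable Y) (c B : ℝ) (hb : ∀ ω, |Y ω| ≤ B) :
    Integrable (fun ω => exp (c * Y ω)) μ := by
  refine Integrable.mono' (integrable_const (exp (|c| * B)))
    ((measurable_exp.comp (hm.const_mul c)).aestronglyMeasurable) (ae_of_all _ fun ω => ?_)
  rw [Real.norm_eq_abs, abs_of_pos (exp_pos _)]
  refine exp_le_exp.2 ?_
  calc c * Y ω ≤ |c * Y ω| := le_abs_self _
    _ = |c| * |Y ω| := abs_mul _ _
    _ ≤ |c| * B := mul_le_mul_of_nonneg_left (hb ω) (abs_nonneg c)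



lemma exists_perm_triple {N : ℕ} {x y z x' y' z' : Fin N} (h1 : x ≠ y) (h2 : x ≠ z) (h3 : y ≠ z)
    (h1' : x' ≠ y') (h2' : x' ≠ z') (h3' : y' ≠ z') :
    ∃ ρ : Equiv.Perm (Fin N), ρ x = x' ∧ ρ y = y' ∧ ρ z = z' := by
  set ρ1 := Equiv.swap x x' with hρ1def
  have hx1 : ρ1 x = x' := Equiv.swap_apply_left x x'
  set y1 := ρ1 y with hy1def
  set z1 := ρ1 z with hz1def
  have hy1x : y1 ≠ x' := by rw [← hx1]; exact ρ1.injective.ne h1.symm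
  have hz1x : z1 ≠ x' := by rw [← hx1]; exact ρ1.injective.ne h2.symm
  have hyz1 : y1 ≠ z1 := ρ1.injective.ne h3
  set ρ2 := Equiv.swap y1 y' with hρ2def
  have hx2 : ρ2 x' = x' := Equiv.swap_apply_of_ne_of_ne hy1x.symm h1'
  have hy2 : ρ2 y1 = y' := Equiv.swap_apply_left _ _
  set z2 := ρ2 z1 with hz2def
  have hz2x : z2 ≠ x' := by rw [← hx2]; exact ρ2.injective.ne hz1x
  have hz2y : z2 ≠ y' := by rw [← hy2]; exact ρ2.injective.ne hyz1.symm
  set ρ3 := Equiv.swap z2 z' with hρ3def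
  have hx3 : ρ3 x' = x' := Equiv.swap_apply_of_ne_of_ne hz2x.symm h2'
  have hy3 : ρ3 y' = y' := Equiv.swap_apply_of_ne_of_ne hz2y.symm h3'
  have hz3 : ρ3 z2 = z' := Equiv.swap_apply_left _ _
  refine ⟨(ρ1.trans ρ2).trans ρ3, ?_, ?_, ?_⟩ <;>
    simp only [Equiv.trans_apply]
  · rw [hx1, hx2, hx3]
  · rw [← hy1def, hy2, hy3]
  · rw [← hz1def, ← hz2def, hz3]

def Dset (N : ℕ) : Finset (Fin N × Fin N × Fin N) :=
  Finset.univ.filter (fun p => p.1 ≠ p.2.1 ∧ p.1 ≠ p.2.2 ∧ p.2.1 ≠ p.2.2)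

lemma perm_triple_sum {N : ℕ} (a b c : Fin N) (hab : a ≠ b) (hac : a ≠ c) (hbc : b ≠ c) :
    ∃ K : ℕ, K * (Dset N).card = N.factorial ∧
      ∀ g : Fin N → Fin N → Fin N → ℝ,
        ∑ σ : Equiv.Perm (Fin N), g (σ a) (σ b) (σ c) = K • ∑ p ∈ Dset N, g p.1 p.2.1 p.2.2 := by
  classical
  set fib : (Fin N × Fin N × Fin N) → Finset (Equiv.Perm (Fin N)) :=
    fun p => Finset.univ.filter (fun σ => (σ a, σ b, σ c) = p) with hfib
  have hmaps : ∀ σ : Equiv.Perm (Fin N), σ ∈ (Finset.univ : Finset (Equiv.Perm (Fin N))) →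
      (σ a, σ b, σ c) ∈ Dset N := by
    intro σ _
    simp only [Dset, Finset.mem_filter, Finset.mem_univ, true_and]
    exact ⟨σ.injective.ne hab, σ.injective.ne hac, σ.injective.ne hbc⟩
  have habc : (a, b, c) ∈ Dset N := by
    simp only [Dset, Finset.mem_filter, Finset.mem_univ, true_and]
    exact ⟨hab, hac, hbc⟩
  set K := (fib (a, b, c)).card with hK
  have hcard : ∀ p ∈ Dset N, (fib p).card = K := by
    intro p hp
    simp only [Dset, Finset.mem_filter, Finset.mem_univ, true_and] at hp
    obtain ⟨hρ1, hρ2, hρ3⟩ := hp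
    obtain ⟨ρ, hr1, hr2, hr3⟩ := exists_perm_triple hρ1 hρ2 hρ3 hab hac hbc
    refine Finset.card_bij' (fun σ _ => ρ * σ) (fun σ _ => ρ⁻¹ * σ) ?_ ?_ ?_ ?_
    · intro σ hσ
      simp only [hfib, Finset.mem_filter, Finset.mem_univ, true_and, Prod.ext_iff,
        Prod.mk.injEq] at hσ ⊢
      obtain ⟨e1, e2, e3⟩ := hσ
      simp [Equiv.Perm.mul_apply, e1, e2, e3, hr1, hr2, hr3]
    · intro σ hσ
      simp only [hfib, Finset.mem_filter, Finset.mem_univ, true_and, Prod.ext_iff,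
        Prod.mk.injEq] at hσ ⊢
      obtain ⟨e1, e2, e3⟩ := hσ
      refine ⟨?_, ?_, ?_⟩
      · rw [Equiv.Perm.mul_apply, e1, ← hr1, Equiv.Perm.inv_def, Equiv.symm_apply_apply]
      · rw [Equiv.Perm.mul_apply, e2, ← hr2, Equiv.Perm.inv_def, Equiv.symm_apply_apply]
      · rw [Equiv.Perm.mul_apply, e3, ← hr3, Equiv.Perm.inv_def, Equiv.symm_apply_apply]
    · intro σ _; simp [mul_assoc]
    · intro σ _; simp [← mul_assoc]
  have hcount : K * (Dset N).card = N.factorial := by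
    have h1 : (Finset.univ : Finset (Equiv.Perm (Fin N))).card
        = ∑ p ∈ Dset N, (fib p).card :=
      Finset.card_eq_sum_card_fiberwise hmaps
    have h2 : (Finset.univ : Finset (Equiv.Perm (Fin N))).card = N.factorial := by
      rw [Finset.card_univ, Fintype.card_perm, Fintype.card_fin]
    rw [Finset.sum_congr rfl hcard, Finset.sum_const, smul_eq_mul] at h1
    rw [← h2, h1, mul_comm]
  refine ⟨K, hcount, ?_⟩
  intro g
  have h3 : ∑ σ : Equiv.Perm (Fin N), g (σ a) (σ b) (σ c)
      = ∑ p ∈ Dset N, ∑ σ ∈ fib p, g (σ a) (σ b) (σ c) :=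
    (Finset.sum_fiberwise_of_maps_to hmaps _).symm
  rw [h3]
  rw [Finset.smul_sum]
  refine Finset.sum_congr rfl ?_
  intro p hp
  have : ∀ σ ∈ fib p, g (σ a) (σ b) (σ c) = g p.1 p.2.1 p.2.2 := by
    intro σ hσ
    simp only [hfib, Finset.mem_filter, Finset.mem_univ, true_and] at hσ
    rw [← hσ]
  rw [Finset.sum_congr rfl this, Finset.sum_const, hcard p hp]




lemma two_mul_choose_two (n : ℕ) : 2 * n.choose 2 = n * (n - 1) := by
  cases n with
  | zero => rfl
  | succ k =>
      have h : (2:ℕ) ∣ (k+1) * k := by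
        rw [Nat.mul_comm]; exact (Nat.even_mul_succ_self k).two_dvd
      rw [Nat.choose_two_right, Nat.succ_sub_one, Nat.mul_div_cancel' h]

lemma cast_mul_pred (n : ℕ) : ((n * (n - 1) : ℕ) : ℝ) = (n:ℝ)^2 - n := by
  cases n with
  | zero => simp
  | succ k => push_cast [Nat.succ_sub_one]; ring

lemma choose_two_cast (n : ℕ) : 2 * ((n.choose 2 : ℕ) : ℝ) = (n:ℝ)^2 - (n:ℝ) := by
  rw [← cast_mul_pred, ← two_mul_choose_two]; push_cast; ring

section
variable {N : ℕ}

lemma W_eq : ∑ k : Fin N, ∑ l : Fin N, (if k < l then (1:ℝ) else 0) = ((N.choose 2 : ℕ) : ℝ) := by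
  have tri : ∀ k l : Fin N, (if k < l then (1:ℝ) else 0) + (if l < k then 1 else 0)
      + (if k = l then 1 else 0) = 1 := by
    intro k l
    rcases lt_trichotomy k l with h | h | h
    · simp [h, lt_asymm h, ne_of_lt h]
    · simp [h, lt_irrefl]
    · simp [h, lt_asymm h, (ne_of_lt h).symm]
  have hsum : ∑ k : Fin N, ∑ l : Fin N, ((if k < l then (1:ℝ) else 0) + (if l < k then 1 else 0)
      + (if k = l then 1 else 0)) = (N:ℝ)^2 := by
    simp only [tri]
    simp [Finset.sum_const, Finset.card_univ]
    ring
  have h1 : ∑ k : Fin N, ∑ l : Fin N, (if l < k then (1:ℝ) else 0)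
      = ∑ k : Fin N, ∑ l : Fin N, (if k < l then (1:ℝ) else 0) := Finset.sum_comm
  have h2 : ∑ k : Fin N, ∑ l : Fin N, (if k = l then (1:ℝ) else 0) = (N:ℝ) := by
    have : ∀ k : Fin N, ∑ l : Fin N, (if k = l then (1:ℝ) else 0) = 1 := fun k => by
      rw [Finset.sum_ite_eq]; simp
    simp only [this]
    simp [Finset.card_univ]
  simp only [Finset.sum_add_distrib] at hsum
  rw [h1, h2] at hsum
  have := choose_two_cast N
  linarith

lemma sum_split (u : Fin N → Fin N → Fin N → ℝ) :
    ∑ j : Fin N, ∑ k : Fin N, ∑ l : Fin N, (if k < l then u j k l else 0)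
    = (∑ j : Fin N, ∑ k : Fin N, ∑ l : Fin N,
        (if k < l ∧ j ≠ k ∧ j ≠ l then u j k l else 0))
    + ∑ j : Fin N, ∑ k : Fin N, ∑ l : Fin N,
        (if k < l ∧ (j = k ∨ j = l) then u j k l else 0) := by
  have key : ∀ j k l : Fin N, (if k < l then u j k l else 0)
      = (if k < l ∧ j ≠ k ∧ j ≠ l then u j k l else 0)
      + (if k < l ∧ (j = k ∨ j = l) then u j k l else 0) := by
    intro j k l
    by_cases h1 : k < l
    · by_cases h2 : j = k ∨ j = l
      · have h3 : ¬ (j ≠ k ∧ j ≠ l) := by tauto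
        simp [h1, h2, h3]
      · push_neg at h2
        simp [h1, h2.1, h2.2]
    · simp [h1]
  simp only [key, Finset.sum_add_distrib]

lemma sdiag_bound (u : Fin N → Fin N → Fin N → ℝ) (hu : ∀ j k l, |u j k l| ≤ 1) :
    |∑ j : Fin N, ∑ k : Fin N, ∑ l : Fin N,
        (if k < l ∧ (j = k ∨ j = l) then u j k l else 0)| ≤ 2 * (N:ℝ)^2 := by
  have key : ∀ j k l : Fin N, |if k < l ∧ (j = k ∨ j = l) then u j k l else 0|
      ≤ (if j = k then (1:ℝ) else 0) + (if j = l then 1 else 0) := by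
    intro j k l
    by_cases h : k < l ∧ (j = k ∨ j = l)
    · rw [if_pos h]
      rcases h.2 with h2 | h2
      · calc |u j k l| ≤ 1 := hu j k l
          _ ≤ _ := by simp [h2]; positivity
      · calc |u j k l| ≤ 1 := hu j k l
          _ ≤ _ := by simp [h2]; positivity
    · rw [if_neg h]; simp; positivity
  calc |∑ j : Fin N, ∑ k : Fin N, ∑ l : Fin N,
        (if k < l ∧ (j = k ∨ j = l) then u j k l else 0)|
      ≤ ∑ j : Fin N, |∑ k : Fin N, ∑ l : Fin N,
        (if k < l ∧ (j = k ∨ j = l) then u j k l else 0)| := Finset.abs_sum_le_sum_abs _ _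
    _ ≤ ∑ j : Fin N, ∑ k : Fin N, |∑ l : Fin N,
        (if k < l ∧ (j = k ∨ j = l) then u j k l else 0)| :=
        Finset.sum_le_sum (fun j _ => Finset.abs_sum_le_sum_abs _ _)
    _ ≤ ∑ j : Fin N, ∑ k : Fin N, ∑ l : Fin N, |if k < l ∧ (j = k ∨ j = l) then u j k l else 0| :=
        Finset.sum_le_sum (fun j _ => Finset.sum_le_sum
          (fun k _ => Finset.abs_sum_le_sum_abs _ _))
    _ ≤ ∑ j : Fin N, ∑ k : Fin N, ∑ l : Fin N,
        ((if j = k then (1:ℝ) else 0) + (if j = l then 1 else 0)) :=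
        Finset.sum_le_sum (fun j _ => Finset.sum_le_sum (fun k _ => Finset.sum_le_sum
          (fun l _ => key j k l)))
    _ = 2 * (N:ℝ)^2 := by
        have inner : ∀ j k : Fin N, ∑ l : Fin N,
            ((if j = k then (1:ℝ) else 0) + (if j = l then 1 else 0))
            = (N:ℝ) * (if j = k then (1:ℝ) else 0) + 1 := by
          intro j k
          rw [Finset.sum_add_distrib, Finset.sum_const, Finset.card_univ, Fintype.card_fin,
            nsmul_eq_mul, Finset.sum_ite_eq]
          simp
        simp only [inner]
        have inner2 : ∀ j : Fin N, ∑ k : Fin N,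
            ((N:ℝ) * (if j = k then (1:ℝ) else 0) + 1) = (N:ℝ) + (N:ℝ) := by
          intro j
          rw [Finset.sum_add_distrib, ← Finset.mul_sum, Finset.sum_ite_eq, Finset.sum_const,
            Finset.card_univ, Fintype.card_fin, nsmul_eq_mul]
          simp
        simp only [inner2]
        rw [Finset.sum_const, Finset.card_univ, Fintype.card_fin, nsmul_eq_mul]
        ring

lemma dsum_eq (u : Fin N → Fin N → Fin N → ℝ) (husymm : ∀ j k l, u j k l = u j l k) :
    ∑ p ∈ Dset N, u p.1 p.2.1 p.2.2
    = 2 * ∑ j : Fin N, ∑ k : Fin N, ∑ l : Fin N,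
        (if k < l ∧ j ≠ k ∧ j ≠ l then u j k l else 0) := by
  rw [Dset, Finset.sum_filter, Fintype.sum_prod_type]
  have h0 : ∀ j : Fin N, ∑ q : Fin N × Fin N,
      (if j ≠ q.1 ∧ j ≠ q.2 ∧ q.1 ≠ q.2 then u j q.1 q.2 else 0)
      = ∑ k : Fin N, ∑ l : Fin N, (if j ≠ k ∧ j ≠ l ∧ k ≠ l then u j k l else 0) := by
    intro j; rw [Fintype.sum_prod_type]
  simp only [h0]
  have key : ∀ j k l : Fin N, (if j ≠ k ∧ j ≠ l ∧ k ≠ l then u j k l else 0)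
      = (if k < l ∧ j ≠ k ∧ j ≠ l then u j k l else 0)
      + (if l < k ∧ j ≠ k ∧ j ≠ l then u j k l else 0) := by
    intro j k l
    rcases lt_trichotomy k l with h | h | h
    · by_cases h2 : j ≠ k ∧ j ≠ l
      · simp [h, lt_asymm h, ne_of_lt h, h2.1, h2.2]
      · push_neg at h2
        by_cases h3 : j = k
        · simp [h3, h, lt_asymm h]
        · simp [h3, h2 h3, h, lt_asymm h]
    · simp [h, lt_irrefl]
    · by_cases h2 : j ≠ k ∧ j ≠ l
      · simp [h, lt_asymm h, (ne_of_lt h).symm, h2.1, h2.2]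
      · push_neg at h2
        by_cases h3 : j = k
        · simp [h3, h, lt_asymm h]
        · simp [h3, h2 h3, h, lt_asymm h]
  simp only [key, Finset.sum_add_distrib]
  have hswap : ∀ j : Fin N, ∑ k : Fin N, ∑ l : Fin N,
      (if l < k ∧ j ≠ k ∧ j ≠ l then u j k l else 0)
      = ∑ k : Fin N, ∑ l : Fin N, (if k < l ∧ j ≠ k ∧ j ≠ l then u j k l else 0) := by
    intro j
    rw [Finset.sum_comm]
    refine Finset.sum_congr rfl (fun k _ => Finset.sum_congr rfl (fun l _ => ?_))
    rw [husymm j l k]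
    refine if_congr ?_ rfl rfl
    tauto
  simp only [hswap]
  ring

lemma Dset_card_pos (hN3 : 3 ≤ N) : 0 < (Dset N).card := by
  refine Finset.card_pos.mpr ⟨(⟨0, by omega⟩, ⟨1, by omega⟩, ⟨2, by omega⟩), ?_⟩
  rw [Dset, Finset.mem_filter]
  refine ⟨Finset.mem_univ _, ?_, ?_, ?_⟩ <;> simp [Fin.ext_iff]

lemma Dset_card_le (hN1 : 1 ≤ N) :
    ((Dset N).card : ℝ) ≤ (N:ℝ) * ((N:ℝ) * (N:ℝ) - (N:ℝ)) := by
  have hsub : Dset N ⊆ Finset.univ ×ˢ Finset.univ.offDiag := by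
    intro p hp
    rw [Dset, Finset.mem_filter] at hp
    rw [Finset.mem_product, Finset.mem_offDiag]
    exact ⟨Finset.mem_univ _, Finset.mem_univ _, Finset.mem_univ _, hp.2.2.2⟩
  have hcard : (Dset N).card ≤ N * (N * N - N) := by
    calc (Dset N).card ≤ (Finset.univ ×ˢ (Finset.univ : Finset (Fin N)).offDiag).card :=
        Finset.card_le_card hsub
      _ = N * (N * N - N) := by
        rw [Finset.card_product, Finset.offDiag_card, Finset.card_univ, Fintype.card_fin]
  calc ((Dset N).card : ℝ) ≤ ((N * (N * N - N) : ℕ) : ℝ) := by exact_mod_cast hcard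
    _ = (N:ℝ) * ((N:ℝ) * (N:ℝ) - (N:ℝ)) := by
        have h : N ≤ N * N := Nat.le_mul_of_pos_left N (by omega)
        push_cast [Nat.cast_sub h]
        ring

end


section
variable {Ω : Type*} [MeasurableSpace Ω] (μ : Measure Ω) [IsProbabilityMeasure μ]
  {N : ℕ} (ξ : Fin N → Ω → (ℝ × ℝ) × ℝ)

/-- The centered kernel term. -/
noncomputable def Tc (j k l : Fin N) (ω : Ω) : ℝ :=
  Fk (ξ j ω) (ξ k ω) (ξ l ω) - ∫ ω', Fk (ξ j ω') (ξ k ω') (ξ l ω') ∂μ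

lemma G_meas (hξm : ∀ j, Measurable (ξ j)) (j k l : Fin N) :
    Measurable (fun ω => Fk (ξ j ω) (ξ k ω) (ξ l ω)) := by
  have h : Measurable (fun ω => (ξ j ω, ξ k ω, ξ l ω)) :=
    (hξm j).prodMk ((hξm k).prodMk (hξm l))
  exact Fk_meas.comp h

lemma G_int (hξm : ∀ j, Measurable (ξ j)) (j k l : Fin N) : Integrable (fun ω => Fk (ξ j ω) (ξ k ω) (ξ l ω)) μ :=
  integrable_of_bound μ (G_meas ξ hξm j k l) 1 (fun ω => by
    rw [abs_of_nonneg (Fk_nonneg _ _ _)]; exact Fk_le_one _ _ _)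

lemma G_integral_mem (hξm : ∀ j, Measurable (ξ j)) (j k l : Fin N) :
    0 ≤ (∫ ω', Fk (ξ j ω') (ξ k ω') (ξ l ω') ∂μ) ∧
      (∫ ω', Fk (ξ j ω') (ξ k ω') (ξ l ω') ∂μ) ≤ 1 := by
  constructor
  · exact integral_nonneg (fun ω => Fk_nonneg _ _ _)
  · calc (∫ ω', Fk (ξ j ω') (ξ k ω') (ξ l ω') ∂μ) ≤ ∫ _, (1:ℝ) ∂μ :=
        integral_mono (G_int μ ξ hξm j k l) (integrable_const 1) (fun ω => Fk_le_one _ _ _)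
      _ = 1 := by simp

lemma Tc_meas (hξm : ∀ j, Measurable (ξ j)) (j k l : Fin N) : Measurable (Tc μ ξ j k l) :=
  (G_meas ξ hξm j k l).sub measurable_const

lemma Tc_abs_le_one (hξm : ∀ j, Measurable (ξ j)) (j k l : Fin N) (ω : Ω) : |Tc μ ξ j k l ω| ≤ 1 := by
  have h1 := Fk_nonneg (ξ j ω) (ξ k ω) (ξ l ω)
  have h2 := Fk_le_one (ξ j ω) (ξ k ω) (ξ l ω)
  have h3 := G_integral_mem μ ξ hξm j k l
  rw [Tc, abs_sub_le_iff]
  constructor <;> linarith [h3.1, h3.2]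

lemma Tc_integral_zero (hξm : ∀ j, Measurable (ξ j)) (j k l : Fin N) : ∫ ω, Tc μ ξ j k l ω ∂μ = 0 := by
  unfold Tc
  rw [integral_sub (G_int μ ξ hξm j k l) (integrable_const _), integral_const]
  simp

lemma Tc_symm (j k l : Fin N) : Tc μ ξ j k l = Tc μ ξ j l k := by
  funext ω; unfold Tc
  rw [Fk_symm]
  congr 1
  refine integral_congr_ae (ae_of_all _ (fun ω' => ?_))
  exact Fk_symm _ _ _

lemma Tc_int (hξm : ∀ j, Measurable (ξ j)) (j k l : Fin N) : Integrable (Tc μ ξ j k l) μ :=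
  integrable_of_bound μ (Tc_meas μ ξ hξm j k l) 1 (Tc_abs_le_one μ ξ hξm j k l)

lemma Tc_mgf_le (hξm : ∀ j, Measurable (ξ j)) (j k l : Fin N) (t : ℝ) : mgf (Tc μ ξ j k l) μ t ≤ exp (t ^ 2 / 2) :=
  mgf_le_of_centered μ (Tc_meas μ ξ hξm j k l) (Tc_abs_le_one μ ξ hξm j k l)
    (Tc_integral_zero μ ξ hξm j k l) t

end

/-- index embedding -/
def idx {N : ℕ} (hN : 0 < N) (n : ℕ) : Fin N := ⟨n % N, Nat.mod_lt _ hN⟩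

section
variable {Ω : Type*} [MeasurableSpace Ω] (μ : Measure Ω) [IsProbabilityMeasure μ]
  {N : ℕ} (ξ : Fin N → Ω → (ℝ × ℝ) × ℝ) (hN : 0 < N)

/-- extension of a tuple on a finset to a total function -/
noncomputable def extT (S : Finset (Fin N)) (v : (i : {x // x ∈ S}) → (ℝ × ℝ) × ℝ)
    (n : Fin N) : (ℝ × ℝ) × ℝ :=
  if h : n ∈ S then v ⟨n, h⟩ else default

lemma extT_meas (S : Finset (Fin N)) (n : Fin N) :
    Measurable (fun v : (i : {x // x ∈ S}) → (ℝ × ℝ) × ℝ => extT S v n) := by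
  unfold extT
  by_cases h : n ∈ S
  · simp only [dif_pos h]; exact measurable_pi_apply _
  · simp only [dif_neg h]; exact measurable_const

lemma indep_partial (hξm : ∀ j, Measurable (ξ j))
    (hξindep : iIndepFun ξ μ) (σ : Equiv.Perm (Fin N)) (k : ℕ) (h3k : 3 * k + 3 ≤ N) :
    IndepFun
      (fun ω => ∑ i ∈ Finset.range k,
        Tc μ ξ (σ (idx hN (3*i))) (σ (idx hN (3*i+1))) (σ (idx hN (3*i+2))) ω)
      (Tc μ ξ (σ (idx hN (3*k))) (σ (idx hN (3*k+1))) (σ (idx hN (3*k+2)))) μ := by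
  classical
  set Sfin : Finset (Fin N) := Finset.univ.filter (fun n => (σ.symm n : ℕ) < 3*k) with hSfin
  set Tfin : Finset (Fin N) :=
    Finset.univ.filter (fun n => 3*k ≤ (σ.symm n : ℕ) ∧ (σ.symm n : ℕ) < 3*k+3) with hTfin
  have hdisj : Disjoint Sfin Tfin := by
    rw [Finset.disjoint_left]
    intro n hn hn'
    simp only [hSfin, hTfin, Finset.mem_filter, Finset.mem_univ, true_and] at hn hn'
    omega
  have base := hξindep.indepFun_finset Sfin Tfin hdisj hξm
  have hmem : ∀ n : ℕ, n < N → ((σ.symm (σ (idx hN n)) : Fin N) : ℕ) = n := by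
    intro n hn
    rw [Equiv.symm_apply_apply]
    simp [idx, Nat.mod_eq_of_lt hn]
  set gS : ((i : {x // x ∈ Sfin}) → (ℝ × ℝ) × ℝ) → ℝ := fun v =>
    ∑ i ∈ Finset.range k,
      (Fk (extT Sfin v (σ (idx hN (3*i)))) (extT Sfin v (σ (idx hN (3*i+1))))
        (extT Sfin v (σ (idx hN (3*i+2)))) -
       ∫ ω', Fk (ξ (σ (idx hN (3*i))) ω') (ξ (σ (idx hN (3*i+1))) ω')
        (ξ (σ (idx hN (3*i+2))) ω') ∂μ) with hgS
  set gT : ((i : {x // x ∈ Tfin}) → (ℝ × ℝ) × ℝ) → ℝ := fun v =>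
      (Fk (extT Tfin v (σ (idx hN (3*k)))) (extT Tfin v (σ (idx hN (3*k+1))))
        (extT Tfin v (σ (idx hN (3*k+2)))) -
       ∫ ω', Fk (ξ (σ (idx hN (3*k))) ω') (ξ (σ (idx hN (3*k+1))) ω')
        (ξ (σ (idx hN (3*k+2))) ω') ∂μ) with hgT
  have hgSm : Measurable gS := by
    refine Finset.measurable_sum _ (fun i _ => ?_)
    exact (Fk_meas.comp ((extT_meas _ _).prodMk
      ((extT_meas _ _).prodMk (extT_meas _ _)))).sub measurable_const
  have hgTm : Measurable gT :=
    (Fk_meas.comp ((extT_meas _ _).prodMk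
      ((extT_meas _ _).prodMk (extT_meas _ _)))).sub measurable_const
  have hcomp := base.comp hgSm hgTm
  have hmemS : ∀ n : ℕ, n < 3*k → σ (idx hN n) ∈ Sfin := by
    intro n hn
    simp only [hSfin, Finset.mem_filter, Finset.mem_univ, true_and]
    rw [hmem n (by omega)]; exact hn
  have hmemT : ∀ n : ℕ, 3*k ≤ n → n < 3*k+3 → σ (idx hN n) ∈ Tfin := by
    intro n hn hn'
    simp only [hTfin, Finset.mem_filter, Finset.mem_univ, true_and]
    rw [hmem n (by omega)]; exact ⟨hn, hn'⟩
  have hES : (gS ∘ fun ω (i : {x // x ∈ Sfin}) => ξ i ω) =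
      (fun ω => ∑ i ∈ Finset.range k,
        Tc μ ξ (σ (idx hN (3*i))) (σ (idx hN (3*i+1))) (σ (idx hN (3*i+2))) ω) := by
    funext ω
    simp only [Function.comp_apply, hgS]
    refine Finset.sum_congr rfl (fun i hi => ?_)
    rw [Finset.mem_range] at hi
    unfold Tc
    congr 1
    rw [extT, extT, extT, dif_pos (hmemS _ (by omega)), dif_pos (hmemS _ (by omega)),
      dif_pos (hmemS _ (by omega))]
  have hET : (gT ∘ fun ω (i : {x // x ∈ Tfin}) => ξ i ω) =
      Tc μ ξ (σ (idx hN (3*k))) (σ (idx hN (3*k+1))) (σ (idx hN (3*k+2))) := by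
    funext ω
    simp only [Function.comp_apply, hgT]
    unfold Tc
    congr 1
    rw [extT, extT, extT, dif_pos (hmemT _ (by omega) (by omega)),
      dif_pos (hmemT _ (by omega) (by omega)), dif_pos (hmemT _ (by omega) (by omega))]
  rwa [hES, hET] at hcomp

lemma mgf_blocks (hξm : ∀ j, Measurable (ξ j))
    (hξindep : iIndepFun ξ μ) (σ : Equiv.Perm (Fin N)) (m : ℕ) (hm : 3 * m ≤ N) (t : ℝ) :
    mgf (fun ω => ∑ i ∈ Finset.range m,
        Tc μ ξ (σ (idx hN (3*i))) (σ (idx hN (3*i+1))) (σ (idx hN (3*i+2))) ω) μ t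
      ≤ exp (m * (t ^ 2 / 2)) := by
  induction m with
  | zero =>
      simp only [Finset.range_zero, Finset.sum_empty, Nat.cast_zero, zero_mul, Real.exp_zero]
      calc mgf (fun _ : Ω => (0:ℝ)) μ t = exp (t * 0) := mgf_const 0
        _ ≤ 1 := by simp
  | succ k ih =>
      have hm' : 3 * k ≤ N := by omega
      have h3k : 3 * k + 3 ≤ N := by omega
      have hsplit : (fun ω => ∑ i ∈ Finset.range (k+1),
          Tc μ ξ (σ (idx hN (3*i))) (σ (idx hN (3*i+1))) (σ (idx hN (3*i+2))) ω) =
          (fun ω => ∑ i ∈ Finset.range k,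
            Tc μ ξ (σ (idx hN (3*i))) (σ (idx hN (3*i+1))) (σ (idx hN (3*i+2))) ω) +
          Tc μ ξ (σ (idx hN (3*k))) (σ (idx hN (3*k+1))) (σ (idx hN (3*k+2))) := by
        funext ω; exact Finset.sum_range_succ _ _
      rw [hsplit]
      have hindep := indep_partial μ ξ hN hξm hξindep σ k h3k
      have haesm1 : AEStronglyMeasurable (fun ω => ∑ i ∈ Finset.range k,
          Tc μ ξ (σ (idx hN (3*i))) (σ (idx hN (3*i+1))) (σ (idx hN (3*i+2))) ω) μ := by
        refine Measurable.aestronglyMeasurable ?_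
        exact Finset.measurable_sum _ (fun i _ => Tc_meas μ ξ hξm _ _ _)
      have haesm2 : AEStronglyMeasurable
          (Tc μ ξ (σ (idx hN (3*k))) (σ (idx hN (3*k+1))) (σ (idx hN (3*k+2)))) μ :=
        (Tc_meas μ ξ hξm _ _ _).aestronglyMeasurable
      rw [hindep.mgf_add' haesm1 haesm2]
      calc mgf _ μ t * mgf _ μ t
          ≤ exp (k * (t ^ 2 / 2)) * exp (t ^ 2 / 2) :=
            mul_le_mul (ih hm') (Tc_mgf_le μ ξ hξm _ _ _ t) mgf_nonneg (exp_nonneg _)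
        _ = exp ((k + 1 : ℕ) * (t ^ 2 / 2)) := by
            rw [← Real.exp_add]; congr 1; push_cast; ring

end


section
variable {Ω : Type*} [MeasurableSpace Ω] (μ : Measure Ω) [IsProbabilityMeasure μ]
  {N : ℕ} (ξ : Fin N → Ω → (ℝ × ℝ) × ℝ) (hN : 0 < N)

/-- the auxiliary average variable A''. -/
noncomputable def Avar (m : ℕ) : Ω → ℝ := fun ω =>
  ((m:ℝ) * (N.factorial:ℝ))⁻¹ * ∑ σ : Equiv.Perm (Fin N), ∑ i ∈ Finset.range m,
    Tc μ ξ (σ (idx hN (3*i))) (σ (idx hN (3*i+1))) (σ (idx hN (3*i+2))) ω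

lemma Yb_meas (hξm : ∀ j, Measurable (ξ j)) (σ : Equiv.Perm (Fin N)) (m : ℕ) :
    Measurable (fun ω => ∑ i ∈ Finset.range m,
      Tc μ ξ (σ (idx hN (3*i))) (σ (idx hN (3*i+1))) (σ (idx hN (3*i+2))) ω) :=
  Finset.measurable_sum _ (fun i _ => Tc_meas μ ξ hξm _ _ _)

lemma Yb_abs (hξm : ∀ j, Measurable (ξ j)) (σ : Equiv.Perm (Fin N)) (m : ℕ) (ω : Ω) :
    |∑ i ∈ Finset.range m,
      Tc μ ξ (σ (idx hN (3*i))) (σ (idx hN (3*i+1))) (σ (idx hN (3*i+2))) ω| ≤ m := by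
  calc |∑ i ∈ Finset.range m,
      Tc μ ξ (σ (idx hN (3*i))) (σ (idx hN (3*i+1))) (σ (idx hN (3*i+2))) ω|
      ≤ ∑ i ∈ Finset.range m,
        |Tc μ ξ (σ (idx hN (3*i))) (σ (idx hN (3*i+1))) (σ (idx hN (3*i+2))) ω| :=
        Finset.abs_sum_le_sum_abs _ _
    _ ≤ ∑ _i ∈ Finset.range m, (1:ℝ) :=
        Finset.sum_le_sum (fun i _ => Tc_abs_le_one μ ξ hξm _ _ _ ω)
    _ = m := by simp

lemma Avar_meas (hξm : ∀ j, Measurable (ξ j)) (m : ℕ) : Measurable (Avar μ ξ hN m) :=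
  (Finset.measurable_sum _ (fun σ _ => Yb_meas μ ξ hN hξm σ m)).const_mul _

lemma Avar_abs (hξm : ∀ j, Measurable (ξ j)) (m : ℕ) (ω : Ω) :
    |Avar μ ξ hN m ω| ≤ ((m:ℝ) * (N.factorial:ℝ))⁻¹ * ((N.factorial : ℝ) * m) := by
  rw [Avar, abs_mul, abs_inv]
  rw [abs_of_nonneg (by positivity : (0:ℝ) ≤ (m:ℝ) * (N.factorial:ℝ))]
  refine mul_le_mul_of_nonneg_left ?_ (by positivity)
  calc |∑ σ : Equiv.Perm (Fin N), ∑ i ∈ Finset.range m,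
        Tc μ ξ (σ (idx hN (3*i))) (σ (idx hN (3*i+1))) (σ (idx hN (3*i+2))) ω|
      ≤ ∑ σ : Equiv.Perm (Fin N), |∑ i ∈ Finset.range m,
        Tc μ ξ (σ (idx hN (3*i))) (σ (idx hN (3*i+1))) (σ (idx hN (3*i+2))) ω| :=
        Finset.abs_sum_le_sum_abs _ _
    _ ≤ ∑ _σ : Equiv.Perm (Fin N), (m:ℝ) :=
        Finset.sum_le_sum (fun σ _ => Yb_abs μ ξ hN hξm σ m ω)
    _ = (N.factorial : ℝ) * m := by
        rw [Finset.sum_const, Finset.card_univ, Fintype.card_perm, Fintype.card_fin,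
          nsmul_eq_mul]

lemma mgf_Avar (hξm : ∀ j, Measurable (ξ j)) (hξindep : iIndepFun ξ μ) (m : ℕ) (hm : 3 * m ≤ N)
    (hm0 : 0 < m) (t' : ℝ) :
    mgf (Avar μ ξ hN m) μ ((m:ℝ) * t') ≤ exp ((m:ℝ) * (t' ^ 2 / 2)) := by
  classical
  set Yb : Equiv.Perm (Fin N) → Ω → ℝ := fun σ ω => ∑ i ∈ Finset.range m,
    Tc μ ξ (σ (idx hN (3*i))) (σ (idx hN (3*i+1))) (σ (idx hN (3*i+2))) ω with hYb
  have hNf : (0:ℝ) < (N.factorial : ℝ) := by exact_mod_cast N.factorial_pos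
  have hmR : (0:ℝ) < (m:ℝ) := by exact_mod_cast hm0
  have hw1 : ∑ _σ : Equiv.Perm (Fin N), ((N.factorial : ℝ))⁻¹ = 1 := by
    rw [Finset.sum_const, Finset.card_univ, Fintype.card_perm, Fintype.card_fin,
      nsmul_eq_mul, mul_inv_cancel₀ hNf.ne']
  have hpt : ∀ ω, exp (((m:ℝ) * t') * Avar μ ξ hN m ω)
      ≤ ∑ σ : Equiv.Perm (Fin N), ((N.factorial : ℝ))⁻¹ * exp (t' * Yb σ ω) := by
    intro ω
    have harg : ((m:ℝ) * t') * Avar μ ξ hN m ω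
        = ∑ σ : Equiv.Perm (Fin N), ((N.factorial : ℝ))⁻¹ • (t' * Yb σ ω) := by
      simp only [smul_eq_mul, Avar, ← Finset.mul_sum, hYb]
      field_simp
    rw [harg]
    have := convexOn_exp.map_sum_le (t := Finset.univ)
      (w := fun _ : Equiv.Perm (Fin N) => ((N.factorial : ℝ))⁻¹)
      (p := fun σ => t' * Yb σ ω) (fun _ _ => by positivity) hw1 (fun _ _ => Set.mem_univ _)
    simpa only [smul_eq_mul] using this
  have hint1 : Integrable (fun ω => exp (((m:ℝ) * t') * Avar μ ξ hN m ω)) μ :=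
    int_exp_bound μ (Avar_meas μ ξ hN hξm m) _ _ (Avar_abs μ ξ hN hξm m)
  have hint2 : Integrable (fun ω => ∑ σ : Equiv.Perm (Fin N),
      ((N.factorial : ℝ))⁻¹ * exp (t' * Yb σ ω)) μ := by
    refine integrable_finset_sum _ (fun σ _ => ?_)
    exact (int_exp_bound μ (Yb_meas μ ξ hN hξm σ m) t' m (Yb_abs μ ξ hN hξm σ m)).const_mul _
  calc mgf (Avar μ ξ hN m) μ ((m:ℝ) * t')
      = ∫ ω, exp (((m:ℝ) * t') * Avar μ ξ hN m ω) ∂μ := rfl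
    _ ≤ ∫ ω, (∑ σ : Equiv.Perm (Fin N), ((N.factorial : ℝ))⁻¹ * exp (t' * Yb σ ω)) ∂μ :=
        integral_mono hint1 hint2 hpt
    _ = ∑ σ : Equiv.Perm (Fin N), ((N.factorial : ℝ))⁻¹ * ∫ ω, exp (t' * Yb σ ω) ∂μ := by
        rw [integral_finset_sum _ (fun σ _ => (int_exp_bound μ (Yb_meas μ ξ hN hξm σ m) t' m
          (Yb_abs μ ξ hN hξm σ m)).const_mul _)]
        exact Finset.sum_congr rfl (fun σ _ => integral_const_mul _ _)
    _ ≤ ∑ _σ : Equiv.Perm (Fin N), ((N.factorial : ℝ))⁻¹ * exp ((m:ℝ) * (t' ^ 2 / 2)) := by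
        refine Finset.sum_le_sum (fun σ _ => ?_)
        refine mul_le_mul_of_nonneg_left ?_ (by positivity)
        exact mgf_blocks μ ξ hN hξm hξindep σ m hm t'
    _ = exp ((m:ℝ) * (t' ^ 2 / 2)) := by rw [← Finset.sum_mul, hw1, one_mul]

lemma chernoff_Avar (hξm : ∀ j, Measurable (ξ j)) (hξindep : iIndepFun ξ μ) (m : ℕ)
    (hm : 3 * m ≤ N) (hm0 : 0 < m) (ε : ℝ) (hε : 0 ≤ ε) :
    (μ {ω | ε ≤ Avar μ ξ hN m ω}).toReal ≤ exp (-(m:ℝ) * ε ^ 2 / 2) := by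
  have hmR : (0:ℝ) ≤ (m:ℝ) := by positivity
  have h := measure_ge_le_exp_mul_mgf (μ := μ) (X := Avar μ ξ hN m) (t := (m:ℝ) * ε) ε
    (by positivity)
    (int_exp_bound μ (Avar_meas μ ξ hN hξm m) _ _ (Avar_abs μ ξ hN hξm m))
  refine h.trans ?_
  calc exp (-((m:ℝ) * ε) * ε) * mgf (Avar μ ξ hN m) μ ((m:ℝ) * ε)
      ≤ exp (-((m:ℝ) * ε) * ε) * exp ((m:ℝ) * (ε ^ 2 / 2)) :=
        mul_le_mul_of_nonneg_left (mgf_Avar μ ξ hN hξm hξindep m hm hm0 ε) (exp_nonneg _)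
    _ = exp (-(m:ℝ) * ε ^ 2 / 2) := by rw [← Real.exp_add]; congr 1; ring

lemma Avar_eq (m : ℕ) (hm0 : 0 < m) (hm : 3 * m ≤ N) (ω : Ω) :
    Avar μ ξ hN m ω = (∑ p ∈ Dset N, Tc μ ξ p.1 p.2.1 p.2.2 ω) / ((Dset N).card : ℝ) := by
  classical
  have hNf : (0:ℝ) < (N.factorial : ℝ) := by exact_mod_cast N.factorial_pos
  have hmR : (0:ℝ) < (m:ℝ) := by exact_mod_cast hm0
  -- the key identity
  have key : ((Dset N).card : ℝ) * (∑ σ : Equiv.Perm (Fin N), ∑ i ∈ Finset.range m,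
      Tc μ ξ (σ (idx hN (3*i))) (σ (idx hN (3*i+1))) (σ (idx hN (3*i+2))) ω)
      = (m:ℝ) * (N.factorial : ℝ) * ∑ p ∈ Dset N, Tc μ ξ p.1 p.2.1 p.2.2 ω := by
    rw [Finset.sum_comm, Finset.mul_sum]
    have hstep : ∀ i ∈ Finset.range m, ((Dset N).card : ℝ) *
        (∑ σ : Equiv.Perm (Fin N),
          Tc μ ξ (σ (idx hN (3*i))) (σ (idx hN (3*i+1))) (σ (idx hN (3*i+2))) ω)
        = (N.factorial : ℝ) * ∑ p ∈ Dset N, Tc μ ξ p.1 p.2.1 p.2.2 ω := by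
      intro i hi
      rw [Finset.mem_range] at hi
      have h2 : 3*i+2 < N := by omega
      have hval : ∀ n : ℕ, n < N → (idx hN n).val = n := fun n hn => by
        simp [idx, Nat.mod_eq_of_lt hn]
      have hne : ∀ p q : ℕ, p < N → q < N → p ≠ q → idx hN p ≠ idx hN q := by
        intro p q hp hq hpq h
        apply hpq
        have h2 := congrArg Fin.val h
        rwa [hval p hp, hval q hq] at h2
      have hab : idx hN (3*i) ≠ idx hN (3*i+1) := hne _ _ (by omega) (by omega) (by omega)
      have hac : idx hN (3*i) ≠ idx hN (3*i+2) := hne _ _ (by omega) (by omega) (by omega)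
      have hbc : idx hN (3*i+1) ≠ idx hN (3*i+2) := hne _ _ (by omega) (by omega) (by omega)
      obtain ⟨K, hK1, hK2⟩ := perm_triple_sum (idx hN (3*i)) (idx hN (3*i+1)) (idx hN (3*i+2))
        hab hac hbc
      rw [hK2 (fun x y z => Tc μ ξ x y z ω)]
      rw [nsmul_eq_mul, ← mul_assoc]
      congr 1
      rw [← Nat.cast_mul, Nat.mul_comm]
      exact Nat.cast_inj.mpr hK1
    rw [Finset.sum_congr rfl hstep, Finset.sum_const, Finset.card_range, nsmul_eq_mul,
      ← mul_assoc]
  have hQ : (0:ℝ) < ((Dset N).card : ℝ) := by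
    have : (Dset N).card ≠ 0 := by
      intro h0
      have h2 : 3*0+2 < N := by omega
      -- factorial positive but K * 0 = N!
      have h3 : 3 ≤ N := by omega
      have hab : (⟨0, by omega⟩ : Fin N) ≠ ⟨1, by omega⟩ := by simp
      have hac : (⟨0, by omega⟩ : Fin N) ≠ ⟨2, by omega⟩ := by simp
      have hbc : (⟨1, by omega⟩ : Fin N) ≠ ⟨2, by omega⟩ := by simp
      obtain ⟨K, hK1, _⟩ := perm_triple_sum _ _ _ hab hac hbc
      rw [h0, mul_zero] at hK1
      exact (Nat.factorial_pos N).ne' hK1.symm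
    exact_mod_cast Nat.pos_of_ne_zero this
  rw [Avar]
  rw [eq_div_iff hQ.ne']
  field_simp
  linarith [key]
end


section
variable {Ω : Type*} [MeasurableSpace Ω] (μ : Measure Ω) [IsProbabilityMeasure μ]
  {N : ℕ} (ξ : Fin N → Ω → (ℝ × ℝ) × ℝ)

lemma aterm_eq (ω : Ω) : Aterm μ ξ ω
    = ((N : ℝ) * (N.choose 2 : ℝ))⁻¹ *
      ∑ j : Fin N, ∑ k : Fin N, ∑ l : Fin N, (if k < l then Tc μ ξ j k l ω else 0) := by
  rw [Aterm]
  congr 1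
  refine Finset.sum_congr rfl (fun j _ => ?_)
  rw [Finset.sum_filter, Fintype.sum_prod_type]
  rfl

lemma aterm_abs (hξm : ∀ j, Measurable (ξ j)) (ω : Ω) : |Aterm μ ξ ω| ≤ 1 := by
  rw [aterm_eq, abs_mul]
  have hc : |((N : ℝ) * (N.choose 2 : ℝ))⁻¹| = ((N : ℝ) * (N.choose 2 : ℝ))⁻¹ := by
    rw [abs_of_nonneg]; positivity
  rw [hc]
  have hS : |∑ j : Fin N, ∑ k : Fin N, ∑ l : Fin N, (if k < l then Tc μ ξ j k l ω else 0)|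
      ≤ (N:ℝ) * (N.choose 2 : ℝ) := by
    calc |∑ j : Fin N, ∑ k : Fin N, ∑ l : Fin N, (if k < l then Tc μ ξ j k l ω else 0)|
        ≤ ∑ j : Fin N, ∑ k : Fin N, ∑ l : Fin N, |if k < l then Tc μ ξ j k l ω else 0| := by
          refine (Finset.abs_sum_le_sum_abs _ _).trans (Finset.sum_le_sum (fun j _ => ?_))
          refine (Finset.abs_sum_le_sum_abs _ _).trans (Finset.sum_le_sum (fun k _ => ?_))
          exact Finset.abs_sum_le_sum_abs _ _
      _ ≤ ∑ j : Fin N, ∑ k : Fin N, ∑ l : Fin N, (if k < l then (1:ℝ) else 0) := by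
          refine Finset.sum_le_sum (fun j _ => Finset.sum_le_sum (fun k _ =>
            Finset.sum_le_sum (fun l _ => ?_)))
          by_cases h : k < l
          · simpa [h] using Tc_abs_le_one μ ξ hξm j k l ω
          · simp [h]
      _ = (N:ℝ) * (N.choose 2 : ℝ) := by
          rw [Finset.sum_congr rfl (fun (j : Fin N) _ => W_eq), Finset.sum_const,
            Finset.card_univ, Fintype.card_fin, nsmul_eq_mul]
  calc ((N : ℝ) * (N.choose 2 : ℝ))⁻¹ *
        |∑ j : Fin N, ∑ k : Fin N, ∑ l : Fin N, (if k < l then Tc μ ξ j k l ω else 0)|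
      ≤ ((N : ℝ) * (N.choose 2 : ℝ))⁻¹ * ((N:ℝ) * (N.choose 2 : ℝ)) :=
        mul_le_mul_of_nonneg_left hS (by positivity)
    _ ≤ 1 := by
        rcases eq_or_ne ((N : ℝ) * (N.choose 2 : ℝ)) 0 with h | h
        · rw [h]; simp
        · rw [inv_mul_cancel₀ h]

end
end Stmt6Aux

open Stmt6Aux in
/-- **Bound for the term A.** In the pick-freeze setting with real output,
with `(Z_j, Z_j^ν)`, `j = 1,…,N`, i.i.d. copies of `(Z, Z^ν)` and `W₁,…,W_N` i.i.d. copies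
of `Z` independent of them, for every `s > 0`, `P(A_N > 2s) ≤ 2 exp(-N s² / 8)`. -/
theorem stmt6 {Ω : Type*} [MeasurableSpace Ω] (μ : Measure Ω) [IsProbabilityMeasure μ]
    {d : ℕ} (X X' : Ω → Fin d → ℝ)
    (hX : Measurable X) (hX' : Measurable X')
    (hcoord : iIndepFun (fun i ω => X ω i) μ)
    (hXX' : IndepFun X X' μ) (hid : IdentDistrib X' X μ μ)
    (ν : Finset (Fin d)) (f : (Fin d → ℝ) → ℝ) (hf : Measurable f)
    (Z Zν : Ω → ℝ)
    (hZ : Z = fun ω => f (X ω))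
    (hZν : Zν = fun ω => f (fun i => if i ∈ ν then X ω i else X' ω i))
    {N : ℕ} (ξ : Fin N → Ω → (ℝ × ℝ) × ℝ) (hξm : ∀ j, Measurable (ξ j))
    (hξindep : iIndepFun ξ μ)
    (hξlaw : ∀ j, μ.map (ξ j) = (μ.map (fun ω => (Z ω, Zν ω))).prod (μ.map Z)) :
    ∀ s : ℝ, 0 < s →
      (μ {ω | Aterm μ ξ ω > 2 * s}).toReal ≤ 2 * Real.exp (-((N : ℝ) * s ^ 2) / 8) := by
  intro s hs
  set E := Real.exp (-((N : ℝ) * s ^ 2) / 8) with hEdef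
  have hEpos : 0 < E := Real.exp_pos _
  by_cases hE : 1 ≤ 2 * E
  · -- trivial case: the bound is at least one
    refine le_trans ?_ hE
    calc (μ {ω | Aterm μ ξ ω > 2 * s}).toReal ≤ (μ Set.univ).toReal :=
        ENNReal.toReal_mono (measure_ne_top _ _) (measure_mono (Set.subset_univ _))
      _ = 1 := by simp
  push_neg at hE
  by_cases hs2 : 1/2 < s
  · -- A is bounded by 1 < 2s, so the event is empty
    have hempty : {ω | Aterm μ ξ ω > 2 * s} = ∅ := by
      ext ω
      simp only [Set.mem_setOf_eq, Set.mem_empty_iff_false, iff_false, not_lt]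
      have h1 := aterm_abs μ ξ hξm ω
      have h2 := le_of_abs_le h1
      linarith
    rw [hempty]
    simp only [measure_empty, ENNReal.toReal_zero]
    positivity
  push_neg at hs2
  -- numeric facts
  have hlog2 : (0.6931471803 : ℝ) < Real.log 2 := Real.log_two_gt_d9
  have hlog : 8 * Real.log 2 < (N:ℝ) * s^2 := by
    have h1 : E < 1/2 := by linarith
    have h2 : Real.exp (-((N : ℝ) * s ^ 2) / 8) < Real.exp (-Real.log 2) := by
      rw [Real.exp_neg, Real.exp_log two_pos]
      exact h1.trans_eq (by norm_num)
    have := Real.exp_lt_exp.mp h2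
    linarith
  have hNnn : (0:ℝ) ≤ (N:ℝ) := Nat.cast_nonneg N
  have hNr : (22:ℝ) < (N:ℝ) := by
    have hs4 : s^2 ≤ 1/4 := by nlinarith
    nlinarith
  have hN23 : 23 ≤ N := by
    have : (22:ℕ) < N := by exact_mod_cast hNr
    omega
  have hNs : 16 * Real.log 2 < (N:ℝ) * s := by
    have h0 : (0:ℝ) ≤ (N:ℝ) * s := by positivity
    nlinarith
  have hN1s : 8 ≤ ((N:ℝ) - 1) * s := by nlinarith
  have hN : 0 < N := by omega
  set m := N / 3 with hmdef
  have hm0 : 0 < m := by omega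
  have h3m : 3 * m ≤ N := by omega
  have h9m : N ≤ 9 * m := by omega
  -- the inclusion
  have hsub : {ω | Aterm μ ξ ω > 2 * s} ⊆ {ω | 3*s/2 ≤ Avar μ ξ hN m ω} := by
    intro ω hA
    simp only [Set.mem_setOf_eq] at hA ⊢
    set ch := ((N.choose 2 : ℕ) : ℝ) with hchdef
    have hch : 2 * ch = (N:ℝ)^2 - (N:ℝ) := choose_two_cast N
    have hchpos : (0:ℝ) < ch := by nlinarith
    have hNch : (0:ℝ) < (N:ℝ) * ch := by positivity
    set u : Fin N → Fin N → Fin N → ℝ := fun j k l => Tc μ ξ j k l ω with hudef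
    have husymm : ∀ j k l, u j k l = u j l k := fun j k l =>
      congrFun (Tc_symm μ ξ j k l) ω
    have hubdd : ∀ j k l, |u j k l| ≤ 1 := fun j k l => Tc_abs_le_one μ ξ hξm j k l ω
    set Soff := ∑ j : Fin N, ∑ k : Fin N, ∑ l : Fin N,
      (if k < l ∧ j ≠ k ∧ j ≠ l then u j k l else 0) with hSoffdef
    set Sdiag := ∑ j : Fin N, ∑ k : Fin N, ∑ l : Fin N,
      (if k < l ∧ (j = k ∨ j = l) then u j k l else 0) with hSdiagdef
    set S1 := ∑ j : Fin N, ∑ k : Fin N, ∑ l : Fin N, (if k < l then u j k l else 0) with hS1def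
    have hsplit : S1 = Soff + Sdiag := sum_split u
    have hdb : |Sdiag| ≤ 2 * (N:ℝ)^2 := sdiag_bound u hubdd
    have hdb' := abs_le.mp hdb
    have hAe : Aterm μ ξ ω = ((N:ℝ) * ch)⁻¹ * S1 := aterm_eq μ ξ ω
    have hS1 : S1 = (N:ℝ) * ch * Aterm μ ξ ω := by
      rw [hAe]; field_simp
    have hQpos : (0:ℝ) < ((Dset N).card : ℝ) := by
      exact_mod_cast Dset_card_pos (by omega)
    have hQle : ((Dset N).card : ℝ) ≤ (N:ℝ) * ((N:ℝ) * (N:ℝ) - (N:ℝ)) :=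
      Dset_card_le (by omega)
    have hAvar : Avar μ ξ hN m ω = 2 * Soff / ((Dset N).card : ℝ) := by
      rw [Avar_eq μ ξ hN m hm0 h3m ω, dsum_eq u husymm]
    rw [hAvar, le_div_iff₀ hQpos]
    -- key numeric inequality
    have hA' : (N:ℝ) * ch * (2*s) < (N:ℝ) * ch * Aterm μ ξ ω :=
      mul_lt_mul_of_pos_left hA hNch
    have hSoffge : (N:ℝ) * ch * (2*s) - 2*(N:ℝ)^2 < Soff := by
      have : Soff = S1 - Sdiag := by rw [hsplit]; ring
      rw [this, hS1]
      linarith [hdb'.2]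
    have hkey : 3*s/2 * ((Dset N).card : ℝ) ≤ 3*s/2 * ((N:ℝ) * ((N:ℝ)*(N:ℝ) - (N:ℝ))) :=
      mul_le_mul_of_nonneg_left hQle (by positivity)
    refine hkey.trans ?_
    nlinarith [mul_nonneg (by linarith : (0:ℝ) ≤ ((N:ℝ) - 1) * s - 8)
      (by positivity : (0:ℝ) ≤ (N:ℝ)^2), sq_nonneg (N:ℝ)]
  calc (μ {ω | Aterm μ ξ ω > 2 * s}).toReal
      ≤ (μ {ω | 3*s/2 ≤ Avar μ ξ hN m ω}).toReal :=
        ENNReal.toReal_mono (measure_ne_top _ _) (measure_mono hsub)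
    _ ≤ Real.exp (-(m:ℝ) * (3*s/2) ^ 2 / 2) :=
        chernoff_Avar μ ξ hN hξm hξindep m h3m hm0 (3*s/2) (by positivity)
    _ ≤ E := by
        rw [hEdef]
        apply Real.exp_le_exp.mpr
        have h9m' : (N:ℝ) ≤ 9 * (m:ℝ) := by exact_mod_cast h9m
        nlinarith [sq_nonneg s]
    _ ≤ 2 * E := by linarith
end

section
/- (Bound for the term B.) In the pick-freeze setting with real output, let (Z_j, Z_j^ν), j = 1,…,N, be i.i.d. copies of (Z, Z^ν) and W₁,…,W_N i.i.d. copies of Z independent of them. For τ ∈ P_{N,2} set J(Z_j, W_τ) = (1/2)( h_{W_τ}(Z_j) + h_{W_τ}(Z_j^ν) ) and H(Z_i, Z_j, W_τ) = J(Z_i, W_τ) J(Z_j, W_τ), and define B_N = (1/(N²·C(N,2))) Σ_{i=1}^N Σ_{j=1}^N Σ_{τ ∈ P_{N,2}} ( H(Z_i, Z_j, W_τ) − E[ H(Z_i, Z_j, W_τ) ] ). Then for every s > 0, P( B_N > 6s ) ≤ 6 exp( − N s² / 8 ). -/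
open MeasureTheory ProbabilityTheory Real Set

/-- `J(Z_j, W_τ) = (1/2)(h_{W_τ}(Z_j) + h_{W_τ}(Z_j^ν))` where `ξ j = ((Z_j, Z_j^ν), W_j)`
and `τ = (k₁, k₂)` indexes the pair `W_τ = (W_{k₁}, W_{k₂})`. -/
noncomputable def Jterm {Ω : Type*} {N : ℕ} (ξ : Fin N → Ω → (ℝ × ℝ) × ℝ)
    (j : Fin N) (τ : Fin N × Fin N) (ω : Ω) : ℝ :=
  (1 / 2) * (hball ((ξ τ.1 ω).2) ((ξ τ.2 ω).2) ((ξ j ω).1.1) +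
             hball ((ξ τ.1 ω).2) ((ξ τ.2 ω).2) ((ξ j ω).1.2))

/-- `H(Z_i, Z_j, W_τ) = J(Z_i, W_τ) J(Z_j, W_τ)`. -/
noncomputable def Hterm {Ω : Type*} {N : ℕ} (ξ : Fin N → Ω → (ℝ × ℝ) × ℝ)
    (i j : Fin N) (τ : Fin N × Fin N) (ω : Ω) : ℝ :=
  Jterm ξ i τ ω * Jterm ξ j τ ω

/-- The centred term
`B_N = (1/(N²·C(N,2))) Σ_i Σ_j Σ_{τ ∈ P_{N,2}} (H(Z_i,Z_j,W_τ) - E[H(Z_i,Z_j,W_τ)])`. -/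
noncomputable def Bterm {Ω : Type*} [MeasurableSpace Ω] (μ : Measure Ω) {N : ℕ}
    (ξ : Fin N → Ω → (ℝ × ℝ) × ℝ) (ω : Ω) : ℝ :=
  (((N : ℝ)) ^ 2 * (N.choose 2 : ℝ))⁻¹ *
    ∑ i : Fin N, ∑ j : Fin N,
      ∑ τ ∈ Finset.univ.filter (fun p : Fin N × Fin N => p.1 < p.2),
        (Hterm ξ i j τ ω - ∫ ω', Hterm ξ i j τ ω' ∂μ)

lemma hball_nonneg (s t x : ℝ) : 0 ≤ hball s t x := by
  unfold hball; split_ifs <;> norm_num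

lemma hball_le_one (s t x : ℝ) : hball s t x ≤ 1 := by
  unfold hball; split_ifs <;> norm_num

lemma Jterm_nonneg {Ω : Type*} {N : ℕ} (ξ : Fin N → Ω → (ℝ × ℝ) × ℝ) (j τ) (ω : Ω) :
    0 ≤ Jterm ξ j τ ω := by
  unfold Jterm
  have := hball_nonneg ((ξ τ.1 ω).2) ((ξ τ.2 ω).2) ((ξ j ω).1.1)
  have := hball_nonneg ((ξ τ.1 ω).2) ((ξ τ.2 ω).2) ((ξ j ω).1.2)
  linarith

lemma Jterm_le_one {Ω : Type*} {N : ℕ} (ξ : Fin N → Ω → (ℝ × ℝ) × ℝ) (j τ) (ω : Ω) :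
    Jterm ξ j τ ω ≤ 1 := by
  unfold Jterm
  have := hball_le_one ((ξ τ.1 ω).2) ((ξ τ.2 ω).2) ((ξ j ω).1.1)
  have := hball_le_one ((ξ τ.1 ω).2) ((ξ τ.2 ω).2) ((ξ j ω).1.2)
  linarith

lemma Hterm_nonneg {Ω : Type*} {N : ℕ} (ξ : Fin N → Ω → (ℝ × ℝ) × ℝ) (i j τ) (ω : Ω) :
    0 ≤ Hterm ξ i j τ ω :=
  mul_nonneg (Jterm_nonneg ξ i τ ω) (Jterm_nonneg ξ j τ ω)

lemma Hterm_le_one {Ω : Type*} {N : ℕ} (ξ : Fin N → Ω → (ℝ × ℝ) × ℝ) (i j τ) (ω : Ω) :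
    Hterm ξ i j τ ω ≤ 1 :=
  mul_le_one₀ (Jterm_le_one ξ i τ ω) (Jterm_nonneg ξ j τ ω) (Jterm_le_one ξ j τ ω)

/-- version of `Hterm` living on the canonical product space -/
noncomputable def gH {N : ℕ} (i j : Fin N) (τ : Fin N × Fin N)
    (x : Fin N → (ℝ × ℝ) × ℝ) : ℝ :=
  Hterm (fun k (_ : Unit) => x k) i j τ ()

lemma gH_comp {Ω : Type*} {N : ℕ} (ξ : Fin N → Ω → (ℝ × ℝ) × ℝ) (i j τ) (ω : Ω) :
    Hterm ξ i j τ ω = gH i j τ (fun k => ξ k ω) := rfl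

lemma measurable_hball3 : Measurable (fun p : ℝ × ℝ × ℝ => hball p.1 p.2.1 p.2.2) := by
  unfold hball
  refine Measurable.ite ?_ measurable_const measurable_const
  exact MeasurableSet.inter
    (measurableSet_le (measurable_fst.min (measurable_fst.comp measurable_snd))
      (measurable_snd.comp measurable_snd))
    (measurableSet_le (measurable_snd.comp measurable_snd)
      (measurable_fst.max (measurable_fst.comp measurable_snd)))

lemma measurable_gH {N : ℕ} (i j : Fin N) (τ : Fin N × Fin N) :
    Measurable (gH i j τ) := by
  have hb : ∀ (a : Fin N) {sel : (ℝ × ℝ) × ℝ → ℝ}, Measurable sel →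
      Measurable fun x : Fin N → (ℝ × ℝ) × ℝ =>
        hball ((x τ.1).2) ((x τ.2).2) (sel (x a)) := by
    intro a sel hsel
    exact measurable_hball3.comp (((measurable_pi_apply τ.1).snd).prodMk
      (((measurable_pi_apply τ.2).snd).prodMk (hsel.comp (measurable_pi_apply a))))
  have hJ : ∀ a : Fin N,
      Measurable fun x : Fin N → (ℝ × ℝ) × ℝ => Jterm (fun k (_ : Unit) => x k) a τ () := by
    intro a
    unfold Jterm
    exact ((hb a (measurable_fst.fst)).add (hb a (measurable_fst.snd))).const_mul _
  unfold gH Hterm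
  exact (hJ i).mul (hJ j)

lemma gH_congr {N : ℕ} (i j : Fin N) (τ : Fin N × Fin N) {x y : Fin N → (ℝ × ℝ) × ℝ}
    (hi : x i = y i) (hj : x j = y j) (h1 : x τ.1 = y τ.1) (h2 : x τ.2 = y τ.2) :
    gH i j τ x = gH i j τ y := by
  unfold gH Hterm Jterm
  simp only []
  rw [hi, hj, h1, h2]

/-- the joint law of independent random variables is the product of the laws -/
lemma map_eq_pi {Ω E : Type*} [MeasurableSpace Ω] [MeasurableSpace E]
    (μ : Measure Ω) [IsProbabilityMeasure μ] {N : ℕ}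
    (ξ : Fin N → Ω → E) (hm : ∀ i, Measurable (ξ i))
    (hind : iIndepFun ξ μ) :
    μ.map (fun ω i => ξ i ω) = Measure.pi (fun i => μ.map (ξ i)) := by
  refine (Measure.pi_eq fun s hs => ?_).symm
  rw [Measure.map_apply (measurable_pi_iff.2 hm) (MeasurableSet.univ_pi hs)]
  have hpre : (fun ω i => ξ i ω) ⁻¹' (Set.pi Set.univ s) = ⋂ i ∈ Finset.univ, ξ i ⁻¹' s i := by
    ext ω; simp [Set.mem_univ_pi]
  rw [hpre, hind.measure_inter_preimage_eq_mul Finset.univ (fun i _ => hs i)]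
  exact Finset.prod_congr rfl fun i _ => (Measure.map_apply (hm i) (hs i)).symm

lemma card_filter_lt_eq_choose (N : ℕ) :
    (Finset.univ.filter (fun p : Fin N × Fin N => p.1 < p.2)).card = N.choose 2 := by
  classical
  set A := Finset.univ.filter (fun p : Fin N × Fin N => p.1 < p.2) with hA
  set B := Finset.univ.filter (fun p : Fin N × Fin N => p.2 < p.1) with hB
  have hcard : A.card = B.card := by
    refine Finset.card_bij' (fun p _ => p.swap) (fun p _ => p.swap) ?_ ?_ ?_ ?_
    · intro p hp; simp only [hA, hB, Finset.mem_filter, Finset.mem_univ, true_and] at hp ⊢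
      exact hp
    · intro p hp; simp only [hA, hB, Finset.mem_filter, Finset.mem_univ, true_and] at hp ⊢
      exact hp
    · intro p _; simp
    · intro p _; simp
  have hunion : A ∪ B = Finset.univ.filter (fun p : Fin N × Fin N => p.1 ≠ p.2) := by
    rw [hA, hB, ← Finset.filter_or]
    congr 1
    ext p
    constructor
    · rintro (h | h) <;> [exact ne_of_lt h; exact (ne_of_lt h).symm]
    · intro h; exact lt_or_gt_of_ne h
  have hdisj : Disjoint A B := by
    rw [Finset.disjoint_left]
    intro p hpA hpB
    simp only [hA, hB, Finset.mem_filter, Finset.mem_univ, true_and] at hpA hpB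
    exact absurd hpA (not_lt_of_gt hpB)
  have hoff : Finset.univ.offDiag = Finset.univ.filter (fun p : Fin N × Fin N => p.1 ≠ p.2) := by
    ext p
    simp [Finset.mem_offDiag]
  have hoffcard : (Finset.univ.filter (fun p : Fin N × Fin N => p.1 ≠ p.2)).card = N * N - N := by
    rw [← hoff, Finset.offDiag_card]
    simp [Fintype.card_fin]
  have h2A : 2 * A.card = N * N - N := by
    have := Finset.card_union_of_disjoint hdisj
    rw [hunion, hoffcard] at this
    omega
  have hch : 2 * N.choose 2 = N * N - N := by
    rw [Nat.choose_two_right]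
    rcases N with _ | m
    · simp
    · have heven : 2 ∣ (m + 1) * m := by
        rcases Nat.even_or_odd m with he | ho
        · exact Dvd.dvd.mul_left he.two_dvd _
        · exact Dvd.dvd.mul_right (ho.add_one).two_dvd _
      rw [Nat.succ_sub_one, Nat.mul_div_cancel' heven]
      have : (m + 1) * (m + 1) = (m + 1) * m + (m + 1) := by ring
      omega
  omega

lemma card_touch_le {N : ℕ} (k : Fin N) :
    ((Finset.univ.filter (fun p : Fin N × Fin N => p.1 < p.2)).filter
      (fun p => p.1 = k ∨ p.2 = k)).card ≤ N - 1 := by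
  classical
  have hle := Finset.card_le_card_of_injOn
    (s := (Finset.univ.filter (fun p : Fin N × Fin N => p.1 < p.2)).filter
      (fun p => p.1 = k ∨ p.2 = k)) (t := Finset.univ.erase k)
    (fun p : Fin N × Fin N => if p.1 = k then p.2 else p.1) ?_ ?_
  · calc _ ≤ (Finset.univ.erase k).card := hle
      _ = N - 1 := by rw [Finset.card_erase_of_mem (Finset.mem_univ k)]; simp
  · intro p hp
    simp only [Finset.coe_filter, Finset.mem_filter, Finset.mem_univ, true_and,
      Set.mem_setOf_eq] at hp
    obtain ⟨hlt, hor⟩ := hp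
    by_cases h1 : p.1 = k
    · simp only [h1, if_true]
      refine Finset.mem_erase.2 ⟨?_, Finset.mem_univ _⟩
      intro h2
      have e1 : (p.1 : ℕ) = k := congrArg Fin.val h1
      have e2 : (p.2 : ℕ) = k := congrArg Fin.val h2
      have : (p.1 : ℕ) < p.2 := hlt
      omega
    · simp only [h1, if_false]
      exact Finset.mem_erase.2 ⟨h1, Finset.mem_univ _⟩
  · intro p hp q hq hpq
    simp only [Finset.coe_filter, Finset.mem_filter, Finset.mem_univ, true_and,
      Set.mem_setOf_eq] at hp hq
    obtain ⟨hpl, hpo⟩ := hp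
    obtain ⟨hql, hqo⟩ := hq
    have hplv : (p.1 : ℕ) < p.2 := hpl
    have hqlv : (q.1 : ℕ) < q.2 := hql
    by_cases h1 : p.1 = k <;> by_cases h2 : q.1 = k <;>
      simp only [h1, h2, if_true, if_false] at hpq
    · exact Prod.ext (h1.trans h2.symm) hpq
    · exfalso
      have hq2 : q.2 = k := hqo.resolve_left h2
      have e1 : (p.2 : ℕ) = q.1 := congrArg Fin.val hpq
      have e2 : (q.2 : ℕ) = k := congrArg Fin.val hq2
      have e3 : (p.1 : ℕ) = k := congrArg Fin.val h1
      omega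
    · exfalso
      have hp2 : p.2 = k := hpo.resolve_left h1
      have e1 : (p.1 : ℕ) = q.2 := congrArg Fin.val hpq
      have e2 : (p.2 : ℕ) = k := congrArg Fin.val hp2
      have e3 : (q.1 : ℕ) = k := congrArg Fin.val h2
      omega
    · have hp2 : p.2 = k := hpo.resolve_left h1
      have hq2 : q.2 = k := hqo.resolve_left h2
      exact Prod.ext hpq (hp2.trans hq2.symm)


/-- exp is bounded by its 2nd order Taylor-ish polynomial on `[-1,1]`. -/
lemma exp_le_quad {t : ℝ} (ht : |t| ≤ 1) : Real.exp t ≤ 1 + t + (3/4) * t ^ 2 := by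
  have h := Real.exp_bound ht (n := 2) (by norm_num)
  have h2 : ∑ m ∈ Finset.range 2, t ^ m / m.factorial = 1 + t := by
    simp [Finset.sum_range_succ]
  rw [h2] at h
  have := abs_le.1 h
  have hc : |t| ^ 2 * ((2:ℕ).succ / ((2:ℕ).factorial * 2)) = (3/4) * t ^ 2 := by
    rw [sq_abs]; norm_num [Nat.factorial]; ring
  linarith [this.2, hc ▸ this.2]

/-- bounded measurable functions are integrable on finite measures -/
lemma integrable_of_bound {α : Type*} [MeasurableSpace α] {μ : Measure α} [IsFiniteMeasure μ]
    {f : α → ℝ} (hf : Measurable f) (C : ℝ) (hC : ∀ x, |f x| ≤ C) : Integrable f μ :=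
  Integrable.mono' (integrable_const C) hf.aestronglyMeasurable
    (Filter.Eventually.of_forall fun x => by simpa using hC x)

/-- one-step Hoeffding-type bound. -/
lemma step_mgf {α : Type*} [MeasurableSpace α] (ν : Measure α) [IsProbabilityMeasure ν]
    {h : α → ℝ} (hm : Measurable h) (Cb : ℝ) (hCb : ∀ x, |h x| ≤ Cb)
    {c : ℝ} (hc1 : c ≤ 1) (hdev : ∀ x, |h x - ∫ a, h a ∂ν| ≤ c) :
    ∫ x, Real.exp (h x) ∂ν ≤ Real.exp ((∫ a, h a ∂ν) + (3/4) * c ^ 2) := by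
  set m := ∫ a, h a ∂ν with hmdef
  have hint : Integrable h ν := integrable_of_bound hm Cb hCb
  have hintu : Integrable (fun x => h x - m) ν := hint.sub (integrable_const m)
  have hintexp : Integrable (fun x => Real.exp (h x - m)) ν := by
    refine integrable_of_bound (by fun_prop) (Real.exp 1) fun x => ?_
    rw [abs_of_pos (Real.exp_pos _)]
    exact Real.exp_le_exp.2 (le_trans (le_abs_self _) (le_trans (hdev x) hc1))
  have key : ∫ x, Real.exp (h x - m) ∂ν ≤ 1 + (3/4) * c ^ 2 := by
    have hb : ∀ x, Real.exp (h x - m) ≤ 1 + (h x - m) + (3/4) * c ^ 2 := by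
      intro x
      have h1 : |h x - m| ≤ 1 := le_trans (hdev x) hc1
      refine le_trans (exp_le_quad h1) ?_
      have : (h x - m) ^ 2 ≤ c ^ 2 := by
        have := hdev x
        nlinarith [abs_nonneg (h x - m), sq_abs (h x - m), this]
      nlinarith
    have hint2 : Integrable (fun x => 1 + (h x - m) + (3/4) * c ^ 2) ν :=
      ((integrable_const 1).add hintu).add (integrable_const _)
    have hmono := integral_mono hintexp hint2 hb
    calc ∫ x, Real.exp (h x - m) ∂ν
        ≤ ∫ x, (1 + (h x - m) + (3/4) * c ^ 2) ∂ν := hmono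
      _ = 1 + (3/4) * c ^ 2 := by
          have he : (fun x => 1 + (h x - m) + (3/4) * c ^ 2)
              = fun x => h x + (1 + (3/4) * c ^ 2 - m) := by ext x; ring
          rw [he, integral_add hint (integrable_const _), integral_const]
          simp [hmdef]
  have : ∫ x, Real.exp (h x) ∂ν = Real.exp m * ∫ x, Real.exp (h x - m) ∂ν := by
    rw [← integral_const_mul]
    congr 1; ext x; rw [← Real.exp_add]; ring_nf
  rw [this, Real.exp_add]
  have h1 : (0:ℝ) ≤ Real.exp m := (Real.exp_pos m).le
  calc Real.exp m * ∫ x, Real.exp (h x - m) ∂ν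
      ≤ Real.exp m * (1 + (3/4) * c ^ 2) := by
        exact mul_le_mul_of_nonneg_left key h1
    _ ≤ Real.exp m * Real.exp ((3/4) * c ^ 2) := by
        refine mul_le_mul_of_nonneg_left ?_ h1
        linarith [Real.add_one_le_exp ((3/4) * c ^ 2)]

lemma abs_sub_integral_le {α : Type*} [MeasurableSpace α] (ν : Measure α)
    [IsProbabilityMeasure ν] {h : α → ℝ} (hm : Measurable h) (Cb : ℝ) (hCb : ∀ x, |h x| ≤ Cb)
    {c : ℝ} (hd : ∀ x x', |h x - h x'| ≤ c) (x : α) : |h x - ∫ a, h a ∂ν| ≤ c := by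
  have hint : Integrable h ν := integrable_of_bound hm Cb hCb
  have he : h x - ∫ a, h a ∂ν = ∫ a, (h x - h a) ∂ν := by
    rw [integral_sub (integrable_const (h x)) hint, integral_const]; simp
  rw [he]
  calc |∫ a, (h x - h a) ∂ν| ≤ ∫ a, |h x - h a| ∂ν := by
        simpa [Real.norm_eq_abs] using norm_integral_le_integral_norm (fun a => h x - h a) (μ := ν)
    _ ≤ ∫ _a, c ∂ν := integral_mono ((integrable_const (h x)).sub hint).abs
        (integrable_const c) fun a => hd x a
    _ = c := by simp

/-- McDiarmid-type mgf bound on a finite product of probability measures. -/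
lemma mcdiarmid_mgf {E : Type*} [MeasurableSpace E] {c : ℝ} (hc1 : c ≤ 1) :
    ∀ (n : ℕ) (νs : Fin n → Measure E) (_hp : ∀ i, IsProbabilityMeasure (νs i))
      (g : (Fin n → E) → ℝ) (_hg : Measurable g) (Cb : ℝ) (_hgb : ∀ x, |g x| ≤ Cb)
      (_hdiff : ∀ (k : Fin n) (x y : Fin n → E), (∀ i, i ≠ k → x i = y i) → |g x - g y| ≤ c),
      ∫ x, Real.exp (g x) ∂(Measure.pi νs) ≤
        Real.exp ((∫ x, g x ∂(Measure.pi νs)) + n * ((3/4) * c ^ 2)) := by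
  intro n
  induction n with
  | zero =>
    intro νs hp g hg Cb hgb hdiff
    haveI : ∀ i, IsProbabilityMeasure (νs i) := hp
    have hconst : ∀ x : Fin 0 → E, g x = g (fun i => i.elim0) := by
      intro x; congr 1; ext i; exact i.elim0
    have h1 : ∫ x, Real.exp (g x) ∂(Measure.pi νs) = Real.exp (g (fun i => i.elim0)) := by
      rw [show (fun x => Real.exp (g x)) = fun _ => Real.exp (g (fun i => i.elim0)) from
        funext fun x => by rw [hconst x]]
      simp [integral_const]
    have h2 : ∫ x, g x ∂(Measure.pi νs) = g (fun i => i.elim0) := by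
      rw [show g = fun _ => g (fun i => i.elim0) from funext fun x => hconst x]
      simp [integral_const]
    rw [h1, h2]; simp
  | succ n IH =>
    intro νs hp g hg Cb hgb hdiff
    haveI : ∀ i, IsProbabilityMeasure (νs i) := hp
    set T := MeasurableEquiv.piFinSuccAbove (fun _ : Fin (n+1) => E) 0 with hT
    set ν' : Fin n → Measure E := fun j => νs ((0 : Fin (n+1)).succAbove j) with hν'
    haveI : ∀ i, IsProbabilityMeasure (ν' i) := fun i => hp _
    have MP : MeasurePreserving T (Measure.pi νs) ((νs 0).prod (Measure.pi ν')) :=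
      measurePreserving_piFinSuccAbove νs 0
    have hTsymm : ∀ (x : E) (y : Fin n → E), T.symm (x, y) = Fin.insertNth 0 x y := by
      intro x y; rfl
    have hgT : Measurable fun z : E × (Fin n → E) => g (T.symm z) :=
      hg.comp T.symm.measurable
    have hexpb : ∀ z : E × (Fin n → E), |Real.exp (g (T.symm z))| ≤ Real.exp Cb := by
      intro z
      rw [abs_of_pos (Real.exp_pos _)]
      exact Real.exp_le_exp.2 (le_trans (le_abs_self _) (hgb _))
    have hintgT : Integrable (fun z => g (T.symm z)) ((νs 0).prod (Measure.pi ν')) :=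
      integrable_of_bound hgT Cb (fun z => hgb _)
    have hintexpT : Integrable (fun z => Real.exp (g (T.symm z)))
        ((νs 0).prod (Measure.pi ν')) :=
      integrable_of_bound hgT.exp (Real.exp Cb) hexpb
    set G : (Fin n → E) → ℝ := fun y => ∫ x, g (T.symm (x, y)) ∂(νs 0) with hG
    have hGmeas : Measurable G := hgT.stronglyMeasurable.integral_prod_left'.measurable
    -- section measurability in the first variable
    have hsec : ∀ y : Fin n → E, Measurable fun x : E => g (T.symm (x, y)) := by
      intro y
      exact hgT.comp (measurable_prodMk_right)
    have hGb : ∀ y, |G y| ≤ Cb := by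
      intro y
      calc |G y| = ‖∫ x, g (T.symm (x, y)) ∂(νs 0)‖ := (Real.norm_eq_abs _).symm
        _ ≤ ∫ x, ‖g (T.symm (x, y))‖ ∂(νs 0) := norm_integral_le_integral_norm _
        _ ≤ ∫ _x, Cb ∂(νs 0) := by
            refine integral_mono ((integrable_of_bound (hsec y) Cb fun x => hgb _).abs.congr ?_)
              (integrable_const Cb) fun x => by simpa [Real.norm_eq_abs] using hgb (T.symm (x, y))
            exact Filter.Eventually.of_forall fun x => by simp [Real.norm_eq_abs]
        _ = Cb := by simp
    -- agreement of inserted tuples away from a coordinate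
    have hins0 : ∀ (x x' : E) (y : Fin n → E) (i : Fin (n+1)), i ≠ 0 →
        Fin.insertNth (α := fun _ => E) 0 x y i = Fin.insertNth (α := fun _ => E) 0 x' y i := by
      intro x x' y i hi
      rcases Fin.eq_zero_or_eq_succ i with h0 | ⟨j, rfl⟩
      · exact absurd h0 hi
      · rw [show (Fin.succ j) = (0 : Fin (n+1)).succAbove j from rfl,
          Fin.insertNth_apply_succAbove, Fin.insertNth_apply_succAbove]
    have hinsk : ∀ (x : E) (y y' : Fin n → E) (k : Fin n), (∀ i, i ≠ k → y i = y' i) →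
        ∀ i, i ≠ (0 : Fin (n+1)).succAbove k →
          Fin.insertNth (α := fun _ => E) 0 x y i = Fin.insertNth (α := fun _ => E) 0 x y' i := by
      intro x y y' k hk i hi
      rcases Fin.eq_zero_or_eq_succ i with rfl | ⟨j, rfl⟩
      · rw [Fin.insertNth_apply_same, Fin.insertNth_apply_same]
      · rw [show (Fin.succ j) = (0 : Fin (n+1)).succAbove j from rfl,
          Fin.insertNth_apply_succAbove, Fin.insertNth_apply_succAbove]
        refine hk j fun hjk => hi ?_
        rw [hjk, Fin.succAbove_zero]
    -- the one-step bound, for every fixed y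
    have hstep : ∀ y : Fin n → E,
        ∫ x, Real.exp (g (T.symm (x, y))) ∂(νs 0) ≤ Real.exp (G y + (3/4) * c ^ 2) := by
      intro y
      refine step_mgf (νs 0) (hsec y) Cb (fun x => hgb _) hc1 ?_
      refine abs_sub_integral_le (νs 0) (hsec y) Cb (fun x => hgb _) (fun x x' => ?_)
      rw [hTsymm, hTsymm]
      exact hdiff 0 _ _ (hins0 x x' y)
    -- bounded differences for G
    have hGdiff : ∀ (k : Fin n) (y y' : Fin n → E), (∀ i, i ≠ k → y i = y' i) →
        |G y - G y'| ≤ c := by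
      intro k y y' hk
      have hsub : G y - G y' = ∫ x, (g (T.symm (x, y)) - g (T.symm (x, y'))) ∂(νs 0) := by
        rw [integral_sub (integrable_of_bound (hsec y) Cb fun x => hgb _)
          (integrable_of_bound (hsec y') Cb fun x => hgb _)]
      rw [hsub]
      calc |∫ x, (g (T.symm (x, y)) - g (T.symm (x, y'))) ∂(νs 0)|
          ≤ ∫ x, |g (T.symm (x, y)) - g (T.symm (x, y'))| ∂(νs 0) := by
            simpa [Real.norm_eq_abs] using norm_integral_le_integral_norm
              (fun x => g (T.symm (x, y)) - g (T.symm (x, y'))) (μ := νs 0)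
        _ ≤ ∫ _x, c ∂(νs 0) := by
            refine integral_mono ((integrable_of_bound (hsec y) Cb fun x => hgb _).sub
              (integrable_of_bound (hsec y') Cb fun x => hgb _)).abs (integrable_const c)
              fun x => ?_
            rw [hTsymm, hTsymm]
            exact hdiff ((0 : Fin (n+1)).succAbove k) _ _ (hinsk x y y' k hk)
        _ = c := by simp
    -- assemble
    have hpi : ∫ x, Real.exp (g x) ∂(Measure.pi νs)
        = ∫ y, ∫ x, Real.exp (g (T.symm (x, y))) ∂(νs 0) ∂(Measure.pi ν') := by
      rw [← (MP.symm T).integral_comp' (fun x => Real.exp (g x)),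
        integral_prod_symm _ hintexpT]
    have hpig : ∫ x, g x ∂(Measure.pi νs)
        = ∫ y, G y ∂(Measure.pi ν') := by
      rw [← (MP.symm T).integral_comp' g, integral_prod_symm _ hintgT]
    have hIH := IH ν' (fun i => hp _) G hGmeas Cb hGb hGdiff
    have hintinner : Integrable (fun y => ∫ x, Real.exp (g (T.symm (x, y))) ∂(νs 0))
        (Measure.pi ν') := hintexpT.integral_prod_right
    have hintG2 : Integrable (fun y => Real.exp (G y + (3/4) * c ^ 2)) (Measure.pi ν') := by
      refine integrable_of_bound (by fun_prop) (Real.exp (Cb + (3/4) * c ^ 2)) fun y => ?_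
      rw [abs_of_pos (Real.exp_pos _)]
      exact Real.exp_le_exp.2 (by linarith [le_trans (le_abs_self _) (hGb y)])
    calc ∫ x, Real.exp (g x) ∂(Measure.pi νs)
        = ∫ y, ∫ x, Real.exp (g (T.symm (x, y))) ∂(νs 0) ∂(Measure.pi ν') := hpi
      _ ≤ ∫ y, Real.exp (G y + (3/4) * c ^ 2) ∂(Measure.pi ν') :=
          integral_mono hintinner hintG2 hstep
      _ = Real.exp ((3/4) * c ^ 2) * ∫ y, Real.exp (G y) ∂(Measure.pi ν') := by
          rw [← integral_const_mul]
          congr 1; ext y; rw [← Real.exp_add]; ring_nf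
      _ ≤ Real.exp ((3/4) * c ^ 2) *
          Real.exp ((∫ y, G y ∂(Measure.pi ν')) + n * ((3/4) * c ^ 2)) := by
          exact mul_le_mul_of_nonneg_left hIH (Real.exp_pos _).le
      _ = Real.exp ((∫ x, g x ∂(Measure.pi νs)) + (n + 1 : ℕ) * ((3/4) * c ^ 2)) := by
          rw [hpig, ← Real.exp_add]
          congr 1
          push_cast
          ring

set_option maxHeartbeats 1000000 in
/-- **Bound for the term B.** In the pick-freeze setting with real output,
with `(Z_j, Z_j^ν)`, `j = 1,…,N`, i.i.d. copies of `(Z, Z^ν)` and `W₁,…,W_N` i.i.d. copies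
of `Z` independent of them, for every `s > 0`, `P(B_N > 6s) ≤ 6 exp(-N s² / 8)`. -/
theorem stmt7 {Ω : Type*} [MeasurableSpace Ω] (μ : Measure Ω) [IsProbabilityMeasure μ]
    {d : ℕ} (X X' : Ω → Fin d → ℝ)
    (hX : Measurable X) (hX' : Measurable X')
    (hcoord : iIndepFun (fun i ω => X ω i) μ)
    (hXX' : IndepFun X X' μ) (hid : IdentDistrib X' X μ μ)
    (ν : Finset (Fin d)) (f : (Fin d → ℝ) → ℝ) (hf : Measurable f)
    (Z Zν : Ω → ℝ)
    (hZ : Z = fun ω => f (X ω))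
    (hZν : Zν = fun ω => f (fun i => if i ∈ ν then X ω i else X' ω i))
    {N : ℕ} (ξ : Fin N → Ω → (ℝ × ℝ) × ℝ) (hξm : ∀ j, Measurable (ξ j))
    (hξindep : iIndepFun ξ μ)
    (hξlaw : ∀ j, μ.map (ξ j) = (μ.map (fun ω => (Z ω, Zν ω))).prod (μ.map Z)) :
    ∀ s : ℝ, 0 < s →
      (μ {ω | Bterm μ ξ ω > 6 * s}).toReal ≤ 6 * Real.exp (-((N : ℝ) * s ^ 2) / 8) := by
  intro s hs
  have hexp_pos : 0 < 6 * Real.exp (-((N : ℝ) * s ^ 2) / 8) := by positivity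
  -- trivial case `N ≤ 1` : the sum over pairs is empty and `Bterm = 0`
  by_cases hN2 : 2 ≤ N
  swap
  · have hP : Finset.univ.filter (fun p : Fin N × Fin N => p.1 < p.2) = ∅ := by
      ext p
      simp only [Finset.mem_filter, Finset.mem_univ, true_and, Finset.notMem_empty, iff_false]
      intro h
      have h1 : (p.1 : ℕ) < p.2 := h
      have h2 := p.2.isLt
      omega
    have hB0 : ∀ ω, Bterm μ ξ ω = 0 := by
      intro ω; simp [Bterm, hP]
    have hset : {ω | Bterm μ ξ ω > 6 * s} = ∅ := by
      ext ω; simp only [Set.mem_setOf_eq, Set.mem_empty_iff_false, iff_false, hB0 ω]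
      intro h; linarith
    rw [hset]
    simp only [measure_empty, ENNReal.toReal_zero]
    linarith
  -- setup : the canonical product space model
  have hNR : (2 : ℝ) ≤ (N : ℝ) := by exact_mod_cast hN2
  have hN0 : (N : ℝ) ≠ 0 := by linarith
  have hN1 : (N : ℝ) - 1 ≠ 0 := by intro h; nlinarith
  have hchR : ((N.choose 2 : ℕ) : ℝ) = (N : ℝ) * ((N : ℝ) - 1) / 2 := by
    rw [Nat.cast_choose_two]
  have hchne : ((N.choose 2 : ℕ) : ℝ) ≠ 0 := by
    rw [hchR]; intro h
    rcases mul_eq_zero.1 (div_eq_zero_iff.1 h |>.resolve_right (by norm_num)) with h | h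
    · exact hN0 h
    · exact hN1 h
  set P := Finset.univ.filter (fun p : Fin N × Fin N => p.1 < p.2) with hPdef
  have hPcard : (P.card : ℝ) = ((N.choose 2 : ℕ) : ℝ) := by
    exact_mod_cast congrArg (Nat.cast (R := ℝ)) (card_filter_lt_eq_choose N)
  set inv : ℝ := (((N : ℝ)) ^ 2 * (N.choose 2 : ℝ))⁻¹ with hinvdef
  have hinv_pos : 0 < inv := by
    rw [hinvdef]
    apply inv_pos.2
    apply mul_pos (by positivity)
    rw [hchR]; nlinarith
  set cst : Fin N → Fin N → Fin N × Fin N → ℝ :=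
    fun i j τ => ∫ ω', Hterm ξ i j τ ω' ∂μ with hcstdef
  set g : (Fin N → (ℝ × ℝ) × ℝ) → ℝ :=
    fun x => inv * ∑ i : Fin N, ∑ j : Fin N, ∑ τ ∈ P, (gH i j τ x - cst i j τ) with hgdef
  have hBg : ∀ ω, Bterm μ ξ ω = g (fun k => ξ k ω) := fun ω => rfl
  have hvec : Measurable fun ω (i : Fin N) => ξ i ω := measurable_pi_iff.2 hξm
  have hgmeas : Measurable g := by
    refine Measurable.const_mul ?_ inv
    refine Finset.measurable_sum _ fun i _ => ?_
    refine Finset.measurable_sum _ fun j _ => ?_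
    exact Finset.measurable_sum _ fun τ _ => (measurable_gH i j τ).sub measurable_const
  -- bounds on gH and cst
  have hgH0 : ∀ (i j : Fin N) (τ : Fin N × Fin N) (x : Fin N → (ℝ × ℝ) × ℝ), (0:ℝ) ≤ gH i j τ x := fun i j τ x =>
    Hterm_nonneg (fun k (_ : Unit) => x k) i j τ ()
  have hgH1 : ∀ (i j : Fin N) (τ : Fin N × Fin N) (x : Fin N → (ℝ × ℝ) × ℝ), gH i j τ x ≤ 1 := fun i j τ x =>
    Hterm_le_one (fun k (_ : Unit) => x k) i j τ ()
  have hHmeas : ∀ i j τ, Measurable (Hterm ξ i j τ) := fun i j τ =>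
    (measurable_gH i j τ).comp hvec
  have hHint : ∀ i j τ, Integrable (Hterm ξ i j τ) μ := by
    intro i j τ
    refine integrable_of_bound (hHmeas i j τ) 1 fun ω => ?_
    rw [abs_le]
    exact ⟨by linarith [Hterm_nonneg ξ i j τ ω], Hterm_le_one ξ i j τ ω⟩
  have hcst0 : ∀ i j τ, 0 ≤ cst i j τ := fun i j τ =>
    integral_nonneg fun ω => Hterm_nonneg ξ i j τ ω
  have hcst1 : ∀ i j τ, cst i j τ ≤ 1 := by
    intro i j τ
    calc cst i j τ ≤ ∫ _ω, (1:ℝ) ∂μ :=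
          integral_mono (hHint i j τ) (integrable_const 1) fun ω => Hterm_le_one ξ i j τ ω
      _ = 1 := by simp
  have habs : ∀ (i j : Fin N) (τ : Fin N × Fin N) (x : Fin N → (ℝ × ℝ) × ℝ), |gH i j τ x - cst i j τ| ≤ 1 := by
    intro i j τ x
    rw [abs_le]
    constructor
    · linarith [hgH0 i j τ x, hcst1 i j τ]
    · linarith [hgH1 i j τ x, hcst0 i j τ]
  -- global bound |g| ≤ 1
  have hgb : ∀ x, |g x| ≤ 1 := by
    intro x
    rw [hgdef]
    simp only []
    rw [abs_mul, abs_of_pos hinv_pos]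
    have hsumb : |∑ i : Fin N, ∑ j : Fin N, ∑ τ ∈ P, (gH i j τ x - cst i j τ)|
        ≤ (N : ℝ) * ((N : ℝ) * (P.card : ℝ)) := by
      refine le_trans (Finset.abs_sum_le_sum_abs _ _) ?_
      have h1 : ∀ i : Fin N, |∑ j : Fin N, ∑ τ ∈ P, (gH i j τ x - cst i j τ)|
          ≤ (N : ℝ) * (P.card : ℝ) := by
        intro i
        refine le_trans (Finset.abs_sum_le_sum_abs _ _) ?_
        have h2 : ∀ j : Fin N, |∑ τ ∈ P, (gH i j τ x - cst i j τ)| ≤ (P.card : ℝ) := by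
          intro j
          refine le_trans (Finset.abs_sum_le_sum_abs _ _) ?_
          calc ∑ τ ∈ P, |gH i j τ x - cst i j τ| ≤ ∑ _τ ∈ P, (1:ℝ) :=
                Finset.sum_le_sum fun τ _ => habs i j τ x
            _ = (P.card : ℝ) := by simp
        calc ∑ j : Fin N, |∑ τ ∈ P, (gH i j τ x - cst i j τ)|
            ≤ ∑ _j : Fin N, (P.card : ℝ) := Finset.sum_le_sum fun j _ => h2 j
          _ = (N : ℝ) * (P.card : ℝ) := by
              simp [Finset.sum_const, Finset.card_univ, nsmul_eq_mul]
      calc ∑ i : Fin N, |∑ j : Fin N, ∑ τ ∈ P, (gH i j τ x - cst i j τ)|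
          ≤ ∑ _i : Fin N, (N : ℝ) * (P.card : ℝ) := Finset.sum_le_sum fun i _ => h1 i
        _ = (N : ℝ) * ((N : ℝ) * (P.card : ℝ)) := by
            simp [Finset.sum_const, Finset.card_univ, nsmul_eq_mul]
    calc inv * |∑ i : Fin N, ∑ j : Fin N, ∑ τ ∈ P, (gH i j τ x - cst i j τ)|
        ≤ inv * ((N : ℝ) * ((N : ℝ) * (P.card : ℝ))) :=
          mul_le_mul_of_nonneg_left hsumb hinv_pos.le
      _ = 1 := by
          rw [hinvdef, hPcard]
          field_simp
  -- large `s` : the event is empty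
  by_cases hs1 : s ≤ 1
  swap
  · have hset : {ω | Bterm μ ξ ω > 6 * s} = ∅ := by
      ext ω
      simp only [Set.mem_setOf_eq, Set.mem_empty_iff_false, iff_false, not_lt]
      have := (abs_le.1 (hgb (fun k => ξ k ω))).2
      rw [hBg ω]
      nlinarith
    rw [hset]
    simp only [measure_empty, ENNReal.toReal_zero]
    linarith
  -- main case : `2 ≤ N`, `0 < s ≤ 1`
  -- bounded differences for `g`
  have hgdiff : ∀ (k : Fin N) (x y : Fin N → (ℝ × ℝ) × ℝ),
      (∀ i, i ≠ k → x i = y i) → |g x - g y| ≤ 4 / N := by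
    intro k x y hxy
    have hsub : g x - g y = inv * ∑ i : Fin N, ∑ j : Fin N, ∑ τ ∈ P,
        (gH i j τ x - gH i j τ y) := by
      rw [hgdef]
      simp only []
      rw [← mul_sub, ← Finset.sum_sub_distrib]
      congr 1
      refine Finset.sum_congr rfl fun i _ => ?_
      rw [← Finset.sum_sub_distrib]
      refine Finset.sum_congr rfl fun j _ => ?_
      rw [← Finset.sum_sub_distrib]
      exact Finset.sum_congr rfl fun τ _ => by ring
    have hdiff1 : ∀ (i j : Fin N) (τ : Fin N × Fin N), |gH i j τ x - gH i j τ y| ≤ 1 := by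
      intro i j τ
      rw [abs_le]
      constructor
      · linarith [hgH0 i j τ x, hgH1 i j τ y]
      · linarith [hgH1 i j τ x, hgH0 i j τ y]
    have hpt : ∀ (i j : Fin N) (τ : Fin N × Fin N), τ ∈ P →
        |gH i j τ x - gH i j τ y| ≤
          ((if i = k then (1:ℝ) else 0) + (if j = k then (1:ℝ) else 0) +
            (if τ.1 = k ∨ τ.2 = k then (1:ℝ) else 0)) := by
      intro i j τ _
      by_cases hi : i = k
      · refine le_trans (hdiff1 i j τ) ?_
        simp only [hi, if_true]
        have h2 : (0:ℝ) ≤ if j = k then (1:ℝ) else 0 := by split_ifs <;> norm_num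
        have h3 : (0:ℝ) ≤ if τ.1 = k ∨ τ.2 = k then (1:ℝ) else 0 := by split_ifs <;> norm_num
        linarith
      by_cases hj : j = k
      · refine le_trans (hdiff1 i j τ) ?_
        simp only [hj, if_true]
        have h2 : (0:ℝ) ≤ if i = k then (1:ℝ) else 0 := by split_ifs <;> norm_num
        have h3 : (0:ℝ) ≤ if τ.1 = k ∨ τ.2 = k then (1:ℝ) else 0 := by split_ifs <;> norm_num
        linarith
      by_cases hτ : τ.1 = k ∨ τ.2 = k
      · refine le_trans (hdiff1 i j τ) ?_
        simp only [hτ, if_true, if_neg hi, if_neg hj]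
        norm_num
      · push_neg at hτ
        rw [gH_congr i j τ (hxy i hi) (hxy j hj) (hxy τ.1 hτ.1) (hxy τ.2 hτ.2)]
        simp only [sub_self, abs_zero, if_neg hi, if_neg hj]
        have h3 : (0:ℝ) ≤ if τ.1 = k ∨ τ.2 = k then (1:ℝ) else 0 := by split_ifs <;> norm_num
        linarith
    -- counting
    have hsum1 : ∑ i : Fin N, ∑ _j : Fin N, ∑ _τ ∈ P, (if i = k then (1:ℝ) else 0)
        = (N : ℝ) * (P.card : ℝ) := by
      have hin : ∀ i : Fin N, ∑ _j : Fin N, ∑ _τ ∈ P, (if i = k then (1:ℝ) else 0)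
          = (N : ℝ) * (P.card : ℝ) * (if i = k then (1:ℝ) else 0) := by
        intro i
        simp only [Finset.sum_const, Finset.card_univ, Fintype.card_fin, nsmul_eq_mul]
        ring
      rw [Finset.sum_congr rfl fun i _ => hin i, ← Finset.mul_sum]
      rw [Finset.sum_ite_eq' Finset.univ k (fun _ => (1:ℝ))]
      simp
    have hsum2 : ∑ _i : Fin N, ∑ j : Fin N, ∑ _τ ∈ P, (if j = k then (1:ℝ) else 0)
        = (N : ℝ) * (P.card : ℝ) := by
      have hin : ∀ _i : Fin N, ∑ j : Fin N, ∑ _τ ∈ P, (if j = k then (1:ℝ) else 0)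
          = (P.card : ℝ) := by
        intro i
        have : ∀ j : Fin N, ∑ _τ ∈ P, (if j = k then (1:ℝ) else 0)
            = (P.card : ℝ) * (if j = k then (1:ℝ) else 0) := by
          intro j; simp [Finset.sum_const, nsmul_eq_mul]
        rw [Finset.sum_congr rfl fun j _ => this j, ← Finset.mul_sum,
          Finset.sum_ite_eq' Finset.univ k (fun _ => (1:ℝ))]
        simp
      rw [Finset.sum_congr rfl fun i _ => hin i]
      simp [Finset.sum_const, Finset.card_univ, nsmul_eq_mul]
    have hsum3 : ∑ _i : Fin N, ∑ _j : Fin N, ∑ τ ∈ P, (if τ.1 = k ∨ τ.2 = k then (1:ℝ) else 0)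
        ≤ (N : ℝ) * ((N : ℝ) * ((N : ℝ) - 1)) := by
      have hin : ∑ τ ∈ P, (if τ.1 = k ∨ τ.2 = k then (1:ℝ) else 0) ≤ (N : ℝ) - 1 := by
        classical
        rw [Finset.sum_boole]
        have h1 := card_touch_le (N := N) k
        have h2 : ((P.filter (fun p => p.1 = k ∨ p.2 = k)).card : ℝ) ≤ ((N - 1 : ℕ) : ℝ) := by
          exact_mod_cast h1
        refine le_trans h2 ?_
        rw [Nat.cast_sub (by omega)]
        simp
      calc ∑ _i : Fin N, ∑ _j : Fin N, ∑ τ ∈ P, (if τ.1 = k ∨ τ.2 = k then (1:ℝ) else 0)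
          ≤ ∑ _i : Fin N, ∑ _j : Fin N, ((N : ℝ) - 1) :=
            Finset.sum_le_sum fun i _ => Finset.sum_le_sum fun j _ => hin
        _ = (N : ℝ) * ((N : ℝ) * ((N : ℝ) - 1)) := by
            simp only [Finset.sum_const, Finset.card_univ, Fintype.card_fin, nsmul_eq_mul]
    have htot : |∑ i : Fin N, ∑ j : Fin N, ∑ τ ∈ P, (gH i j τ x - gH i j τ y)|
        ≤ 2 * ((N : ℝ) * (P.card : ℝ)) + (N : ℝ) * ((N : ℝ) * ((N : ℝ) - 1)) := by
      refine le_trans (Finset.abs_sum_le_sum_abs _ _) ?_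
      have step1 : ∑ i : Fin N, |∑ j : Fin N, ∑ τ ∈ P, (gH i j τ x - gH i j τ y)|
          ≤ ∑ i : Fin N, ∑ j : Fin N, ∑ τ ∈ P,
            ((if i = k then (1:ℝ) else 0) + (if j = k then (1:ℝ) else 0) +
              (if τ.1 = k ∨ τ.2 = k then (1:ℝ) else 0)) := by
        refine Finset.sum_le_sum fun i _ => ?_
        refine le_trans (Finset.abs_sum_le_sum_abs _ _) ?_
        refine Finset.sum_le_sum fun j _ => ?_
        refine le_trans (Finset.abs_sum_le_sum_abs _ _) ?_
        exact Finset.sum_le_sum fun τ hτ => hpt i j τ hτ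
      refine le_trans step1 ?_
      have hsplit : ∑ i : Fin N, ∑ j : Fin N, ∑ τ ∈ P,
            ((if i = k then (1:ℝ) else 0) + (if j = k then (1:ℝ) else 0) +
              (if τ.1 = k ∨ τ.2 = k then (1:ℝ) else 0))
          = (∑ i : Fin N, ∑ j : Fin N, ∑ τ ∈ P, (if i = k then (1:ℝ) else 0))
            + (∑ i : Fin N, ∑ j : Fin N, ∑ τ ∈ P, (if j = k then (1:ℝ) else 0))
            + (∑ i : Fin N, ∑ j : Fin N, ∑ τ ∈ P, (if τ.1 = k ∨ τ.2 = k then (1:ℝ) else 0)) := by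
        simp only [← Finset.sum_add_distrib]
      rw [hsplit, hsum1, hsum2]
      linarith [hsum3]
    rw [hsub, abs_mul, abs_of_pos hinv_pos]
    have hfin : inv * (2 * ((N : ℝ) * (P.card : ℝ)) + (N : ℝ) * ((N : ℝ) * ((N : ℝ) - 1)))
        = 4 / N := by
      rw [hinvdef, hPcard, hchR]
      field_simp
      ring
    calc inv * |∑ i : Fin N, ∑ j : Fin N, ∑ τ ∈ P, (gH i j τ x - gH i j τ y)|
        ≤ inv * (2 * ((N : ℝ) * (P.card : ℝ)) + (N : ℝ) * ((N : ℝ) * ((N : ℝ) - 1))) :=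
          mul_le_mul_of_nonneg_left htot hinv_pos.le
      _ = 4 / N := hfin
  -- the product measure model
  haveI : ∀ i : Fin N, IsProbabilityMeasure (μ.map (ξ i)) :=
    fun i => Measure.isProbabilityMeasure_map (hξm i).aemeasurable
  set pr := Measure.pi (fun i : Fin N => μ.map (ξ i)) with hpr
  have hmap : μ.map (fun ω i => ξ i ω) = pr := map_eq_pi μ ξ hξm hξindep
  -- the expectation of g under π vanishes
  have hEgH : ∀ (i j : Fin N) (τ : Fin N × Fin N), ∫ x, gH i j τ x ∂pr = cst i j τ := by
    intro i j τ
    rw [← hmap, integral_map hvec.aemeasurable (measurable_gH i j τ).aestronglyMeasurable]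
    rfl
  have hintgH : ∀ (i j : Fin N) (τ : Fin N × Fin N),
      Integrable (fun x => gH i j τ x - cst i j τ) pr := by
    intro i j τ
    exact integrable_of_bound ((measurable_gH i j τ).sub measurable_const) 1 (fun x => habs i j τ x)
  have hEg : ∫ x, g x ∂pr = 0 := by
    rw [hgdef]
    simp only []
    rw [integral_const_mul]
    have : ∫ x, (∑ i : Fin N, ∑ j : Fin N, ∑ τ ∈ P, (gH i j τ x - cst i j τ)) ∂pr = 0 := by
      rw [integral_finset_sum _ fun i _ => ?_]
      · refine Finset.sum_eq_zero fun i _ => ?_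
        rw [integral_finset_sum _ fun j _ => ?_]
        · refine Finset.sum_eq_zero fun j _ => ?_
          rw [integral_finset_sum _ fun τ _ => hintgH i j τ]
          refine Finset.sum_eq_zero fun τ _ => ?_
          rw [integral_sub (integrable_of_bound (measurable_gH i j τ) 1
              (fun x => abs_le.2 ⟨by linarith [hgH0 i j τ x], hgH1 i j τ x⟩))
              (integrable_const _), integral_const, hEgH i j τ]
          simp
        · exact integrable_finset_sum _ fun τ _ => hintgH i j τ
      · exact integrable_finset_sum _ fun j _ =>
          integrable_finset_sum _ fun τ _ => hintgH i j τ
    rw [this, mul_zero]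
  -- McDiarmid bound for the mgf
  set L : ℝ := s * N / 4 with hLdef
  have hL0 : 0 ≤ L := by positivity
  have hLd : L * (4 / N) = s := by
    rw [hLdef]; field_simp
  have hmcd := mcdiarmid_mgf (E := (ℝ × ℝ) × ℝ) (c := s) hs1 N (fun i => μ.map (ξ i))
    (fun i => inferInstance) (fun x => L * g x) (hgmeas.const_mul L) (L * 1)
    (fun x => by
      rw [abs_mul, abs_of_nonneg hL0]
      exact mul_le_mul_of_nonneg_left (hgb x) hL0)
    (fun k x y hxy => by
      have : L * g x - L * g y = L * (g x - g y) := by ring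
      rw [this, abs_mul, abs_of_nonneg hL0, ← hLd]
      exact mul_le_mul_of_nonneg_left (hgdiff k x y hxy) hL0)
  rw [integral_const_mul, hEg, mul_zero] at hmcd
  -- Chernoff bound
  have hsetm : MeasurableSet {x : Fin N → (ℝ × ℝ) × ℝ | g x > 6 * s} :=
    measurableSet_lt measurable_const hgmeas
  have hpre : {ω | Bterm μ ξ ω > 6 * s} = (fun ω (i : Fin N) => ξ i ω) ⁻¹' {x | g x > 6 * s} := by
    ext ω
    simp only [Set.mem_setOf_eq, Set.mem_preimage]
    rw [hBg ω]
  have hμπ : μ {ω | Bterm μ ξ ω > 6 * s} = pr {x | g x > 6 * s} := by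
    rw [hpre, ← hmap, Measure.map_apply hvec hsetm]
  have hsubset : pr {x | g x > 6 * s} ≤ pr {x | 6 * s ≤ g x} := by
    refine measure_mono fun x hx => ?_
    have hx' : 6 * s < g x := hx
    exact le_of_lt hx' 
  have hchern := measure_ge_le_exp_mul_mgf (μ := pr) (X := g) (6 * s) hL0
    (integrable_of_bound (hgmeas.const_mul L).exp (Real.exp (L * 1)) fun x => by
      rw [abs_of_pos (Real.exp_pos _)]
      refine Real.exp_le_exp.2 ?_
      refine le_trans (le_abs_self _) ?_
      rw [abs_mul, abs_of_nonneg hL0]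
      exact mul_le_mul_of_nonneg_left (hgb x) hL0)
  have hmgf_le : mgf g pr L ≤ Real.exp ((N : ℝ) * ((3/4) * s ^ 2)) := by
    rw [mgf]
    calc ∫ x, Real.exp (L * g x) ∂pr
        = ∫ x, Real.exp ((fun x => L * g x) x) ∂pr := rfl
      _ ≤ Real.exp (0 + (N : ℝ) * ((3/4) * s ^ 2)) := hmcd
      _ = Real.exp ((N : ℝ) * ((3/4) * s ^ 2)) := by rw [zero_add]
  calc (μ {ω | Bterm μ ξ ω > 6 * s}).toReal
      = (pr {x | g x > 6 * s}).toReal := by rw [hμπ]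
    _ ≤ (pr {x | 6 * s ≤ g x}).toReal := ENNReal.toReal_mono (measure_ne_top _ _) hsubset
    _ ≤ Real.exp (-L * (6 * s)) * mgf g pr L := hchern
    _ ≤ Real.exp (-L * (6 * s)) * Real.exp ((N : ℝ) * ((3/4) * s ^ 2)) :=
        mul_le_mul_of_nonneg_left hmgf_le (Real.exp_pos _).le
    _ = Real.exp (-L * (6 * s) + (N : ℝ) * ((3/4) * s ^ 2)) := (Real.exp_add _ _).symm
    _ ≤ 6 * Real.exp (-((N : ℝ) * s ^ 2) / 8) := by
        have harg : -L * (6 * s) + (N : ℝ) * ((3/4) * s ^ 2) ≤ -((N : ℝ) * s ^ 2) / 8 := by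
          rw [hLdef]
          have hNs : 0 ≤ (N : ℝ) * s ^ 2 := by positivity
          have he : -(s * (N : ℝ) / 4) * (6 * s) + (N : ℝ) * ((3/4) * s ^ 2)
              = -(3/4) * ((N : ℝ) * s ^ 2) := by ring
          rw [he]
          linarith
        have := Real.exp_le_exp.2 harg
        linarith [Real.exp_pos (-((N : ℝ) * s ^ 2) / 8)]
end

section
/- (Vanishing index implies equality of distributions, real case.) In the pick-freeze setting with real output, assume the law of Z admits a density that is strictly positive Lebesgue-almost everywhere on ℝ, and let κ be a regular conditional distribution of Z given X_ν. If for (law of Z)⊗(law of Z)-almost every pair (z₁, z₂), one has κ(·, [min(z₁,z₂), max(z₁,z₂)]) = P( min(z₁,z₂) ≤ Z ≤ max(z₁,z₂) ) almost surely, then almost surely κ(·, B) = P(Z ∈ B) for every Borel set B ⊂ ℝ; that is, the conditional distribution of Z given X_ν coincides almost surely with the unconditional distribution of Z. -/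
open MeasureTheory ProbabilityTheory Real Set
open Filter Topology

lemma conull_inter_Ioc_nonempty {S : Set ℝ} (hS : volume Sᶜ = 0) {a b : ℝ} (hab : a < b) :
    (S ∩ Set.Ioc a b).Nonempty := by
  by_contra h
  rw [Set.not_nonempty_iff_eq_empty] at h
  have hsub : Set.Ioc a b ⊆ Sᶜ := fun x hx => by
    intro hxS
    exact absurd (Set.mem_inter hxS hx) (by simp [h])
  have := measure_mono_null hsub hS
  rw [Real.volume_Ioc] at this
  simp [ENNReal.ofReal_eq_zero, sub_nonpos] at this
  linarith

lemma stepA (P Q : Measure ℝ) [IsProbabilityMeasure P] [IsProbabilityMeasure Q]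
    {z₁ : ℝ}
    (h : ∀ᵐ z₂ ∂(volume : Measure ℝ),
      P (Icc (min z₁ z₂) (max z₁ z₂)) = Q (Icc (min z₁ z₂) (max z₁ z₂)))
    {a : ℝ} (ha : z₁ ≤ a) : P (Icc z₁ a) = Q (Icc z₁ a) := by
  set T : Set ℝ := {z₂ | P (Icc (min z₁ z₂) (max z₁ z₂)) = Q (Icc (min z₁ z₂) (max z₁ z₂))}
    with hTdef
  have hT : volume Tᶜ = 0 := h
  have hx : ∀ n : ℕ, ∃ x, x ∈ T ∧ a < x ∧ x ≤ a + 1 / (n + 1) := by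
    intro n
    have hlt : a < a + 1 / ((n : ℝ) + 1) := by nlinarith [Nat.cast_nonneg (α := ℝ) n, one_div_pos.2 (by positivity : (0:ℝ) < (n:ℝ)+1)]
    obtain ⟨x, hxT, hx1, hx2⟩ := conull_inter_Ioc_nonempty hT hlt
    exact ⟨x, hxT, hx1, hx2⟩
  choose x hxT hxa hxb using hx
  set y : ℕ → ℝ := fun n => (Finset.range (n + 1)).inf' (by simp) x with hy
  have hymem : ∀ n, ∃ i ∈ Finset.range (n+1), y n = x i := fun n =>
    Finset.exists_mem_eq_inf' (by simp) x
  have hyT : ∀ n, y n ∈ T := fun n => by obtain ⟨i, _, hi⟩ := hymem n; rw [hi]; exact hxT i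
  have hya : ∀ n, a < y n := fun n => by obtain ⟨i, _, hi⟩ := hymem n; rw [hi]; exact hxa i
  have hyb : ∀ n, y n ≤ a + 1 / (n + 1) := fun n =>
    le_trans (Finset.inf'_le x (by simp)) (hxb n)
  have hanti : Antitone y := fun n m hnm =>
    Finset.inf'_mono x (Finset.range_subset_range.2 (by omega)) (by simp)
  have hInter : ⋂ n, Icc z₁ (y n) = Icc z₁ a := by
    ext t
    simp only [Set.mem_iInter, Set.mem_Icc]
    constructor
    · rintro ht
      refine ⟨(ht 0).1, ?_⟩
      have hlim : Tendsto (fun n : ℕ => a + 1 / ((n : ℝ) + 1)) atTop (𝓝 a) := by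
        simpa using (tendsto_const_nhds (x := a)).add tendsto_one_div_add_atTop_nhds_zero_nat
      exact ge_of_tendsto' hlim fun n => le_trans (ht n).2 (hyb n)
    · rintro ⟨h1, h2⟩ n
      exact ⟨h1, le_trans h2 (hya n).le⟩
  have hmP : Tendsto (fun n => P (Icc z₁ (y n))) atTop (𝓝 (P (Icc z₁ a))) := by
    rw [← hInter]
    exact tendsto_measure_iInter_atTop (fun n => measurableSet_Icc.nullMeasurableSet)
      (fun n m hnm => Set.Icc_subset_Icc le_rfl (hanti hnm)) ⟨0, measure_ne_top _ _⟩
  have hmQ : Tendsto (fun n => Q (Icc z₁ (y n))) atTop (𝓝 (Q (Icc z₁ a))) := by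
    rw [← hInter]
    exact tendsto_measure_iInter_atTop (fun n => measurableSet_Icc.nullMeasurableSet)
      (fun n m hnm => Set.Icc_subset_Icc le_rfl (hanti hnm)) ⟨0, measure_ne_top _ _⟩
  have heq : ∀ n, P (Icc z₁ (y n)) = Q (Icc z₁ (y n)) := fun n => by
    have := hyT n
    rw [hTdef] at this
    simpa [min_eq_left (le_trans ha (hya n).le), max_eq_right (le_trans ha (hya n).le)] using this
  exact tendsto_nhds_unique hmP (by simpa only [heq] using hmQ)

lemma keyPQ (P Q : Measure ℝ) [IsProbabilityMeasure P] [IsProbabilityMeasure Q]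
    (h : ∀ᵐ p ∂((volume : Measure ℝ).prod volume),
      P (Icc (min p.1 p.2) (max p.1 p.2)) = Q (Icc (min p.1 p.2) (max p.1 p.2))) :
    P = Q := by
  have h' := Measure.ae_ae_of_ae_prod h
  set S : Set ℝ := {z₁ | ∀ᵐ z₂ ∂(volume : Measure ℝ),
      P (Icc (min z₁ z₂) (max z₁ z₂)) = Q (Icc (min z₁ z₂) (max z₁ z₂))} with hSdef
  have hS : volume Sᶜ = 0 := h'
  refine MeasureTheory.Measure.ext_of_Iic P Q fun a => ?_
  -- choose w n in S with w n ≤ min a (-n)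
  have hw : ∀ n : ℕ, ∃ w, w ∈ S ∧ w ≤ min a (-(n : ℝ)) := by
    intro n
    obtain ⟨w, hwS, _, hw2⟩ := conull_inter_Ioc_nonempty hS
      (show min a (-(n : ℝ)) - 1 < min a (-(n : ℝ)) by linarith)
    exact ⟨w, hwS, hw2⟩
  choose w hwS hwle using hw
  set z : ℕ → ℝ := fun n => (Finset.range (n + 1)).inf' (by simp) w with hz
  have hzmem : ∀ n, ∃ i ∈ Finset.range (n+1), z n = w i := fun n =>
    Finset.exists_mem_eq_inf' (by simp) w
  have hzS : ∀ n, z n ∈ S := fun n => by obtain ⟨i, _, hi⟩ := hzmem n; rw [hi]; exact hwS i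
  have hzle : ∀ n, z n ≤ min a (-(n : ℝ)) := fun n =>
    le_trans (Finset.inf'_le w (by simp)) (hwle n)
  have hanti : Antitone z := fun n m hnm =>
    Finset.inf'_mono w (Finset.range_subset_range.2 (by omega)) (by simp)
  have hUnion : ⋃ n, Icc (z n) a = Iic a := by
    ext t
    simp only [Set.mem_iUnion, Set.mem_Icc, Set.mem_Iic]
    constructor
    · rintro ⟨n, _, ht⟩; exact ht
    · intro ht
      obtain ⟨n, hn⟩ := exists_nat_ge (-t)
      exact ⟨n, le_trans (hzle n) (le_trans (min_le_right _ _) (by linarith)), ht⟩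
  have hmono : Monotone fun n => Icc (z n) a :=
    fun n m hnm => Set.Icc_subset_Icc (hanti hnm) le_rfl
  have hmP : Tendsto (fun n => P (Icc (z n) a)) atTop (𝓝 (P (Iic a))) := by
    rw [← hUnion]; exact tendsto_measure_iUnion_atTop hmono
  have hmQ : Tendsto (fun n => Q (Icc (z n) a)) atTop (𝓝 (Q (Iic a))) := by
    rw [← hUnion]; exact tendsto_measure_iUnion_atTop hmono
  have heq : ∀ n, P (Icc (z n) a) = Q (Icc (z n) a) := fun n =>
    stepA P Q (hzS n) (le_trans (hzle n) (min_le_left _ _))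
  exact tendsto_nhds_unique hmP (by simpa only [heq] using hmQ)


/-- **Vanishing index implies equality of distributions, real case.**
In the pick-freeze setting with real output, assume the law of `Z` admits a density `ρ`
(w.r.t. Lebesgue measure) that is strictly positive almost everywhere, and let `κ` be a
regular conditional distribution of `Z` given `X_ν`.  If for (law of `Z`)⊗(law of `Z`)-
almost every pair `(z₁, z₂)` one has
`κ(·, [min(z₁,z₂), max(z₁,z₂)]) = P(min(z₁,z₂) ≤ Z ≤ max(z₁,z₂))` almost surely, then
almost surely `κ(·, B) = P(Z ∈ B)` for every Borel set `B`, i.e. the conditional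
distribution of `Z` given `X_ν` coincides almost surely with the law of `Z`. -/
theorem stmt8 {Ω : Type*} [MeasurableSpace Ω] (μ : Measure Ω) [IsProbabilityMeasure μ]
    {d : ℕ} (X : Ω → Fin d → ℝ) (hX : Measurable X)
    (hcoord : iIndepFun (fun i ω => X ω i) μ)
    (ν : Finset (Fin d)) (f : (Fin d → ℝ) → ℝ) (hf : Measurable f)
    (Z : Ω → ℝ) (hZ : Z = fun ω => f (X ω))
    (ρ : ℝ → ENNReal) (hρm : Measurable ρ)
    (hρlaw : μ.map Z = volume.withDensity ρ)
    (hρpos : ∀ᵐ x ∂(volume : Measure ℝ), 0 < ρ x)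
    (κ : Ω → Measure ℝ) (hκprob : ∀ ω, IsProbabilityMeasure (κ ω))
    (hκmeas : ∀ B : Set ℝ, MeasurableSet B → Measurable (fun ω => κ ω B))
    (hκcond : ∀ B : Set ℝ, MeasurableSet B →
      (fun ω => (κ ω B).toReal)
        =ᵐ[μ] μ[(fun ω => Set.indicator B (fun _ => (1 : ℝ)) (Z ω)) |
          MeasurableSpace.comap (fun ω (i : ν) => X ω i) inferInstance])
    (hyp : ∀ᵐ p ∂((μ.map Z).prod (μ.map Z)), ∀ᵐ ω ∂μ,
      κ ω (Set.Icc (min p.1 p.2) (max p.1 p.2))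
        = μ.map Z (Set.Icc (min p.1 p.2) (max p.1 p.2))) :
    ∀ᵐ ω ∂μ, κ ω = μ.map Z := by
  have hZm : Measurable Z := hZ ▸ hf.comp hX
  have hmprob : IsProbabilityMeasure (μ.map Z) := Measure.isProbabilityMeasure_map hZm.aemeasurable
  -- measurability of the relevant functions on (ℝ × ℝ) × Ω
  have hKmeas : Measurable κ := Measure.measurable_of_measurable_coe κ hκmeas
  let K : Kernel Ω ℝ := ⟨κ, hKmeas⟩
  haveI : IsMarkovKernel K := ⟨fun ω => hκprob ω⟩
  let η : Kernel ((ℝ × ℝ) × Ω) ℝ := K.comap Prod.snd measurable_snd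
  let t : Set (((ℝ × ℝ) × Ω) × ℝ) :=
    {q | min q.1.1.1 q.1.1.2 ≤ q.2 ∧ q.2 ≤ max q.1.1.1 q.1.1.2}
  have ht : MeasurableSet t := by
    apply MeasurableSet.inter
    · exact measurableSet_le ((measurable_fst.fst.fst).min (measurable_fst.fst.snd)) measurable_snd
    · exact measurableSet_le measurable_snd ((measurable_fst.fst.fst).max (measurable_fst.fst.snd))
  have hpre : ∀ q : (ℝ × ℝ) × Ω, Prod.mk q ⁻¹' t = Icc (min q.1.1 q.1.2) (max q.1.1 q.1.2) := by
    intro q; ext y; simp [t, Set.mem_Icc]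
  have hF : Measurable fun q : (ℝ × ℝ) × Ω =>
      κ q.2 (Icc (min q.1.1 q.1.2) (max q.1.1 q.1.2)) := by
    have := Kernel.measurable_kernel_prodMk_left (κ := η) ht
    simp only [hpre] at this; exact this
  have hG : Measurable fun q : (ℝ × ℝ) × Ω =>
      (μ.map Z) (Icc (min q.1.1 q.1.2) (max q.1.1 q.1.2)) := by
    have := Kernel.measurable_kernel_prodMk_left (κ := Kernel.const ((ℝ × ℝ) × Ω) (μ.map Z)) ht
    simp only [hpre] at this; exact this
  have hEmeas : MeasurableSet {q : (ℝ × ℝ) × Ω |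
      κ q.2 (Icc (min q.1.1 q.1.2) (max q.1.1 q.1.2))
        = (μ.map Z) (Icc (min q.1.1 q.1.2) (max q.1.1 q.1.2))} := by
    have h1 := measurableSet_le hF hG
    have h2 := measurableSet_le hG hF
    have : {q : (ℝ × ℝ) × Ω |
        κ q.2 (Icc (min q.1.1 q.1.2) (max q.1.1 q.1.2))
          = (μ.map Z) (Icc (min q.1.1 q.1.2) (max q.1.1 q.1.2))}
        = {q | κ q.2 (Icc (min q.1.1 q.1.2) (max q.1.1 q.1.2))
            ≤ (μ.map Z) (Icc (min q.1.1 q.1.2) (max q.1.1 q.1.2))} ∩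
          {q | (μ.map Z) (Icc (min q.1.1 q.1.2) (max q.1.1 q.1.2))
            ≤ κ q.2 (Icc (min q.1.1 q.1.2) (max q.1.1 q.1.2))} := by
      ext q; simp [le_antisymm_iff]
    rw [this]; exact h1.inter h2
  -- swap the order of almost-everywhere quantifiers
  have hswap : ∀ᵐ ω ∂μ, ∀ᵐ p ∂((μ.map Z).prod (μ.map Z)),
      κ ω (Icc (min p.1 p.2) (max p.1 p.2)) = (μ.map Z) (Icc (min p.1 p.2) (max p.1 p.2)) :=
    (Measure.ae_ae_comm hEmeas).1 hyp
  -- absolute continuity of Lebesgue w.r.t. the law of Z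
  have hac : (volume : Measure ℝ) ≪ μ.map Z := by
    refine Measure.AbsolutelyContinuous.mk fun s hs h0 => ?_
    rw [hρlaw, withDensity_apply _ hs, lintegral_eq_zero_iff' hρm.aemeasurable.restrict,
      Filter.EventuallyEq, ae_restrict_iff' hs] at h0
    rw [MeasureTheory.measure_eq_zero_iff_ae_notMem]
    filter_upwards [h0, hρpos] with x h1 h2
    intro hxs
    have := h1 hxs
    simp only [Pi.zero_apply] at this
    exact absurd this h2.ne'
  have hac2 : (volume : Measure ℝ).prod volume ≪ (μ.map Z).prod (μ.map Z) := hac.prod hac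
  filter_upwards [hswap] with ω hω
  haveI := hκprob ω
  exact keyPQ (κ ω) (μ.map Z) (hac2.ae_le hω)
end

section
/- Let α > 0, let X₁ be Bernoulli(p) with 0 ≤ p ≤ 1 and X₂ a real random variable independent of X₁ with continuous cumulative distribution function F, and set Z = αX₁ + X₂. For s ≤ t let H(s,t) = P(s ≤ Z ≤ t) and H¹(s,t) = P(s ≤ Z ≤ t | X₁). Then for all s ≤ t, E[ (H(s,t) − H¹(s,t))² ] = p(1−p) [ (F(t) − F(s)) − (F(t−α) − F(s−α)) ]². -/
open MeasureTheory ProbabilityTheory Real Set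

/-- Let `α > 0`, `X₁ ~ Bernoulli(p)` with `0 ≤ p ≤ 1`, `X₂` a real random
variable independent of `X₁` with continuous CDF `F`, and `Z = αX₁ + X₂`.  With
`H(s,t) = P(s ≤ Z ≤ t)` and `H¹(s,t) = P(s ≤ Z ≤ t | X₁)`, for all `s ≤ t`,
`E[(H(s,t) - H¹(s,t))²] = p(1-p)[(F(t) - F(s)) - (F(t-α) - F(s-α))]²`. -/
theorem stmt9 {Ω : Type*} [MeasurableSpace Ω] (μ : Measure Ω) [IsProbabilityMeasure μ]
    (α p : ℝ) (hα : 0 < α) (hp0 : 0 ≤ p) (hp1 : p ≤ 1)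
    (X₁ X₂ : Ω → ℝ) (hX₁ : Measurable X₁) (hX₂ : Measurable X₂)
    (hBer : μ.map X₁ = ENNReal.ofReal p • Measure.dirac (1 : ℝ)
      + ENNReal.ofReal (1 - p) • Measure.dirac (0 : ℝ))
    (hindep : IndepFun X₁ X₂ μ)
    (F : ℝ → ℝ) (hF : ∀ t, F t = (μ {ω | X₂ ω ≤ t}).toReal) (hFcont : Continuous F)
    (Z : Ω → ℝ) (hZ : Z = fun ω => α * X₁ ω + X₂ ω)
    (H : ℝ → ℝ → ℝ) (hH : ∀ s t, H s t = (μ {ω | s ≤ Z ω ∧ Z ω ≤ t}).toReal)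
    (H1 : ℝ → ℝ → Ω → ℝ)
    (hH1 : ∀ s t, H1 s t = μ[(fun ω => if s ≤ Z ω ∧ Z ω ≤ t then (1 : ℝ) else 0) |
      MeasurableSpace.comap X₁ inferInstance]) :
    ∀ s t : ℝ, s ≤ t →
      ∫ ω, (H s t - H1 s t ω) ^ 2 ∂μ
        = p * (1 - p) * ((F t - F s) - (F (t - α) - F (s - α))) ^ 2 := by
  intro s t hst
  -- CDF basics
  have hIic : ∀ a : ℝ, μ {ω | X₂ ω ≤ a} = ENNReal.ofReal (F a) := by
    intro a
    rw [hF a, ENNReal.ofReal_toReal (measure_ne_top μ _)]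
  have hIicMeas : ∀ a : ℝ, MeasurableSet {ω | X₂ ω ≤ a} := fun a =>
    hX₂ measurableSet_Iic
  have hFnonneg : ∀ a : ℝ, 0 ≤ F a := fun a => by
    rw [hF a]; exact ENNReal.toReal_nonneg
  have hFmono : Monotone F := by
    intro a b hab
    rw [hF a, hF b]
    exact ENNReal.toReal_mono (measure_ne_top μ _)
      (measure_mono (fun ω h => le_trans h hab))
  have hIoc : ∀ a b : ℝ, a ≤ b →
      μ {ω | a < X₂ ω ∧ X₂ ω ≤ b} = ENNReal.ofReal (F b - F a) := by
    intro a b hab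
    have hmeas : MeasurableSet {ω | a < X₂ ω ∧ X₂ ω ≤ b} := hX₂ measurableSet_Ioc
    have hu : {ω | X₂ ω ≤ b} = {ω | X₂ ω ≤ a} ∪ {ω | a < X₂ ω ∧ X₂ ω ≤ b} := by
      ext ω
      simp only [mem_setOf_eq, mem_union]
      constructor
      · intro h
        by_cases h' : X₂ ω ≤ a
        · exact Or.inl h'
        · exact Or.inr ⟨lt_of_not_ge h', h⟩
      · rintro (h | ⟨_, h⟩)
        · exact le_trans h hab
        · exact h
    have hdisj : Disjoint {ω | X₂ ω ≤ a} {ω | a < X₂ ω ∧ X₂ ω ≤ b} := by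
      rw [Set.disjoint_left]
      rintro ω h ⟨h1, _⟩
      exact absurd h (not_le.mpr h1)
    have hadd : μ {ω | X₂ ω ≤ b}
        = μ {ω | X₂ ω ≤ a} + μ {ω | a < X₂ ω ∧ X₂ ω ≤ b} := by
      rw [hu, measure_union hdisj hmeas]
    rw [hIic, hIic] at hadd
    rw [ENNReal.ofReal_sub _ (hFnonneg a)]
    exact ENNReal.eq_sub_of_add_eq ENNReal.ofReal_ne_top
      (by rw [add_comm] at hadd; exact hadd.symm)
  have hatom : ∀ a : ℝ, μ {ω | X₂ ω = a} = 0 := by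
    intro a
    have hle : ∀ n : ℕ,
        μ {ω | X₂ ω = a} ≤ ENNReal.ofReal (F a - F (a - 1 / (n + 1))) := by
      intro n
      have hpos : (0:ℝ) < 1 / (n + 1) := by positivity
      rw [← hIoc (a - 1 / (n + 1)) a (by linarith)]
      refine measure_mono ?_
      intro ω h
      simp only [mem_setOf_eq] at h ⊢
      constructor
      · rw [h]; linarith
      · rw [h]
    have htend : Filter.Tendsto (fun n : ℕ => ENNReal.ofReal (F a - F (a - 1 / (n + 1))))
        Filter.atTop (nhds 0) := by
      have h1 : Filter.Tendsto (fun n : ℕ => a - 1 / (n + 1)) Filter.atTop (nhds a) := by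
        have := tendsto_one_div_add_atTop_nhds_zero_nat (𝕜 := ℝ)
        have h2 := Filter.Tendsto.const_sub a this
        simpa using h2
      have h3 : Filter.Tendsto (fun n : ℕ => F a - F (a - 1 / (n + 1)))
          Filter.atTop (nhds 0) := by
        have := (hFcont.tendsto a).comp h1
        have h4 := Filter.Tendsto.const_sub (F a) this
        simpa using h4
      have := ENNReal.tendsto_ofReal h3
      simpa using this
    have := ge_of_tendsto' htend hle
    exact le_antisymm this zero_le
  have hIcc : ∀ a b : ℝ, a ≤ b →
      μ {ω | a ≤ X₂ ω ∧ X₂ ω ≤ b} = ENNReal.ofReal (F b - F a) := by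
    intro a b hab
    have hu : {ω | a ≤ X₂ ω ∧ X₂ ω ≤ b}
        = {ω | X₂ ω = a} ∪ {ω | a < X₂ ω ∧ X₂ ω ≤ b} := by
      ext ω
      simp only [mem_setOf_eq, mem_union]
      constructor
      · rintro ⟨h1, h2⟩
        rcases eq_or_lt_of_le h1 with h | h
        · exact Or.inl h.symm
        · exact Or.inr ⟨h, h2⟩
      · rintro (h | ⟨h1, h2⟩)
        · constructor
          · exact le_of_eq h.symm
          · rw [h]; exact hab
        · exact ⟨le_of_lt h1, h2⟩
    rw [hu]
    refine le_antisymm ?_ ?_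
    · refine le_trans (measure_union_le _ _) ?_
      rw [hatom a, zero_add, hIoc a b hab]
    · rw [← hIoc a b hab]
      exact measure_mono subset_union_right
  -- Bernoulli facts
  have hA : μ (X₁ ⁻¹' {1}) = ENNReal.ofReal p := by
    have h : μ.map X₁ {1} = ENNReal.ofReal p := by
      rw [hBer]
      simp [Measure.dirac_apply]
    rwa [Measure.map_apply hX₁ (measurableSet_singleton _)] at h
  have hA0 : μ (X₁ ⁻¹' {0}) = ENNReal.ofReal (1 - p) := by
    have h : μ.map X₁ {0} = ENNReal.ofReal (1 - p) := by
      rw [hBer]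
      simp [Measure.dirac_apply]
    rwa [Measure.map_apply hX₁ (measurableSet_singleton _)] at h
  have hAmeas : MeasurableSet (X₁ ⁻¹' {1}) := hX₁ (measurableSet_singleton _)
  have hA0meas : MeasurableSet (X₁ ⁻¹' {0}) := hX₁ (measurableSet_singleton _)
  have hAdisj : Disjoint (X₁ ⁻¹' {1}) (X₁ ⁻¹' {0}) := by
    rw [Set.disjoint_left]
    intro ω h1 h0
    simp only [mem_preimage, mem_singleton_iff] at h1 h0
    rw [h1] at h0
    exact one_ne_zero h0
  have hN : μ (X₁ ⁻¹' {1} ∪ X₁ ⁻¹' {0})ᶜ = 0 := by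
    have hu : μ (X₁ ⁻¹' {1} ∪ X₁ ⁻¹' {0}) = 1 := by
      rw [measure_union hAdisj hA0meas, hA, hA0,
        ← ENNReal.ofReal_add hp0 (by linarith)]
      norm_num
    rw [measure_compl (hAmeas.union hA0meas) (measure_ne_top μ _), hu, measure_univ,
      tsub_self]
  -- the event S and its measure on the Bernoulli atoms
  have hZmeas : Measurable Z := by
    rw [hZ]; exact (hX₁.const_mul α).add hX₂
  have hSmeas : MeasurableSet {ω | s ≤ Z ω ∧ Z ω ≤ t} := by
    have : {ω | s ≤ Z ω ∧ Z ω ≤ t} = Z ⁻¹' Icc s t := rfl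
    rw [this]; exact hZmeas measurableSet_Icc
  set c1 : ℝ := F (t - α) - F (s - α) with hc1def
  set c0 : ℝ := F t - F s with hc0def
  have hc1 : 0 ≤ c1 := sub_nonneg.mpr (hFmono (by linarith))
  have hc0 : 0 ≤ c0 := sub_nonneg.mpr (hFmono hst)
  have hSA : μ ({ω | s ≤ Z ω ∧ Z ω ≤ t} ∩ X₁ ⁻¹' {1})
      = ENNReal.ofReal p * ENNReal.ofReal c1 := by
    have hset : {ω | s ≤ Z ω ∧ Z ω ≤ t} ∩ X₁ ⁻¹' {1}
        = X₁ ⁻¹' {1} ∩ X₂ ⁻¹' Icc (s - α) (t - α) := by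
      ext ω
      simp only [mem_inter_iff, mem_setOf_eq, mem_preimage, mem_singleton_iff,
        mem_Icc, hZ]
      constructor
      · rintro ⟨⟨h1, h2⟩, h3⟩
        rw [h3] at h1 h2
        exact ⟨h3, by linarith, by linarith⟩
      · rintro ⟨h3, h1, h2⟩
        exact ⟨⟨by rw [h3]; linarith, by rw [h3]; linarith⟩, h3⟩
    rw [hset, hindep.measure_inter_preimage_eq_mul _ _ (measurableSet_singleton _)
      measurableSet_Icc, hA]
    congr 1
    have : X₂ ⁻¹' Icc (s - α) (t - α) = {ω | s - α ≤ X₂ ω ∧ X₂ ω ≤ t - α} := rfl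
    rw [this, hIcc (s - α) (t - α) (by linarith)]
  have hSA0 : μ ({ω | s ≤ Z ω ∧ Z ω ≤ t} ∩ X₁ ⁻¹' {0})
      = ENNReal.ofReal (1 - p) * ENNReal.ofReal c0 := by
    have hset : {ω | s ≤ Z ω ∧ Z ω ≤ t} ∩ X₁ ⁻¹' {0}
        = X₁ ⁻¹' {0} ∩ X₂ ⁻¹' Icc s t := by
      ext ω
      simp only [mem_inter_iff, mem_setOf_eq, mem_preimage, mem_singleton_iff,
        mem_Icc, hZ]
      constructor
      · rintro ⟨⟨h1, h2⟩, h3⟩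
        rw [h3] at h1 h2
        exact ⟨h3, by linarith, by linarith⟩
      · rintro ⟨h3, h1, h2⟩
        exact ⟨⟨by rw [h3]; linarith, by rw [h3]; linarith⟩, h3⟩
    rw [hset, hindep.measure_inter_preimage_eq_mul _ _ (measurableSet_singleton _)
      measurableSet_Icc, hA0]
    congr 1
    have : X₂ ⁻¹' Icc s t = {ω | s ≤ X₂ ω ∧ X₂ ω ≤ t} := rfl
    rw [this, hIcc s t hst]
  -- value of H
  have hHval : H s t = p * c1 + (1 - p) * c0 := by
    have hsplit : μ {ω | s ≤ Z ω ∧ Z ω ≤ t}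
        = μ ({ω | s ≤ Z ω ∧ Z ω ≤ t} ∩ (X₁ ⁻¹' {1} ∪ X₁ ⁻¹' {0}))
          + μ ({ω | s ≤ Z ω ∧ Z ω ≤ t} \ (X₁ ⁻¹' {1} ∪ X₁ ⁻¹' {0})) :=
      (measure_inter_add_diff _ (hAmeas.union hA0meas)).symm
    have hzero : μ ({ω | s ≤ Z ω ∧ Z ω ≤ t} \ (X₁ ⁻¹' {1} ∪ X₁ ⁻¹' {0})) = 0 :=
      measure_mono_null (diff_subset_compl _ _) hN
    have hinter : {ω | s ≤ Z ω ∧ Z ω ≤ t} ∩ (X₁ ⁻¹' {1} ∪ X₁ ⁻¹' {0})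
        = ({ω | s ≤ Z ω ∧ Z ω ≤ t} ∩ X₁ ⁻¹' {1})
          ∪ ({ω | s ≤ Z ω ∧ Z ω ≤ t} ∩ X₁ ⁻¹' {0}) := inter_union_distrib_left _ _ _
    have hdisj2 : Disjoint ({ω | s ≤ Z ω ∧ Z ω ≤ t} ∩ X₁ ⁻¹' {1})
        ({ω | s ≤ Z ω ∧ Z ω ≤ t} ∩ X₁ ⁻¹' {0}) :=
      hAdisj.mono inter_subset_right inter_subset_right
    have hmain : μ {ω | s ≤ Z ω ∧ Z ω ≤ t}
        = ENNReal.ofReal (p * c1 + (1 - p) * c0) := by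
      rw [hsplit, hzero, add_zero, hinter,
        measure_union hdisj2 (hSmeas.inter hA0meas), hSA, hSA0,
        ← ENNReal.ofReal_mul hp0, ← ENNReal.ofReal_mul (by linarith : (0:ℝ) ≤ 1 - p),
        ← ENNReal.ofReal_add (mul_nonneg hp0 hc1) (mul_nonneg (by linarith) hc0)]
    rw [hH, hmain, ENNReal.toReal_ofReal
      (add_nonneg (mul_nonneg hp0 hc1) (mul_nonneg (by linarith) hc0))]
  -- the conditional expectation H1 equals g ∘ X₁ a.e.
  have hm : MeasurableSpace.comap X₁ inferInstance ≤ ‹MeasurableSpace Ω› :=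
    hX₁.comap_le
  set f : Ω → ℝ := fun ω => if s ≤ Z ω ∧ Z ω ≤ t then (1 : ℝ) else 0 with hfdef
  set gX : Ω → ℝ := fun ω => if X₁ ω = 1 then c1 else c0 with hgXdef
  have hf_ind : f = ({ω | s ≤ Z ω ∧ Z ω ≤ t}).indicator (fun _ => (1:ℝ)) := by
    funext ω
    simp only [hfdef, Set.indicator_apply, mem_setOf_eq]
  have hf_int : Integrable f μ := by
    rw [hf_ind]
    exact (integrable_const 1).indicator hSmeas
  have hgX_eq : gX = fun ω => (X₁ ⁻¹' {1}).indicator (fun _ => c1) ω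
      + (X₁ ⁻¹' {1})ᶜ.indicator (fun _ => c0) ω := by
    funext ω
    by_cases h : X₁ ω = 1
    · simp [hgXdef, h, Set.indicator_apply]
    · simp [hgXdef, h, Set.indicator_apply]
  have hgX_int : Integrable gX μ := by
    rw [hgX_eq]
    exact ((integrable_const c1).indicator hAmeas).add
      ((integrable_const c0).indicator hAmeas.compl)
  -- measure of T ∩ (X₁⁻¹{1})ᶜ equals that of T ∩ X₁⁻¹{0}
  have hcompl : ∀ T : Set Ω, μ (T ∩ (X₁ ⁻¹' {1})ᶜ) = μ (T ∩ X₁ ⁻¹' {0}) := by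
    intro T
    refine le_antisymm ?_ ?_
    · have hsub : T ∩ (X₁ ⁻¹' {1})ᶜ
          ⊆ (T ∩ X₁ ⁻¹' {0}) ∪ (X₁ ⁻¹' {1} ∪ X₁ ⁻¹' {0})ᶜ := by
        intro ω ⟨hT, h1⟩
        simp only [mem_compl_iff, mem_preimage, mem_singleton_iff] at h1
        by_cases h0 : X₁ ω = 0
        · exact Or.inl ⟨hT, h0⟩
        · right
          simp only [mem_compl_iff, mem_union, mem_preimage, mem_singleton_iff]
          tauto
      calc μ (T ∩ (X₁ ⁻¹' {1})ᶜ) ≤ μ ((T ∩ X₁ ⁻¹' {0}) ∪ (X₁ ⁻¹' {1} ∪ X₁ ⁻¹' {0})ᶜ) :=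
            measure_mono hsub
        _ ≤ μ (T ∩ X₁ ⁻¹' {0}) + μ (X₁ ⁻¹' {1} ∪ X₁ ⁻¹' {0})ᶜ := measure_union_le _ _
        _ = μ (T ∩ X₁ ⁻¹' {0}) := by rw [hN, add_zero]
    · refine measure_mono ?_
      intro ω ⟨hT, h0⟩
      simp only [mem_preimage, mem_singleton_iff] at h0
      refine ⟨hT, ?_⟩
      simp only [mem_compl_iff, mem_preimage, mem_singleton_iff]
      rw [h0]
      exact zero_ne_one
  have hae : gX =ᵐ[μ] μ[f | MeasurableSpace.comap X₁ inferInstance] := by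
    refine ae_eq_condExp_of_forall_setIntegral_eq hm hf_int
      (fun B hB _ => hgX_int.integrableOn) ?_ ?_
    · rintro B' ⟨B, hB, rfl⟩ _
      -- LHS : integral of gX over X₁⁻¹ B
      have hBpre : MeasurableSet (X₁ ⁻¹' B) := hX₁ hB
      have hLHS : ∫ ω in X₁ ⁻¹' B, gX ω ∂μ
          = c1 * (μ (X₁ ⁻¹' B ∩ X₁ ⁻¹' {1})).toReal
            + c0 * (μ (X₁ ⁻¹' B ∩ (X₁ ⁻¹' {1})ᶜ)).toReal := by
        rw [hgX_eq]
        rw [integral_add ((((integrable_const c1).indicator hAmeas)).integrableOn)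
          ((((integrable_const c0).indicator hAmeas.compl)).integrableOn)]
        rw [setIntegral_indicator hAmeas, setIntegral_indicator hAmeas.compl,
          setIntegral_const, setIntegral_const]
        simp [mul_comm, Measure.real]
      have hRHS : ∫ ω in X₁ ⁻¹' B, f ω ∂μ
          = (μ (X₁ ⁻¹' B ∩ {ω | s ≤ Z ω ∧ Z ω ≤ t})).toReal := by
        rw [hf_ind, setIntegral_indicator hSmeas, setIntegral_const]
        simp [Measure.real]
      rw [hLHS, hRHS]
      -- split the RHS measure over the atom {1} and its complement
      have hsplit : μ (X₁ ⁻¹' B ∩ {ω | s ≤ Z ω ∧ Z ω ≤ t})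
          = μ ((X₁ ⁻¹' B ∩ {ω | s ≤ Z ω ∧ Z ω ≤ t}) ∩ X₁ ⁻¹' {1})
            + μ ((X₁ ⁻¹' B ∩ {ω | s ≤ Z ω ∧ Z ω ≤ t}) ∩ (X₁ ⁻¹' {1})ᶜ) := by
        rw [← measure_inter_add_diff _ hAmeas, diff_eq]
      -- part over {X₁ = 1}
      have e1 : μ ((X₁ ⁻¹' B ∩ {ω | s ≤ Z ω ∧ Z ω ≤ t}) ∩ X₁ ⁻¹' {1})
          = ENNReal.ofReal c1 * μ (X₁ ⁻¹' B ∩ X₁ ⁻¹' {1}) := by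
        by_cases h1 : (1:ℝ) ∈ B
        · have hBA : X₁ ⁻¹' B ∩ X₁ ⁻¹' {1} = X₁ ⁻¹' {1} := by
            ext ω
            simp only [mem_inter_iff, mem_preimage, mem_singleton_iff]
            exact ⟨fun h => h.2, fun h => ⟨h ▸ h1, h⟩⟩
          have : (X₁ ⁻¹' B ∩ {ω | s ≤ Z ω ∧ Z ω ≤ t}) ∩ X₁ ⁻¹' {1}
              = {ω | s ≤ Z ω ∧ Z ω ≤ t} ∩ X₁ ⁻¹' {1} := by
            ext ω
            simp only [mem_inter_iff, mem_preimage, mem_singleton_iff, mem_setOf_eq]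
            constructor
            · rintro ⟨⟨_, h⟩, h'⟩; exact ⟨h, h'⟩
            · rintro ⟨h, h'⟩; exact ⟨⟨h' ▸ h1, h⟩, h'⟩
          rw [this, hSA, hBA, hA, mul_comm]
        · have hBA : X₁ ⁻¹' B ∩ X₁ ⁻¹' {1} = ∅ := by
            ext ω
            simp only [mem_inter_iff, mem_preimage, mem_singleton_iff, mem_empty_iff_false,
              iff_false, not_and]
            intro hB1 h1'
            exact h1 (h1' ▸ hB1)
          have : (X₁ ⁻¹' B ∩ {ω | s ≤ Z ω ∧ Z ω ≤ t}) ∩ X₁ ⁻¹' {1} = ∅ := by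
            apply eq_empty_of_subset_empty
            rw [← hBA]
            rintro ω ⟨⟨hB', _⟩, h1'⟩
            exact ⟨hB', h1'⟩
          rw [this, hBA]
          simp
      -- part over {X₁ ≠ 1}, reduced to {X₁ = 0}
      have e2 : μ ((X₁ ⁻¹' B ∩ {ω | s ≤ Z ω ∧ Z ω ≤ t}) ∩ (X₁ ⁻¹' {1})ᶜ)
          = ENNReal.ofReal c0 * μ (X₁ ⁻¹' B ∩ (X₁ ⁻¹' {1})ᶜ) := by
        rw [hcompl (X₁ ⁻¹' B ∩ {ω | s ≤ Z ω ∧ Z ω ≤ t}), hcompl (X₁ ⁻¹' B)]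
        by_cases h0 : (0:ℝ) ∈ B
        · have hBA : X₁ ⁻¹' B ∩ X₁ ⁻¹' {0} = X₁ ⁻¹' {0} := by
            ext ω
            simp only [mem_inter_iff, mem_preimage, mem_singleton_iff]
            exact ⟨fun h => h.2, fun h => ⟨h ▸ h0, h⟩⟩
          have : (X₁ ⁻¹' B ∩ {ω | s ≤ Z ω ∧ Z ω ≤ t}) ∩ X₁ ⁻¹' {0}
              = {ω | s ≤ Z ω ∧ Z ω ≤ t} ∩ X₁ ⁻¹' {0} := by
            ext ω
            simp only [mem_inter_iff, mem_preimage, mem_singleton_iff, mem_setOf_eq]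
            constructor
            · rintro ⟨⟨_, h⟩, h'⟩; exact ⟨h, h'⟩
            · rintro ⟨h, h'⟩; exact ⟨⟨h' ▸ h0, h⟩, h'⟩
          rw [this, hSA0, hBA, hA0, mul_comm]
        · have hBA : X₁ ⁻¹' B ∩ X₁ ⁻¹' {0} = ∅ := by
            ext ω
            simp only [mem_inter_iff, mem_preimage, mem_singleton_iff, mem_empty_iff_false,
              iff_false, not_and]
            intro hB0 h0'
            exact h0 (h0' ▸ hB0)
          have : (X₁ ⁻¹' B ∩ {ω | s ≤ Z ω ∧ Z ω ≤ t}) ∩ X₁ ⁻¹' {0} = ∅ := by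
            apply eq_empty_of_subset_empty
            rw [← hBA]
            rintro ω ⟨⟨hB', _⟩, h0'⟩
            exact ⟨hB', h0'⟩
          rw [this, hBA]
          simp
      rw [hsplit, e1, e2, ENNReal.toReal_add, ENNReal.toReal_mul, ENNReal.toReal_mul,
        ENNReal.toReal_ofReal hc1, ENNReal.toReal_ofReal hc0]
      · exact ENNReal.mul_ne_top ENNReal.ofReal_ne_top (measure_ne_top μ _)
      · exact ENNReal.mul_ne_top ENNReal.ofReal_ne_top (measure_ne_top μ _)
    · -- gX is m-strongly measurable
      have hXm : Measurable[MeasurableSpace.comap X₁ inferInstance] X₁ :=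
        Measurable.of_comap_le le_rfl
      have hgmeas : Measurable (fun x : ℝ => if x = 1 then c1 else c0) := by
        exact Measurable.ite (measurableSet_singleton 1) measurable_const measurable_const
      have : Measurable[MeasurableSpace.comap X₁ inferInstance] gX := hgmeas.comp hXm
      exact (this.stronglyMeasurable).aestronglyMeasurable
  have hH1ae : H1 s t =ᵐ[μ] gX := by
    rw [hH1 s t]
    exact hae.symm
  -- now compute the integral
  have hcongr : ∫ ω, (H s t - H1 s t ω) ^ 2 ∂μ = ∫ ω, (H s t - gX ω) ^ 2 ∂μ := by
    refine integral_congr_ae ?_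
    filter_upwards [hH1ae] with ω hω
    rw [hω]
  rw [hcongr]
  set φ : ℝ → ℝ := fun x => (H s t - if x = 1 then c1 else c0) ^ 2 with hφdef
  have hφmeas : Measurable φ := by
    apply Measurable.pow_const
    exact measurable_const.sub
      (Measurable.ite (measurableSet_singleton 1) measurable_const measurable_const)
  have hmap : ∫ ω, (H s t - gX ω) ^ 2 ∂μ = ∫ x, φ x ∂(μ.map X₁) := by
    rw [integral_map hX₁.aemeasurable hφmeas.aestronglyMeasurable]
  rw [hmap, hBer]
  have hint1 : Integrable φ (ENNReal.ofReal p • Measure.dirac (1:ℝ)) := by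
    refine ⟨hφmeas.aestronglyMeasurable, ?_⟩
    show (∫⁻ x, ‖φ x‖₊ ∂(ENNReal.ofReal p • Measure.dirac (1:ℝ))) < ⊤
    rw [lintegral_smul_measure, lintegral_dirac]
    exact ENNReal.mul_lt_top ENNReal.ofReal_lt_top ENNReal.coe_lt_top
  have hint0 : Integrable φ (ENNReal.ofReal (1 - p) • Measure.dirac (0:ℝ)) := by
    refine ⟨hφmeas.aestronglyMeasurable, ?_⟩
    show (∫⁻ x, ‖φ x‖₊ ∂(ENNReal.ofReal (1 - p) • Measure.dirac (0:ℝ))) < ⊤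
    rw [lintegral_smul_measure, lintegral_dirac]
    exact ENNReal.mul_lt_top ENNReal.ofReal_lt_top ENNReal.coe_lt_top
  rw [integral_add_measure hint1 hint0, integral_smul_measure, integral_smul_measure,
    integral_dirac, integral_dirac, ENNReal.toReal_ofReal hp0,
    ENNReal.toReal_ofReal (by linarith : (0:ℝ) ≤ 1 - p)]
  have hφ1 : φ 1 = (H s t - c1) ^ 2 := by simp [hφdef]
  have hφ0 : φ 0 = (H s t - c0) ^ 2 := by
    simp only [hφdef]
    norm_num
  rw [hφ1, hφ0, hHval]
  have : (F t - F s) - (F (t - α) - F (s - α)) = c0 - c1 := by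
    rw [hc0def, hc1def]
  rw [this]
  simp only [smul_eq_mul]
  ring
end
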